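/- arXiv:1509.05917 — 3 statements merged into one kernel-verified Lean document; each statement's English description precedes it below -/
import Mathlib

section
/- Let A_1, ..., A_m be non-negative matrices that define bounded operators on ℓ^p. Then the Hadamard product A_1 ∘ A_2 ∘ ... ∘ A_m defines a bounded operator on ℓ^p and ρ(A_1 ∘ A_2 ∘ ... ∘ A_m) ≤ ρ(A_1 A_2 ⋯ A_m). -/
open scoped ENNReal NNReal BigOperators InnerProductSpace

noncomputable section

/-- The sequence space `ℓ^p(ℕ)` (real scalars). -/
abbrev lpSeq (p : ℝ≥0∞) := lp (fun _ : ℕ => ℝ) p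

/-- The (infinite) non-negative matrix `a` defines the bounded operator `T` on `ℓ^p`:
for every `x ∈ ℓ^p` and every row index `i`, the series `∑_j a i j * x j` converges,
with sum equal to `(T x) i`. -/
def Represents (p : ℝ≥0∞) [Fact (1 ≤ p)] (a : ℕ → ℕ → ℝ)
    (T : lpSeq p →L[ℝ] lpSeq p) : Prop :=
  ∀ x : lpSeq p, ∀ i : ℕ, HasSum (fun j => a i j * x j) (T x i)

/-- Hadamard (entrywise) product of two matrices. -/
def hadamard (a b : ℕ → ℕ → ℝ) : ℕ → ℕ → ℝ := fun i j => a i j * b i j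

/-- Hadamard (entrywise) power `a^{(t)}`. -/
def hadPow (a : ℕ → ℕ → ℝ) (t : ℝ) : ℕ → ℕ → ℝ := fun i j => a i j ^ t

/-- Hadamard product of a finite family of matrices. -/
def hadProd {m : ℕ} (A : Fin m → ℕ → ℕ → ℝ) : ℕ → ℕ → ℝ := fun i j => ∏ k, A k i j

/-- Matrix product of two infinite matrices. -/
def matMul (a b : ℕ → ℕ → ℝ) : ℕ → ℕ → ℝ := fun i j => ∑' k, a i k * b k j

/-- The identity matrix. -/
def idMat : ℕ → ℕ → ℝ := fun i j => if i = j then 1 else 0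

/-- Product of a list of matrices. -/
def matListProd : List (ℕ → ℕ → ℝ) → ℕ → ℕ → ℝ
  | [] => idMat
  | a :: l => matMul a (matListProd l)

/-- Transposed matrix. -/
def transp (a : ℕ → ℕ → ℝ) : ℕ → ℕ → ℝ := fun i j => a j i

/-- The cyclic matrix product `A_i A_{i+1} ⋯ A_m A_1 ⋯ A_{i-1}` starting at index `i`. -/
def cycMatProd {m : ℕ} (A : Fin m → ℕ → ℕ → ℝ) (i : Fin m) : ℕ → ℕ → ℝ :=
  matListProd (List.ofFn fun k : Fin m => A (i + k))

/-- The cyclic operator product `T_i T_{i+1} ⋯ T_m T_1 ⋯ T_{i-1}` starting at index `i`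
(operator multiplication is composition). -/
def cycOpProd {m : ℕ} {p : ℝ≥0∞} [Fact (1 ≤ p)]
    (T : Fin m → lpSeq p →L[ℝ] lpSeq p) (i : Fin m) : lpSeq p →L[ℝ] lpSeq p :=
  (List.ofFn fun k : Fin m => T (i + k)).prod

/-- The numerical radius of a bounded operator on `ℓ²`:
`w(T) = sup { |⟨T f, f⟩| : ‖f‖ = 1 }`. -/
def numRadius (T : lpSeq 2 →L[ℝ] lpSeq 2) : ℝ :=
  sSup { r : ℝ | ∃ f : lpSeq 2, ‖f‖ = 1 ∧ r = |⟪T f, f⟫_ℝ| }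

namespace HadAux

variable {p : ℝ≥0∞} [hfp : Fact (1 ≤ p)]

lemma hp0 : p ≠ 0 := by
  have := hfp.out
  intro h; rw [h] at this; simp at this

lemma hpt (hp : p ≠ ∞) : 0 < p.toReal :=
  ENNReal.toReal_pos hp0 hp

lemma memOfDom (hp : p ≠ ∞) {f : ℕ → ℝ} (g : lpSeq p) (h : ∀ i, ‖f i‖ ≤ ‖g i‖) :
    Memℓp f p := by
  apply memℓp_gen
  refine Summable.of_nonneg_of_le (fun i => Real.rpow_nonneg (norm_nonneg _) _)
    (fun i => Real.rpow_le_rpow (norm_nonneg _) (h i) (hpt hp).le) ?_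
  exact ((lp.memℓp g).summable (hpt hp))

lemma normMonoCoord (hp : p ≠ ∞) {f g : lpSeq p} (h : ∀ i, ‖f i‖ ≤ ‖g i‖) : ‖f‖ ≤ ‖g‖ := by
  apply lp.norm_le_of_tsum_le (hpt hp) (norm_nonneg g)
  have hs : Summable fun i => ‖g i‖ ^ p.toReal := (lp.memℓp g).summable (hpt hp)
  have hs' : Summable fun i => ‖f i‖ ^ p.toReal :=
    Summable.of_nonneg_of_le (fun i => Real.rpow_nonneg (norm_nonneg _) _)
      (fun i => Real.rpow_le_rpow (norm_nonneg _) (h i) (hpt hp).le) hs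
  rw [lp.norm_rpow_eq_tsum (hpt hp) g]
  exact Summable.tsum_le_tsum
    (fun i => Real.rpow_le_rpow (norm_nonneg _) (h i) (hpt hp).le) hs' hs

/-- entrywise absolute value -/
def absLp (hp : p ≠ ∞) (x : lpSeq p) : lpSeq p :=
  ⟨fun i => |x i|, memOfDom hp x (fun i => by simp)⟩

@[simp] lemma absLp_apply (hp : p ≠ ∞) (x : lpSeq p) (i : ℕ) : absLp hp x i = |x i| := rfl

lemma norm_absLp (hp : p ≠ ∞) (x : lpSeq p) : ‖absLp hp x‖ = ‖x‖ := by
  apply le_antisymm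
  · exact normMonoCoord hp (fun i => by simp)
  · exact normMonoCoord hp (fun i => by simp)

def posLp (hp : p ≠ ∞) (x : lpSeq p) : lpSeq p :=
  ⟨fun i => max (x i) 0, memOfDom hp x (fun i => by
    simp only [Real.norm_eq_abs]
    rw [abs_of_nonneg (le_max_right _ _)]
    rcases le_total (x i) 0 with h | h
    · simp only [max_eq_right h, abs_nonneg]
    · rw [max_eq_left h]; exact le_abs_self _)⟩

def negLp (hp : p ≠ ∞) (x : lpSeq p) : lpSeq p := posLp hp (-x)

@[simp] lemma posLp_apply (hp : p ≠ ∞) (x : lpSeq p) (i : ℕ) :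
    posLp hp x i = max (x i) 0 := rfl

@[simp] lemma negLp_apply (hp : p ≠ ∞) (x : lpSeq p) (i : ℕ) :
    negLp hp x i = max (-(x i)) 0 := by
  simp only [negLp, posLp]
  change max ((-x : lpSeq p) i) 0 = _
  rw [lp.coeFn_neg]
  rfl

lemma posLp_nonneg (hp : p ≠ ∞) (x : lpSeq p) (i : ℕ) : 0 ≤ posLp hp x i :=
  le_max_right _ _

lemma negLp_nonneg (hp : p ≠ ∞) (x : lpSeq p) (i : ℕ) : 0 ≤ negLp hp x i := by
  rw [negLp_apply]; exact le_max_right _ _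

lemma posLp_sub_negLp (hp : p ≠ ∞) (x : lpSeq p) :
    posLp hp x - negLp hp x = x := by
  apply lp.ext
  funext i
  have : (posLp hp x - negLp hp x) i = posLp hp x i - negLp hp x i := by
    rw [lp.coeFn_sub]; rfl
  rw [this, posLp_apply, negLp_apply]
  rcases le_total (x i) 0 with h | h
  · rw [max_eq_right h, max_eq_left (by linarith)]; ring
  · rw [max_eq_left h, max_eq_right (by linarith)]; ring

/-- Positivity of an operator -/
def Pos (S : lpSeq p →L[ℝ] lpSeq p) : Prop :=
  ∀ x : lpSeq p, (∀ i, 0 ≤ x i) → ∀ i, 0 ≤ S x i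

lemma add_coord (y z : lpSeq p) (i : ℕ) : (y + z) i = y i + z i := by
  rw [lp.coeFn_add]; rfl

lemma sub_coord (y z : lpSeq p) (i : ℕ) : (y - z) i = y i - z i := by
  rw [lp.coeFn_sub]; rfl

lemma smul_coord (c : ℝ) (y : lpSeq p) (i : ℕ) : (c • y) i = c * y i := by
  rw [lp.coeFn_smul]; rfl

/-- coordinate evaluation as a continuous linear map -/
def evalCLM (i : ℕ) : lpSeq p →L[ℝ] ℝ :=
  LinearMap.mkContinuous
    { toFun := fun x => x i
      map_add' := fun x y => add_coord x y i
      map_smul' := fun c x => smul_coord c x i } 1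
    (fun x => by simpa using lp.norm_apply_le_norm hp0 x i)

@[simp] lemma evalCLM_apply (i : ℕ) (x : lpSeq p) : evalCLM (p := p) i x = x i := rfl

lemma hasSum_coord {f : ℕ → lpSeq p} {y : lpSeq p} (h : HasSum f y) (i : ℕ) :
    HasSum (fun n => f n i) (y i) := by
  simpa using h.mapL (evalCLM (p := p) i)

lemma Pos.add {S S' : lpSeq p →L[ℝ] lpSeq p} (h : Pos S) (h' : Pos S') : Pos (S + S') := by
  intro x hx i
  rw [ContinuousLinearMap.add_apply, add_coord]
  exact add_nonneg (h x hx i) (h' x hx i)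

lemma Pos.mul {S S' : lpSeq p →L[ℝ] lpSeq p} (h : Pos S) (h' : Pos S') : Pos (S * S') :=
  fun x hx i => h (S' x) (fun j => h' x hx j) i

lemma Pos.one : Pos (1 : lpSeq p →L[ℝ] lpSeq p) := fun _ hx i => hx i

lemma Pos.pow {S : lpSeq p →L[ℝ] lpSeq p} (h : Pos S) (n : ℕ) : Pos (S ^ n) := by
  induction n with
  | zero => simpa [pow_zero] using Pos.one
  | succ n ih => rw [pow_succ]; exact ih.mul h

lemma Pos.smul {S : lpSeq p →L[ℝ] lpSeq p} (h : Pos S) {c : ℝ} (hc : 0 ≤ c) :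
    Pos (c • S) := by
  intro x hx i
  rw [ContinuousLinearMap.smul_apply, smul_coord]
  exact mul_nonneg hc (h x hx i)

lemma Pos.sum {ι : Type*} (s : Finset ι) (f : ι → lpSeq p →L[ℝ] lpSeq p)
    (h : ∀ k ∈ s, Pos (f k)) : Pos (∑ k ∈ s, f k) := by
  classical
  induction s using Finset.induction_on with
  | empty => intro x hx i; simp [Pos]
  | insert a s hni ih =>
    rw [Finset.sum_insert hni]
    exact (h a (Finset.mem_insert_self a s)).add
      (ih (fun k hk => h k (Finset.mem_insert_of_mem hk)))

lemma Pos.tsum {f : ℕ → lpSeq p →L[ℝ] lpSeq p} (hs : Summable f)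
    (h : ∀ n, Pos (f n)) : Pos (∑' n, f n) := by
  intro x hx i
  have h1 : HasSum (fun n => (f n) x) ((∑' n, f n) x) := by
    simpa using hs.hasSum.mapL (ContinuousLinearMap.apply ℝ (lpSeq p) x)
  exact hasSum_le (fun n => h n x hx i) hasSum_zero (hasSum_coord h1 i)

lemma coeFn_sub_apply (S S' : lpSeq p →L[ℝ] lpSeq p) (x : lpSeq p) (i : ℕ) :
    (S - S') x i = S x i - S' x i := by
  rw [ContinuousLinearMap.sub_apply, sub_coord]

/-- core: positivity order gives norm monotonicity -/
lemma posNormMono (hp : p ≠ ∞) {S S' : lpSeq p →L[ℝ] lpSeq p}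
    (hS : Pos S) (hd : Pos (S' - S)) : ‖S‖ ≤ ‖S'‖ := by
  refine ContinuousLinearMap.opNorm_le_bound _ (norm_nonneg S') (fun x => ?_)
  set a := absLp hp x with ha
  have hax : ∀ j, 0 ≤ (a - x) j := fun j => by
    rw [sub_coord]; simp only [ha, absLp_apply]; linarith [le_abs_self (x j)]
  have hax' : ∀ j, 0 ≤ (a + x) j := fun j => by
    rw [add_coord]; simp only [ha, absLp_apply]; linarith [neg_abs_le (x j)]
  have ha0 : ∀ j, 0 ≤ a j := fun j => by simp only [ha, absLp_apply]; exact abs_nonneg _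
  have key : ∀ i, |S x i| ≤ S a i := by
    intro i
    have h1 : 0 ≤ S a i - S x i := by
      have := hS (a - x) hax i
      rwa [map_sub, sub_coord] at this
    have h2 : 0 ≤ S a i + S x i := by
      have := hS (a + x) hax' i
      rwa [map_add, add_coord] at this
    rw [abs_le]; constructor <;> linarith
  have key2 : ∀ i, S a i ≤ S' a i := by
    intro i
    have := hd a ha0 i
    rw [coeFn_sub_apply] at this
    linarith
  calc ‖S x‖ ≤ ‖S' a‖ := by
        refine normMonoCoord hp (fun i => ?_)
        have h3 : (0:ℝ) ≤ S' a i := le_trans (abs_nonneg _ |>.trans (key i)) (key2 i)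
        simp only [Real.norm_eq_abs]
        rw [abs_of_nonneg h3]
        exact (key i).trans (key2 i)
    _ ≤ ‖S'‖ * ‖a‖ := S'.le_opNorm a
    _ = ‖S'‖ * ‖x‖ := by rw [ha, norm_absLp]



/- ### real block 3 -/

/-- the standard basis vector `e_j`. -/
def single1 (p : ℝ≥0∞) [Fact (1 ≤ p)] (j : ℕ) : lpSeq p := lp.single p j (1 : ℝ)

lemma single1_coord (j j' : ℕ) : single1 p j j' = if j' = j then 1 else 0 := by
  rcases eq_or_ne j' j with h | h
  · subst h; rw [if_pos rfl]; exact lp.single_apply_self p j' 1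
  · rw [if_neg h]; exact lp.single_apply_ne p j 1 h

lemma single1_nonneg (j j' : ℕ) : 0 ≤ single1 p j j' := by
  rw [single1_coord]; split <;> norm_num

lemma norm_single1 (hp : p ≠ ∞) (j : ℕ) : ‖single1 p j‖ = 1 := by
  have := lp.norm_single (E := fun _ : ℕ => ℝ) (zero_lt_one.trans_le hfp.out) j (1 : ℝ)
  simpa [single1] using this

/-- matrix entry of an operator -/
def ent (S : lpSeq p →L[ℝ] lpSeq p) (i j : ℕ) : ℝ := S (single1 p j) i

lemma repEntries {a : ℕ → ℕ → ℝ} {S : lpSeq p →L[ℝ] lpSeq p}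
    (h : Represents p a S) (i j : ℕ) : ent S i j = a i j := by
  have h1 := h (single1 p j) i
  have h2 : HasSum (fun j' => a i j' * single1 p j j') (a i j) := by
    have := hasSum_single (f := fun j' => a i j' * single1 p j j') j (fun j' hj' => by
      simp only [single1_coord, if_neg hj', mul_zero])
    simpa [single1_coord] using this
  exact (h1.unique h2)

lemma repPos {a : ℕ → ℕ → ℝ} {S : lpSeq p →L[ℝ] lpSeq p}
    (ha : ∀ i j, 0 ≤ a i j) (h : Represents p a S) : Pos S := by
  intro x hx i
  exact hasSum_le (fun j => mul_nonneg (ha i j) (hx j)) hasSum_zero (h x i)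

lemma ent_nonneg {S : lpSeq p →L[ℝ] lpSeq p} (h : Pos S) (i j : ℕ) : 0 ≤ ent S i j :=
  h (single1 p j) (single1_nonneg j) i

lemma ent_le_norm (hp : p ≠ ∞) (S : lpSeq p →L[ℝ] lpSeq p) (i j : ℕ) :
    ent S i j ≤ ‖S‖ := by
  calc ent S i j ≤ |S (single1 p j) i| := le_abs_self _
    _ ≤ ‖S (single1 p j)‖ := by
        simpa using lp.norm_apply_le_norm hp0 (S (single1 p j)) i
    _ ≤ ‖S‖ * ‖single1 p j‖ := S.le_opNorm _
    _ = ‖S‖ := by rw [norm_single1 hp, mul_one]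

/-- entries of a composition: no Fubini needed -/
lemma entryComp {a : ℕ → ℕ → ℝ} {S1 : lpSeq p →L[ℝ] lpSeq p}
    (h1 : Represents p a S1) (S2 : lpSeq p →L[ℝ] lpSeq p) (i j : ℕ) :
    HasSum (fun k => a i k * ent S2 k j) (ent (S1 * S2) i j) := by
  have := h1 (S2 (single1 p j)) i
  simpa [ent, ContinuousLinearMap.mul_apply] using this

/-- composition of represented operators -/
lemma repComp (hp : p ≠ ∞) {a b : ℕ → ℕ → ℝ} {S1 S2 : lpSeq p →L[ℝ] lpSeq p}
    (ha : ∀ i j, 0 ≤ a i j) (hb : ∀ i j, 0 ≤ b i j)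
    (h1 : Represents p a S1) (h2 : Represents p b S2) :
    Represents p (fun i j => ∑' k, a i k * b k j) (S1 * S2) := by
  have hcnn : ∀ i j, (0:ℝ) ≤ ∑' k, a i k * b k j :=
    fun i j => tsum_nonneg (fun k => mul_nonneg (ha i k) (hb k j))
  have hentc : ∀ i j, HasSum (fun k => a i k * b k j) ((S1 (S2 (single1 p j))) i) := by
    intro i j
    have := entryComp h1 S2 i j
    have hbe : (fun k => a i k * ent S2 k j) = fun k => a i k * b k j := by
      funext k; rw [repEntries h2 k j]
    rw [hbe] at this
    simpa [ent, ContinuousLinearMap.mul_apply] using this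
  have main : ∀ x : lpSeq p, (∀ i, 0 ≤ x i) → ∀ i,
      HasSum (fun j => (∑' k, a i k * b k j) * x j) ((S1 (S2 x)) i) := by
    intro x hx i
    set y := S2 x with hy
    have hynn : ∀ k, 0 ≤ y k := repPos hb h2 x hx
    have hS1y : (0:ℝ) ≤ (S1 y) i := (repPos ha h1) y hynn i
    set F : ℕ → ℕ → ℝ≥0∞ := fun k j => ENNReal.ofReal (a i k) * ENNReal.ofReal (b k j * x j)
      with hF
    have hA : ∀ k, (∑' j, F k j) = ENNReal.ofReal (a i k * y k) := by
      intro k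
      rw [ENNReal.tsum_mul_left, ← ENNReal.ofReal_tsum_of_nonneg
        (fun j => mul_nonneg (hb k j) (hx j)) (h2 x k).summable, (h2 x k).tsum_eq,
        ← ENNReal.ofReal_mul (ha i k)]
    have hB : ∀ j, (∑' k, F k j) = ENNReal.ofReal ((∑' k, a i k * b k j) * x j) := by
      intro j
      have : ∀ k, F k j = ENNReal.ofReal (a i k * b k j) * ENNReal.ofReal (x j) := by
        intro k
        show ENNReal.ofReal (a i k) * ENNReal.ofReal (b k j * x j) = _
        rw [ENNReal.ofReal_mul (hb k j), ← mul_assoc, ← ENNReal.ofReal_mul (ha i k)]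
      calc (∑' k, F k j) = ∑' k, ENNReal.ofReal (a i k * b k j) * ENNReal.ofReal (x j) := by
            exact tsum_congr this
        _ = (∑' k, ENNReal.ofReal (a i k * b k j)) * ENNReal.ofReal (x j) :=
            ENNReal.tsum_mul_right
        _ = ENNReal.ofReal (∑' k, a i k * b k j) * ENNReal.ofReal (x j) := by
            rw [← ENNReal.ofReal_tsum_of_nonneg (fun k => mul_nonneg (ha i k) (hb k j))
              (hentc i j).summable]
        _ = ENNReal.ofReal ((∑' k, a i k * b k j) * x j) := by
            rw [← ENNReal.ofReal_mul (hcnn i j)]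
    have KEY : (∑' j, ENNReal.ofReal ((∑' k, a i k * b k j) * x j))
        = ENNReal.ofReal ((S1 y) i) := by
      calc (∑' j, ENNReal.ofReal ((∑' k, a i k * b k j) * x j)) = ∑' j, ∑' k, F k j :=
            tsum_congr (fun j => (hB j).symm)
        _ = ∑' k, ∑' j, F k j := ENNReal.tsum_comm
        _ = ∑' k, ENNReal.ofReal (a i k * y k) := tsum_congr hA
        _ = ENNReal.ofReal ((S1 y) i) := by
            rw [← ENNReal.ofReal_tsum_of_nonneg (fun k => mul_nonneg (ha i k) (hynn k))
              (h1 y i).summable, (h1 y i).tsum_eq]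
    have hsumm : Summable (fun j => (∑' k, a i k * b k j) * x j) := by
      have hne : (∑' j, ENNReal.ofReal ((∑' k, a i k * b k j) * x j)) ≠ ⊤ := by
        rw [KEY]; exact ENNReal.ofReal_ne_top
      have := ENNReal.summable_toReal hne
      refine this.congr (fun j => ?_)
      rw [ENNReal.toReal_ofReal (mul_nonneg (hcnn i j) (hx j))]
    refine hsumm.hasSum_iff.mpr ?_
    have := KEY
    rw [← ENNReal.ofReal_tsum_of_nonneg (fun j => mul_nonneg (hcnn i j) (hx j)) hsumm] at this
    exact (ENNReal.ofReal_eq_ofReal_iff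
      (tsum_nonneg (fun j => mul_nonneg (hcnn i j) (hx j))) hS1y).mp this
  intro x i
  have hxp := main (posLp hp x) (fun j => posLp_nonneg hp x j) i
  have hxn := main (negLp hp x) (fun j => negLp_nonneg hp x j) i
  have hsub := hxp.sub hxn
  have hfun : (fun j => (∑' k, a i k * b k j) * posLp hp x j
      - (∑' k, a i k * b k j) * negLp hp x j) = fun j => (∑' k, a i k * b k j) * x j := by
    funext j
    have : posLp hp x j - negLp hp x j = x j := by
      rw [← sub_coord, posLp_sub_negLp]
    rw [← mul_sub, this]
  have hval : (S1 (S2 (posLp hp x))) i - (S1 (S2 (negLp hp x))) i = ((S1 * S2) x) i := by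
    rw [ContinuousLinearMap.mul_apply, ← sub_coord, ← map_sub, ← map_sub, posLp_sub_negLp]
  rw [hfun, hval] at hsub
  exact hsub

/- ### block 4 : NNRep, norm monotonicity from entries, Hadamard tsum inequality, buildOp -/

lemma repOne : Represents p (fun i j => if i = j then (1:ℝ) else 0) 1 := by
  intro x i
  have h := hasSum_single (f := fun j => (if i = j then (1:ℝ) else 0) * x j) i
    (fun j hj => by
      show (if i = j then (1:ℝ) else 0) * x j = 0
      rw [if_neg (fun h => hj h.symm), zero_mul])
  simpa using h

lemma repSmul {a : ℕ → ℕ → ℝ} {S : lpSeq p →L[ℝ] lpSeq p} (c : ℝ)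
    (h : Represents p a S) : Represents p (fun i j => c * a i j) (c • S) := by
  intro x i
  have := (h x i).mul_left c
  have hval : (c • S) x i = c * (S x i) := by
    rw [ContinuousLinearMap.smul_apply, smul_coord]
  rw [hval]
  simpa [mul_assoc] using this

/-- operators representable by a non-negative matrix -/
def NNRep (S : lpSeq p →L[ℝ] lpSeq p) : Prop :=
  ∃ a : ℕ → ℕ → ℝ, (∀ i j, 0 ≤ a i j) ∧ Represents p a S

lemma NNRep.one : NNRep (1 : lpSeq p →L[ℝ] lpSeq p) :=
  ⟨_, fun i j => by split <;> norm_num, repOne⟩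

lemma NNRep.mul (hp : p ≠ ∞) {S S' : lpSeq p →L[ℝ] lpSeq p} (h : NNRep S) (h' : NNRep S') :
    NNRep (S * S') := by
  obtain ⟨a, ha, hra⟩ := h
  obtain ⟨b, hb, hrb⟩ := h'
  exact ⟨_, fun i j => tsum_nonneg (fun k => mul_nonneg (ha i k) (hb k j)),
    repComp hp ha hb hra hrb⟩

lemma NNRep.pow (hp : p ≠ ∞) {S : lpSeq p →L[ℝ] lpSeq p} (h : NNRep S) (n : ℕ) :
    NNRep (S ^ n) := by
  induction n with
  | zero => rw [pow_zero]; exact NNRep.one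
  | succ n ih => rw [pow_succ]; exact ih.mul hp h

lemma NNRep.smul {S : lpSeq p →L[ℝ] lpSeq p} (h : NNRep S) {c : ℝ} (hc : 0 ≤ c) :
    NNRep (c • S) := by
  obtain ⟨a, ha, hra⟩ := h
  exact ⟨_, fun i j => mul_nonneg hc (ha i j), repSmul c hra⟩

lemma NNRep.pos {S : lpSeq p →L[ℝ] lpSeq p} (h : NNRep S) : Pos S := by
  obtain ⟨a, ha, hra⟩ := h
  exact repPos ha hra

lemma entSmul (c : ℝ) (S : lpSeq p →L[ℝ] lpSeq p) (i j : ℕ) :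
    ent (c • S) i j = c * ent S i j := by
  simp only [ent, ContinuousLinearMap.smul_apply, smul_coord]

/-- entrywise domination implies norm domination for `NNRep` operators. -/
lemma entNormMono (hp : p ≠ ∞) {S S' : lpSeq p →L[ℝ] lpSeq p}
    (h : NNRep S) (h' : NNRep S') (hle : ∀ i j, ent S i j ≤ ent S' i j) : ‖S‖ ≤ ‖S'‖ := by
  refine posNormMono hp h.pos ?_
  obtain ⟨a, ha, hra⟩ := h
  obtain ⟨b, hb, hrb⟩ := h'
  intro x hx i
  rw [coeFn_sub_apply]
  have h1 := hra x i
  have h2 := hrb x i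
  have hle' : ∀ j, a i j * x j ≤ b i j * x j := by
    intro j
    have haa : a i j ≤ b i j := by
      rw [← repEntries hra i j, ← repEntries hrb i j]; exact hle i j
    exact mul_le_mul_of_nonneg_right haa (hx j)
  have := hasSum_le hle' h1 h2
  linarith

/-- `m`-ary Hadamard--Cauchy inequality for non-negative series -/
lemma prodTsumLe {m : ℕ} (hm : 0 < m) (f : Fin m → ℕ → ℝ) (h0 : ∀ t k, 0 ≤ f t k)
    (hs : ∀ t, Summable (f t)) :
    Summable (fun k => ∏ t, f t k) ∧ (∑' k, ∏ t, f t k) ≤ ∏ t, ∑' k, f t k := by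
  haveI : NeZero m := ⟨hm.ne'⟩
  set t₀ : Fin m := ⟨0, hm⟩
  set c : ℝ := ∏ t ∈ Finset.univ.erase t₀, (∑' k, f t k) with hc
  have hcnn : 0 ≤ c := Finset.prod_nonneg (fun t _ => tsum_nonneg (fun k => h0 t k))
  have hpoint : ∀ k, ∏ t, f t k ≤ c * f t₀ k := by
    intro k
    rw [← Finset.mul_prod_erase Finset.univ (fun t => f t k) (Finset.mem_univ t₀)]
    rw [mul_comm c (f t₀ k)]
    refine mul_le_mul_of_nonneg_left ?_ (h0 t₀ k)
    exact Finset.prod_le_prod (fun t _ => h0 t k)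
      (fun t _ => Summable.le_tsum (hs t) k (fun k' _ => h0 t k'))
  have hprodnn : ∀ k, 0 ≤ ∏ t, f t k := fun k => Finset.prod_nonneg (fun t _ => h0 t k)
  have hsum : Summable (fun k => ∏ t, f t k) :=
    Summable.of_nonneg_of_le hprodnn hpoint ((hs t₀).mul_left c)
  refine ⟨hsum, ?_⟩
  calc (∑' k, ∏ t, f t k) ≤ ∑' k, c * f t₀ k := Summable.tsum_le_tsum hpoint hsum ((hs t₀).mul_left c)
    _ = c * ∑' k, f t₀ k := tsum_mul_left
    _ = ∏ t, ∑' k, f t k := by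
        rw [mul_comm]
        exact Finset.mul_prod_erase Finset.univ (fun t => ∑' k, f t k) (Finset.mem_univ t₀)

/-- construction of an operator from a matrix dominated by (a scalar multiple of)
a represented matrix. -/
lemma buildOp (hp : p ≠ ∞) (c : ℕ → ℕ → ℝ) (hc : ∀ i j, 0 ≤ c i j)
    {a : ℕ → ℕ → ℝ} {S : lpSeq p →L[ℝ] lpSeq p} (ha : ∀ i j, 0 ≤ a i j)
    (hS : Represents p a S) {C : ℝ} (hC : 0 ≤ C)
    (hdom : ∀ i j, c i j ≤ C * a i j) :
    ∃ Hop : lpSeq p →L[ℝ] lpSeq p, Represents p c Hop := by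
  have hSpos : Pos S := repPos ha hS
  have hsum : ∀ (x : lpSeq p) (i : ℕ), Summable (fun j => c i j * x j) := by
    intro x i
    refine Summable.of_norm_bounded (g := fun j => C * (a i j * (absLp hp x) j)) ?_ ?_
    · exact ((hS (absLp hp x) i).summable).mul_left C
    · intro j
      show ‖c i j * x j‖ ≤ C * (a i j * (absLp hp x) j)
      rw [absLp_apply, Real.norm_eq_abs, abs_mul, abs_of_nonneg (hc i j)]
      calc c i j * |x j| ≤ (C * a i j) * |x j| :=
            mul_le_mul_of_nonneg_right (hdom i j) (abs_nonneg _)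
        _ = C * (a i j * |x j|) := by ring
  have habsnn : ∀ (x : lpSeq p) (j : ℕ), 0 ≤ (absLp hp x) j := by
    intro x j; rw [absLp_apply]; exact abs_nonneg _
  have hcoordbound : ∀ (x : lpSeq p) (i : ℕ),
      ‖∑' j, c i j * x j‖ ≤ ‖(C • (S (absLp hp x))) i‖ := by
    intro x i
    have h1 : |∑' j, c i j * x j| ≤ ∑' j, |c i j * x j| := by
      have habs := norm_tsum_le_tsum_norm ((hsum x i).abs.congr
        (fun j => (Real.norm_eq_abs _).symm))
      simpa only [Real.norm_eq_abs] using habs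
    have h2 : (∑' j, |c i j * x j|) ≤ ∑' j, C * (a i j * (absLp hp x) j) := by
      refine Summable.tsum_le_tsum ?_ (hsum x i).abs (((hS (absLp hp x) i).summable).mul_left C)
      intro j
      rw [absLp_apply, abs_mul, abs_of_nonneg (hc i j)]
      calc c i j * |x j| ≤ (C * a i j) * |x j| :=
            mul_le_mul_of_nonneg_right (hdom i j) (abs_nonneg _)
        _ = C * (a i j * |x j|) := by ring
    have h3 : (∑' j, C * (a i j * (absLp hp x) j)) = C * (S (absLp hp x)) i := by
      rw [tsum_mul_left, (hS (absLp hp x) i).tsum_eq]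
    have h4 : (C • (S (absLp hp x))) i = C * (S (absLp hp x)) i := smul_coord _ _ _
    have h5 : 0 ≤ C * (S (absLp hp x)) i :=
      mul_nonneg hC (hSpos _ (habsnn x) i)
    rw [Real.norm_eq_abs, Real.norm_eq_abs, h4, abs_of_nonneg h5]
    calc |∑' j, c i j * x j| ≤ ∑' j, |c i j * x j| := h1
      _ ≤ ∑' j, C * (a i j * (absLp hp x) j) := h2
      _ = C * (S (absLp hp x)) i := h3
  have hmem : ∀ x : lpSeq p, Memℓp (fun i => ∑' j, c i j * x j) p :=
    fun x => memOfDom hp (C • (S (absLp hp x))) (fun i => hcoordbound x i)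
  set L : lpSeq p →ₗ[ℝ] lpSeq p :=
    { toFun := fun x => ⟨fun i => ∑' j, c i j * x j, hmem x⟩
      map_add' := by
        intro x y
        apply lp.ext
        funext i
        rw [add_coord]
        show (∑' j, c i j * (x + y) j)
          = (∑' j, c i j * x j) + (∑' j, c i j * y j)
        rw [← Summable.tsum_add (hsum x i) (hsum y i)]
        exact tsum_congr (fun j => by rw [add_coord, mul_add])
      map_smul' := by
        intro r x
        apply lp.ext
        funext i
        rw [smul_coord]
        show (∑' j, c i j * (r • x) j) = r * (∑' j, c i j * x j)
        rw [← tsum_mul_left]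
        exact tsum_congr (fun j => by rw [smul_coord]; ring) } with hL
  have hbound : ∀ x : lpSeq p, ‖L x‖ ≤ (C * ‖S‖) * ‖x‖ := by
    intro x
    have h6 : ‖L x‖ ≤ ‖C • (S (absLp hp x))‖ :=
      normMonoCoord hp (fun i => hcoordbound x i)
    calc ‖L x‖ ≤ ‖C • (S (absLp hp x))‖ := h6
      _ = |C| * ‖S (absLp hp x)‖ := by rw [norm_smul, Real.norm_eq_abs]
      _ ≤ C * (‖S‖ * ‖absLp hp x‖) := by
          rw [abs_of_nonneg hC]
          exact mul_le_mul_of_nonneg_left (S.le_opNorm _) hC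
      _ = (C * ‖S‖) * ‖x‖ := by rw [norm_absLp, mul_assoc]
  refine ⟨L.mkContinuous (C * ‖S‖) hbound, fun x i => ?_⟩
  have : (L.mkContinuous (C * ‖S‖) hbound) x = L x := rfl
  rw [this]
  exact (hsum x i).hasSum_iff.mpr rfl

/- ### block 5 : cyclic products and master entry inequality -/

variable {m : ℕ}

open Fin.NatCast Fin.CommRing

/-- the operator product `T_t T_{t+1} ⋯ T_{t+N-1}` (indices cyclic mod `m`). -/
def wOp [NeZero m] (T : Fin m → lpSeq p →L[ℝ] lpSeq p) (t : Fin m) (N : ℕ) :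
    lpSeq p →L[ℝ] lpSeq p :=
  (List.ofFn fun k : Fin N => T (t + ((k : ℕ) : Fin m))).prod

lemma wOp_zero [NeZero m] (T : Fin m → lpSeq p →L[ℝ] lpSeq p) (t : Fin m) : wOp T t 0 = 1 := by
  simp [wOp]

lemma wOp_succ [NeZero m] (T : Fin m → lpSeq p →L[ℝ] lpSeq p) (t : Fin m) (N : ℕ) :
    wOp T t (N + 1) = T t * wOp T (t + 1) N := by
  have hlist : (List.ofFn fun k : Fin (N + 1) => T (t + ((k : ℕ) : Fin m)))
      = T t :: List.ofFn (fun k : Fin N => T ((t + 1) + ((k : ℕ) : Fin m))) := by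
    rw [List.ofFn_succ]
    congr 1
    · have h0 : (((0 : Fin (N + 1)) : ℕ) : Fin m) = 0 := by
        rw [Fin.val_zero, Nat.cast_zero]
      rw [h0, add_zero]
    · refine congrArg List.ofFn (funext fun k => ?_)
      refine congrArg T ?_
      have h1 : ((Fin.succ k : Fin (N + 1)) : ℕ) = (k : ℕ) + 1 := rfl
      rw [h1]
      push_cast
      ring
  rw [wOp, hlist, List.prod_cons, wOp]

lemma wOp_add [NeZero m] (T : Fin m → lpSeq p →L[ℝ] lpSeq p) (t : Fin m) (N M : ℕ) :
    wOp T t (N + M) = wOp T t N * wOp T (t + ((N : ℕ) : Fin m)) M := by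
  induction N generalizing t with
  | zero => simp [wOp_zero]
  | succ N ih =>
    have h1 : N + 1 + M = (N + M) + 1 := by ring
    rw [h1, wOp_succ, ih (t + 1), wOp_succ, mul_assoc]
    congr 3
    push_cast
    ring

lemma wOp_pow [NeZero m] (T : Fin m → lpSeq p →L[ℝ] lpSeq p) (t : Fin m) (n : ℕ) :
    wOp T t (m * n) = (wOp T t m) ^ n := by
  induction n with
  | zero => rw [mul_zero, wOp_zero, pow_zero]
  | succ n ih =>
    have h1 : m * (n + 1) = m * n + m := by ring
    have hcast : ((m * n : ℕ) : Fin m) = 0 := by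
      rw [Fin.natCast_eq_zero]; exact dvd_mul_right _ _
    rw [h1, wOp_add, ih, hcast, add_zero, pow_succ]

lemma wOp_nnrep (hp : p ≠ ∞) [NeZero m] {T : Fin m → lpSeq p →L[ℝ] lpSeq p}
    (hTN : ∀ k, NNRep (T k)) (t : Fin m) (N : ℕ) : NNRep (wOp T t N) := by
  induction N generalizing t with
  | zero => rw [wOp_zero]; exact NNRep.one
  | succ N ih => rw [wOp_succ]; exact (hTN t).mul hp (ih (t + 1))

lemma masterEnt [NeZero m] (hp : p ≠ ∞) (hm : 0 < m) {A : Fin m → ℕ → ℕ → ℝ}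
    {T : Fin m → lpSeq p →L[ℝ] lpSeq p}
    (hA : ∀ k i j, 0 ≤ A k i j) (hT : ∀ k, Represents p (A k) (T k))
    {H : lpSeq p →L[ℝ] lpSeq p} (hH : Represents p (hadProd A) H) :
    ∀ N i j, ent (H ^ N) i j ≤ ∏ t, ent (wOp T t N) i j := by
  have hTN : ∀ k, NNRep (T k) := fun k => ⟨A k, hA k, hT k⟩
  intro N
  induction N with
  | zero =>
    intro i j
    have h1 : ∀ S : lpSeq p →L[ℝ] lpSeq p, S = 1 →
        ent S i j = if i = j then 1 else 0 := by
      rintro S rfl; exact repEntries repOne i j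
    rw [pow_zero, h1 1 rfl]
    have h2 : ∀ t : Fin m, ent (wOp T t 0) i j = if i = j then 1 else 0 :=
      fun t => by rw [wOp_zero]; exact repEntries repOne i j
    rw [Finset.prod_congr rfl (fun t _ => h2 t), Finset.prod_const]
    rcases eq_or_ne i j with h | h
    · rw [if_pos h, one_pow]
    · rw [if_neg h, zero_pow (Finset.card_ne_zero_of_mem (Finset.mem_univ (0 : Fin m)))]
  | succ N ih =>
    intro i j
    have hL : HasSum (fun k => hadProd A i k * ent (H ^ N) k j) (ent (H ^ (N + 1)) i j) := by
      have h0 := entryComp hH (H ^ N) i j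
      rw [← pow_succ'] at h0
      exact h0
    have hRow : ∀ t : Fin m, HasSum (fun k => A t i k * ent (wOp T (t + 1) N) k j)
        (ent (T t * wOp T (t + 1) N) i j) := fun t => entryComp (hT t) _ i j
    have hwnn : ∀ (t : Fin m) (k : ℕ), 0 ≤ ent (wOp T (t + 1) N) k j :=
      fun t k => ent_nonneg (wOp_nnrep hp hTN (t + 1) N).pos k j
    have hf0 : ∀ (t : Fin m) (k : ℕ), 0 ≤ A t i k * ent (wOp T (t + 1) N) k j :=
      fun t k => mul_nonneg (hA t i k) (hwnn t k)
    obtain ⟨hPsum, hPle⟩ := prodTsumLe hm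
      (fun t k => A t i k * ent (wOp T (t + 1) N) k j) hf0 (fun t => (hRow t).summable)
    have hpoint : ∀ k, hadProd A i k * ent (H ^ N) k j
        ≤ ∏ t, (A t i k * ent (wOp T (t + 1) N) k j) := by
      intro k
      rw [Finset.prod_mul_distrib]
      have h1 : ent (H ^ N) k j ≤ ∏ t, ent (wOp T (t + 1) N) k j := by
        have h3 : (∏ t, ent (wOp T (t + 1) N) k j) = ∏ t, ent (wOp T t N) k j :=
          Equiv.prod_comp (Equiv.addRight (1 : Fin m)) (fun t => ent (wOp T t N) k j)
        rw [h3]; exact ih k j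
      have h2 : (0:ℝ) ≤ ∏ t, A t i k := Finset.prod_nonneg (fun t _ => hA t i k)
      exact mul_le_mul_of_nonneg_left h1 h2
    calc ent (H ^ (N + 1)) i j = ∑' k, hadProd A i k * ent (H ^ N) k j := hL.tsum_eq.symm
      _ ≤ ∑' k, ∏ t, (A t i k * ent (wOp T (t + 1) N) k j) :=
          Summable.tsum_le_tsum hpoint hL.summable hPsum
      _ ≤ ∏ t, ∑' k, (A t i k * ent (wOp T (t + 1) N) k j) := hPle
      _ = ∏ t, ent (T t * wOp T (t + 1) N) i j :=
          Finset.prod_congr rfl (fun t _ => (hRow t).tsum_eq)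
      _ = ∏ t, ent (wOp T t (N + 1)) i j := by
          refine Finset.prod_congr rfl (fun t _ => ?_)
          rw [wOp_succ]

lemma normChain [NeZero m] (hp : p ≠ ∞) (hm : 0 < m) {A : Fin m → ℕ → ℕ → ℝ}
    {T : Fin m → lpSeq p →L[ℝ] lpSeq p}
    (hA : ∀ k i j, 0 ≤ A k i j) (hT : ∀ k, Represents p (A k) (T k))
    {H : lpSeq p →L[ℝ] lpSeq p} (hH : Represents p (hadProd A) H) (n : ℕ) :
    ‖H ^ (m * n)‖ ≤ ∏ t, ‖(wOp T t m) ^ n‖ := by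
  have hTN : ∀ k, NNRep (T k) := fun k => ⟨A k, hA k, hT k⟩
  have hHnn : NNRep H := ⟨hadProd A, fun i j => Finset.prod_nonneg (fun t _ => hA t i j), hH⟩
  set Q : Fin m → lpSeq p →L[ℝ] lpSeq p := fun t => wOp T t m with hQ
  set c : ℝ := ∏ t ∈ Finset.univ.erase (0 : Fin m), ‖Q t ^ n‖ with hc
  have hcnn : 0 ≤ c := Finset.prod_nonneg (fun t _ => norm_nonneg _)
  have hQ0nn : NNRep (Q 0 ^ n) := (wOp_nnrep hp hTN 0 m).pow hp n
  have hent : ∀ i j, ent (H ^ (m * n)) i j ≤ ent (c • (Q 0 ^ n)) i j := by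
    intro i j
    rw [entSmul]
    have e1 : ent (H ^ (m * n)) i j ≤ ∏ t, ent (wOp T t (m * n)) i j :=
      masterEnt hp hm hA hT hH (m * n) i j
    have e2 : (∏ t, ent (wOp T t (m * n)) i j) = ∏ t, ent (Q t ^ n) i j :=
      Finset.prod_congr rfl (fun t _ => by rw [wOp_pow])
    have e3 : (∏ t, ent (Q t ^ n) i j) ≤ c * ent (Q 0 ^ n) i j := by
      rw [← Finset.mul_prod_erase Finset.univ (fun t => ent (Q t ^ n) i j)
        (Finset.mem_univ (0 : Fin m)), mul_comm c]
      refine mul_le_mul_of_nonneg_left ?_ (ent_nonneg hQ0nn.pos i j)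
      refine Finset.prod_le_prod (fun t _ => ent_nonneg ((wOp_nnrep hp hTN t m).pow hp n).pos i j)
        (fun t _ => ent_le_norm hp _ i j)
    calc ent (H ^ (m * n)) i j ≤ ∏ t, ent (Q t ^ n) i j := e2 ▸ e1
      _ ≤ c * ent (Q 0 ^ n) i j := e3
  have h4 : ‖H ^ (m * n)‖ ≤ ‖c • (Q 0 ^ n)‖ :=
    entNormMono hp (hHnn.pow hp (m * n)) (hQ0nn.smul hcnn) hent
  calc ‖H ^ (m * n)‖ ≤ ‖c • (Q 0 ^ n)‖ := h4
    _ ≤ c * ‖Q 0 ^ n‖ := by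
        have h5 := ContinuousLinearMap.opNorm_smul_le c (Q 0 ^ n)
        rwa [Real.norm_eq_abs, abs_of_nonneg hcnn] at h5
    _ = ∏ t, ‖Q t ^ n‖ := by
        rw [mul_comm]
        exact Finset.mul_prod_erase Finset.univ (fun t => ‖Q t ^ n‖)
          (Finset.mem_univ (0 : Fin m))

lemma cyclicNormBound [NeZero m] (T : Fin m → lpSeq p →L[ℝ] lpSeq p) (t : Fin m) (n : ℕ) :
    ‖(wOp T t m) ^ (n + 1)‖ ≤
      (‖wOp T t (m - t.val)‖ * ‖wOp T 0 t.val‖) * ‖(wOp T 0 m) ^ n‖ := by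
  set B := wOp T t (m - t.val) with hB
  set C := wOp T 0 t.val with hC
  have hzero : t + ((m - t.val : ℕ) : Fin m) = 0 := by
    have h1 : ((t.val + (m - t.val) : ℕ) : Fin m) = ((m : ℕ) : Fin m) := by
      rw [Nat.add_sub_cancel' t.isLt.le]
    rw [Nat.cast_add, Fin.cast_val_eq_self] at h1
    rw [h1, Fin.natCast_eq_zero]
  have hQt : wOp T t m = B * C := by
    have h2 : wOp T t m = wOp T t ((m - t.val) + t.val) :=
      congrArg (wOp T t) (Nat.sub_add_cancel t.isLt.le).symm
    rw [h2, wOp_add, hzero]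
  have hP : wOp T 0 m = C * B := by
    have h2 : wOp T 0 m = wOp T 0 (t.val + (m - t.val)) :=
      congrArg (wOp T 0) (Nat.add_sub_cancel' t.isLt.le).symm
    rw [h2, wOp_add, zero_add, Fin.cast_val_eq_self]
  have hsc : SemiconjBy B (C * B) (B * C) := by
    unfold SemiconjBy; rw [mul_assoc]
  have hsemi : (B * C) ^ (n + 1) = B * (C * B) ^ n * C := by
    rw [pow_succ, ← mul_assoc, ← (hsc.pow_right n).eq]
  rw [hQt, hsemi, ← hP]
  calc ‖B * (wOp T 0 m) ^ n * C‖ ≤ ‖B * (wOp T 0 m) ^ n‖ * ‖C‖ := norm_mul_le _ _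
    _ ≤ (‖B‖ * ‖(wOp T 0 m) ^ n‖) * ‖C‖ :=
        mul_le_mul_of_nonneg_right (norm_mul_le _ _) (norm_nonneg _)
    _ = (‖B‖ * ‖C‖) * ‖(wOp T 0 m) ^ n‖ := by ring

/- ### block 6 : Pringsheim argument -/

lemma nontrivial_lpSeq : Nontrivial (lpSeq p) := by
  refine ⟨⟨single1 p 0, 0, fun h => ?_⟩⟩
  have h0 : single1 p 0 0 = (0 : lpSeq p) 0 := by rw [h]
  rw [single1_coord, if_pos rfl, lp.coeFn_zero, Pi.zero_apply] at h0
  norm_num at h0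

set_option maxHeartbeats 1000000 in
set_option synthInstance.maxHeartbeats 400000 in
lemma neumann {P : lpSeq p →L[ℝ] lpSeq p} {s v M : ℝ} (hs : 0 < s) (hv : 0 < v)
    (hvs : v < s) (hM : 0 ≤ M) (hbnd : ∀ n, ‖P ^ n‖ ≤ M * v ^ n) :
    Summable (fun n : ℕ => (s ^ (n + 1))⁻¹ • P ^ n)
    ∧ (algebraMap ℝ (lpSeq p →L[ℝ] lpSeq p) s - P) * (∑' n : ℕ, (s ^ (n + 1))⁻¹ • P ^ n) = 1
    ∧ (∑' n : ℕ, (s ^ (n + 1))⁻¹ • P ^ n) * (algebraMap ℝ (lpSeq p →L[ℝ] lpSeq p) s - P)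
      = 1 := by
  have hsne : s ≠ 0 := ne_of_gt hs
  have hvs1 : v / s < 1 := (div_lt_one hs).mpr hvs
  have hvs0 : (0:ℝ) ≤ v / s := by positivity
  have hnorm : ∀ (c : ℝ) (n : ℕ), 0 ≤ c → ‖c • P ^ n‖ ≤ c * (M * v ^ n) := by
    intro c n hc
    refine (ContinuousLinearMap.opNorm_smul_le _ _).trans ?_
    rw [Real.norm_eq_abs, abs_of_nonneg hc]
    exact mul_le_mul_of_nonneg_left (hbnd n) hc
  have hSb : Summable (fun n : ℕ => (s ^ (n + 1))⁻¹ • P ^ n) := by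
    refine Summable.of_norm_bounded (g := fun n => (M / s) * (v / s) ^ n)
      ((summable_geometric_of_lt_one hvs0 hvs1).mul_left _) (fun n => ?_)
    refine (hnorm _ n (by positivity)).trans_eq ?_
    show (s ^ (n + 1))⁻¹ * (M * v ^ n) = M / s * (v / s) ^ n
    rw [div_pow, div_mul_div_comm, ← pow_succ', inv_mul_eq_div]
  have hSa : Summable (fun n : ℕ => (s ^ n)⁻¹ • P ^ n) := by
    refine Summable.of_norm_bounded (g := fun n => M * (v / s) ^ n)
      ((summable_geometric_of_lt_one hvs0 hvs1).mul_left _) (fun n => ?_)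
    refine (hnorm _ n (by positivity)).trans_eq ?_
    show (s ^ n)⁻¹ * (M * v ^ n) = M * (v / s) ^ n
    rw [div_pow, inv_mul_eq_div, ← mul_div_assoc]
  set R : lpSeq p →L[ℝ] lpSeq p := ∑' n : ℕ, (s ^ (n + 1))⁻¹ • P ^ n with hR
  have hsb : (fun n : ℕ => s • ((s ^ (n + 1))⁻¹ • P ^ n)) = fun n => (s ^ n)⁻¹ • P ^ n := by
    funext n
    rw [smul_smul]
    congr 1
    rw [pow_succ, mul_inv, mul_comm ((s ^ n)⁻¹) s⁻¹, ← mul_assoc,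
      mul_inv_cancel₀ hsne, one_mul]
  have hsR : HasSum (fun n : ℕ => (s ^ n)⁻¹ • P ^ n) (s • R) := by
    have := hSb.hasSum.const_smul s
    rwa [hsb] at this
  have hPb : (fun n : ℕ => P * ((s ^ (n + 1))⁻¹ • P ^ n))
      = fun n => (s ^ (n + 1))⁻¹ • P ^ (n + 1) := by
    funext n
    rw [mul_smul_comm, ← pow_succ']
  have hPR : HasSum (fun n : ℕ => (s ^ (n + 1))⁻¹ • P ^ (n + 1)) (P * R) := by
    have := hSb.hasSum.mapL ((ContinuousLinearMap.mul ℝ (lpSeq p →L[ℝ] lpSeq p)) P)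
    simp only [ContinuousLinearMap.mul_apply'] at this
    rwa [← hPb]
  have hbPf : (fun n : ℕ => ((s ^ (n + 1))⁻¹ • P ^ n) * P)
      = fun n => (s ^ (n + 1))⁻¹ • P ^ (n + 1) := by
    funext n
    rw [smul_mul_assoc, ← pow_succ]
  have hRP : HasSum (fun n : ℕ => (s ^ (n + 1))⁻¹ • P ^ (n + 1)) (R * P) := by
    have := hSb.hasSum.mapL ((ContinuousLinearMap.mul ℝ (lpSeq p →L[ℝ] lpSeq p)).flip P)
    simp only [ContinuousLinearMap.flip_apply, ContinuousLinearMap.mul_apply'] at this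
    rwa [← hbPf]
  have hzero : ((s ^ (0:ℕ))⁻¹ • P ^ (0:ℕ) : lpSeq p →L[ℝ] lpSeq p) = 1 := by
    rw [pow_zero, pow_zero, inv_one, one_smul]
  have hEqA : s • R = 1 + P * R := by
    have h1 := Summable.tsum_eq_zero_add hSa
    rw [hsR.tsum_eq] at h1
    rw [h1, hzero]
    congr 1
    exact (hPR.tsum_eq).symm ▸ rfl
  have hEqB : s • R = 1 + R * P := by
    have h1 := Summable.tsum_eq_zero_add hSa
    rw [hsR.tsum_eq] at h1
    rw [h1, hzero]
    congr 1
    exact (hRP.tsum_eq).symm ▸ rfl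
  refine ⟨hSb, ?_, ?_⟩
  · rw [Algebra.algebraMap_eq_smul_one, sub_mul, smul_mul_assoc, one_mul, hEqA]
    abel
  · rw [Algebra.algebraMap_eq_smul_one, mul_sub, mul_smul_comm, mul_one, hEqB]
    abel

set_option maxHeartbeats 1000000 in
set_option synthInstance.maxHeartbeats 400000 in
lemma pringsheim (hp : p ≠ ∞) {P : lpSeq p →L[ℝ] lpSeq p} (hPos : Pos P) {u : ℝ}
    (hu : 0 < u) (hspec : spectralRadius ℝ P < ENNReal.ofReal u) :
    ∃ M : ℝ, 0 ≤ M ∧ ∀ n, ‖P ^ n‖ ≤ M * u ^ n := by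
  haveI := nontrivial_lpSeq (p := p)
  by_contra hcon
  push_neg at hcon
  set SS : Set ℝ := {s : ℝ | 0 < s ∧ ∃ M : ℝ, 0 ≤ M ∧ ∀ n, ‖P ^ n‖ ≤ M * s ^ n} with hSSdef
  have hSne : SS.Nonempty := by
    refine ⟨‖P‖ + 1, by positivity, 1, zero_le_one, fun n => ?_⟩
    rw [one_mul]
    calc ‖P ^ n‖ ≤ ‖P‖ ^ n := norm_pow_le P n
      _ ≤ (‖P‖ + 1) ^ n := pow_le_pow_left₀ (norm_nonneg _) (by linarith) n
  have hSup : ∀ s ∈ SS, ∀ s' : ℝ, s ≤ s' → s' ∈ SS := by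
    rintro s ⟨hs0, M, hM0, hM⟩ s' hss'
    exact ⟨lt_of_lt_of_le hs0 hss', M, hM0, fun n => (hM n).trans
      (mul_le_mul_of_nonneg_left (pow_le_pow_left₀ hs0.le hss' n) hM0)⟩
  have hnotu : u ∉ SS := by
    rintro ⟨-, M, hM0, hM⟩
    obtain ⟨n, hn⟩ := hcon M hM0
    exact absurd (hM n) (not_le.mpr hn)
  have hbdd : BddBelow SS := ⟨0, fun s hs => hs.1.le⟩
  obtain ⟨r0, hr0⟩ : ∃ x : ℝ, x = sInf SS := ⟨_, rfl⟩
  have hr0nn : 0 ≤ r0 := hr0 ▸ le_csInf hSne (fun s hs => hs.1.le)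
  have hur0 : u ≤ r0 := by
    by_contra hlt
    push_neg at hlt
    obtain ⟨v, hvSS, hvu⟩ := exists_lt_of_csInf_lt hSne (hr0 ▸ hlt)
    exact hnotu (hSup v hvSS u hvu.le)
  have hr0pos : 0 < r0 := lt_of_lt_of_le hu hur0
  -- invertibility above u
  have hinv : ∀ s : ℝ, u ≤ s → IsUnit (algebraMap ℝ (lpSeq p →L[ℝ] lpSeq p) s - P) := by
    intro s hs
    have h1 : spectralRadius ℝ P < ‖s‖₊ := by
      calc spectralRadius ℝ P < ENNReal.ofReal u := hspec
        _ ≤ ENNReal.ofReal s := ENNReal.ofReal_le_ofReal hs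
        _ = ↑‖s‖₊ := by
            rw [Real.nnnorm_of_nonneg (le_trans hu.le hs)]; exact ENNReal.ofReal_eq_coe_nnreal _
    exact spectrum.mem_resolventSet_iff.mp (spectrum.mem_resolventSet_of_spectralRadius_lt h1)
  -- bound for the resolvent on the compact interval
  have hcont : ContinuousOn
      (fun s : ℝ => Ring.inverse (algebraMap ℝ (lpSeq p →L[ℝ] lpSeq p) s - P))
      (Set.Icc u (r0 + 1)) := by
    intro s hs
    obtain ⟨w, hw⟩ := hinv s hs.1
    have h2 : ContinuousAt Ring.inverse (algebraMap ℝ (lpSeq p →L[ℝ] lpSeq p) s - P) := by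
      rw [← hw]; exact NormedRing.inverse_continuousAt w
    have h3 : Continuous fun s : ℝ => algebraMap ℝ (lpSeq p →L[ℝ] lpSeq p) s - P := by
      simp only [Algebra.algebraMap_eq_smul_one]
      exact (continuous_id.smul continuous_const).sub continuous_const
    have h4 := ContinuousAt.comp (x := s) h2 h3.continuousAt
    exact h4.continuousWithinAt
  obtain ⟨Cb, hCb⟩ := (isCompact_Icc).exists_bound_of_continuousOn hcont
  obtain ⟨M0, hM0def⟩ : ∃ x : ℝ, x = max Cb 1 := ⟨_, rfl⟩
  have hM0pos : 0 < M0 := hM0def ▸ lt_of_lt_of_le one_pos (le_max_right _ _)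
  have hM0 : ∀ s ∈ Set.Icc u (r0 + 1),
      ‖Ring.inverse (algebraMap ℝ (lpSeq p →L[ℝ] lpSeq p) s - P)‖ ≤ M0 :=
    fun s hs => (hCb s hs).trans (hM0def ▸ le_max_left _ _)
  -- choose s slightly above r0 and u' slightly below r0
  obtain ⟨η, hη⟩ : ∃ x : ℝ, x = min 1 (1 / (2 * M0)) := ⟨_, rfl⟩
  have hηpos : 0 < η := hη ▸ lt_min one_pos (by positivity)
  obtain ⟨s, hsdef⟩ : ∃ x : ℝ, x = r0 + η / 2 := ⟨_, rfl⟩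
  have hr0s : r0 < s := by rw [hsdef]; linarith
  have hsIcc : s ∈ Set.Icc u (r0 + 1) := by
    constructor
    · rw [hsdef]; linarith
    · rw [hsdef]
      have : η ≤ 1 := hη ▸ min_le_left _ _
      linarith
  have hspos : 0 < s := lt_of_lt_of_le hu (hsIcc.1)
  obtain ⟨δ, hδ⟩ : ∃ x : ℝ, x = min (η / 2) (r0 / 2) := ⟨_, rfl⟩
  have hδpos : 0 < δ := hδ ▸ lt_min (by linarith) (by linarith)
  obtain ⟨u', hu'def⟩ : ∃ x : ℝ, x = r0 - δ := ⟨_, rfl⟩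
  have hu'pos : 0 < u' := by
    have : δ ≤ r0 / 2 := hδ ▸ min_le_right _ _
    rw [hu'def]; linarith
  have hu'lt : u' < r0 := by rw [hu'def]; linarith
  have hsu' : 0 < s - u' := by rw [hsdef, hu'def]; linarith
  have hsu'M0 : (s - u') * M0 ≤ 1 / 2 := by
    have h1 : s - u' = η / 2 + δ := by rw [hsdef, hu'def]; ring
    have h2 : δ ≤ η / 2 := hδ ▸ min_le_left _ _
    have h3 : η ≤ 1 / (2 * M0) := hη ▸ min_le_right _ _
    have h4 : s - u' ≤ η := by linarith
    calc (s - u') * M0 ≤ η * M0 := mul_le_mul_of_nonneg_right h4 hM0pos.le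
      _ ≤ (1 / (2 * M0)) * M0 := mul_le_mul_of_nonneg_right h3 hM0pos.le
      _ = 1 / 2 := by field_simp
  -- the resolvent at s, given by the Neumann series
  obtain ⟨v, hvSS, hvs⟩ := exists_lt_of_csInf_lt hSne (hr0 ▸ hr0s)
  obtain ⟨hvpos, Mv, hMv0, hMv⟩ := hvSS
  obtain ⟨hSb, hNL, hNR⟩ := neumann (P := P) hspos hvpos hvs hMv0 hMv
  set aS : lpSeq p →L[ℝ] lpSeq p := algebraMap ℝ (lpSeq p →L[ℝ] lpSeq p) s - P with haS
  have hsunit : IsUnit aS := hinv s hsIcc.1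
  set R : lpSeq p →L[ℝ] lpSeq p := Ring.inverse aS with hRdef
  have hres : R = ∑' n : ℕ, (s ^ (n + 1))⁻¹ • P ^ n := by
    calc R = R * 1 := (mul_one _).symm
      _ = R * (aS * (∑' n : ℕ, (s ^ (n + 1))⁻¹ • P ^ n)) := by rw [hNL]
      _ = (R * aS) * (∑' n : ℕ, (s ^ (n + 1))⁻¹ • P ^ n) := (mul_assoc _ _ _).symm
      _ = ∑' n : ℕ, (s ^ (n + 1))⁻¹ • P ^ n := by
          rw [hRdef, Ring.inverse_mul_cancel aS hsunit, one_mul]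
  have hRpos : Pos R := by
    rw [hres]
    exact Pos.tsum hSb (fun n => (hPos.pow n).smul
      (inv_nonneg.mpr (pow_nonneg hspos.le _)))
  have hRnorm : ‖R‖ ≤ M0 := hM0 s hsIcc
  have haSR : aS * R = 1 := Ring.mul_inverse_cancel aS hsunit
  have hRaS : R * aS = 1 := Ring.inverse_mul_cancel aS hsunit
  -- the series for the resolvent at u'
  have hq : (0:ℝ) ≤ (s - u') * M0 := mul_nonneg hsu'.le hM0pos.le
  have hq1 : (s - u') * M0 < 1 := lt_of_le_of_lt hsu'M0 (by norm_num)
  have hWb : ∀ k : ℕ, ‖(s - u') ^ k • R ^ (k + 1)‖ ≤ M0 * ((s - u') * M0) ^ k := by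
    intro k
    refine (ContinuousLinearMap.opNorm_smul_le _ _).trans ?_
    rw [Real.norm_eq_abs, abs_of_nonneg (pow_nonneg hsu'.le _)]
    calc (s - u') ^ k * ‖R ^ (k + 1)‖ ≤ (s - u') ^ k * ‖R‖ ^ (k + 1) :=
          mul_le_mul_of_nonneg_left (norm_pow_le R (k + 1)) (pow_nonneg hsu'.le _)
      _ ≤ (s - u') ^ k * M0 ^ (k + 1) := by
          refine mul_le_mul_of_nonneg_left ?_ (pow_nonneg hsu'.le _)
          exact pow_le_pow_left₀ (norm_nonneg _) hRnorm _
      _ = M0 * ((s - u') * M0) ^ k := by rw [mul_pow, pow_succ]; ring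
  have hSW : Summable (fun k : ℕ => (s - u') ^ k • R ^ (k + 1)) :=
    Summable.of_norm_bounded ((summable_geometric_of_lt_one hq hq1).mul_left M0) hWb
  set W : lpSeq p →L[ℝ] lpSeq p := ∑' k : ℕ, (s - u') ^ k • R ^ (k + 1) with hWdef
  have hWpos : Pos W :=
    Pos.tsum hSW (fun k => (hRpos.pow (k + 1)).smul (pow_nonneg hsu'.le _))
  -- summability of the auxiliary series g k = (s-u')^k • R^k
  have hgb : ∀ k : ℕ, ‖(s - u') ^ k • R ^ k‖ ≤ ((s - u') * M0) ^ k := by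
    intro k
    refine (ContinuousLinearMap.opNorm_smul_le _ _).trans ?_
    rw [Real.norm_eq_abs, abs_of_nonneg (pow_nonneg hsu'.le _), mul_pow]
    refine mul_le_mul_of_nonneg_left ?_ (pow_nonneg hsu'.le _)
    exact (norm_pow_le R k).trans (pow_le_pow_left₀ (norm_nonneg _) hRnorm _)
  have hSg : Summable (fun k : ℕ => (s - u') ^ k • R ^ k) :=
    Summable.of_norm_bounded (summable_geometric_of_lt_one hq hq1) hgb
  -- aS * W = 1 + (s - u') • W  and  W * aS = 1 + (s - u') • W
  have haSW : aS * W = 1 + (s - u') • W := by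
    have h1 : HasSum (fun k : ℕ => (s - u') ^ k • R ^ k) (aS * W) := by
      have h2 := hSW.hasSum.mapL ((ContinuousLinearMap.mul ℝ (lpSeq p →L[ℝ] lpSeq p)) aS)
      simp only [ContinuousLinearMap.mul_apply'] at h2
      have h3 : (fun k : ℕ => aS * ((s - u') ^ k • R ^ (k + 1)))
          = fun k : ℕ => (s - u') ^ k • R ^ k := by
        funext k
        rw [mul_smul_comm]
        congr 1
        rw [pow_succ', ← mul_assoc, haSR, one_mul]
      rwa [h3] at h2
    have h4 := Summable.tsum_eq_zero_add hSg
    rw [h1.tsum_eq] at h4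
    have h5 : HasSum (fun k : ℕ => (s - u') • ((s - u') ^ k • R ^ (k + 1)))
        ((s - u') • W) := hSW.hasSum.const_smul _
    have h6 : (fun k : ℕ => (s - u') • ((s - u') ^ k • R ^ (k + 1)))
        = fun k : ℕ => (s - u') ^ (k + 1) • R ^ (k + 1) := by
      funext k
      rw [smul_smul, ← pow_succ']
    rw [h6] at h5
    rw [h4, pow_zero, pow_zero, one_smul, h5.tsum_eq]
  have hWaS : W * aS = 1 + (s - u') • W := by
    have h1 : HasSum (fun k : ℕ => (s - u') ^ k • R ^ k) (W * aS) := by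
      have h2 := hSW.hasSum.mapL
        ((ContinuousLinearMap.mul ℝ (lpSeq p →L[ℝ] lpSeq p)).flip aS)
      simp only [ContinuousLinearMap.flip_apply, ContinuousLinearMap.mul_apply'] at h2
      have h3 : (fun k : ℕ => ((s - u') ^ k • R ^ (k + 1)) * aS)
          = fun k : ℕ => (s - u') ^ k • R ^ k := by
        funext k
        rw [smul_mul_assoc]
        congr 1
        rw [pow_succ, mul_assoc, hRaS, mul_one]
      rwa [h3] at h2
    have h4 := Summable.tsum_eq_zero_add hSg
    rw [h1.tsum_eq] at h4
    have h5 : HasSum (fun k : ℕ => (s - u') • ((s - u') ^ k • R ^ (k + 1)))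
        ((s - u') • W) := hSW.hasSum.const_smul _
    have h6 : (fun k : ℕ => (s - u') • ((s - u') ^ k • R ^ (k + 1)))
        = fun k : ℕ => (s - u') ^ (k + 1) • R ^ (k + 1) := by
      funext k
      rw [smul_smul, ← pow_succ']
    rw [h6] at h5
    rw [h4, pow_zero, pow_zero, one_smul, h5.tsum_eq]
  -- resolvent identity at u'
  set aU : lpSeq p →L[ℝ] lpSeq p := algebraMap ℝ (lpSeq p →L[ℝ] lpSeq p) u' - P with haU
  have haUeq : aU = aS - (s - u') • 1 := by
    rw [haU, haS, Algebra.algebraMap_eq_smul_one, Algebra.algebraMap_eq_smul_one]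
    rw [sub_right_comm, ← sub_smul]
    congr 2
    ring
  have hUW : aU * W = 1 := by
    rw [haUeq, sub_mul, haSW, smul_mul_assoc, one_mul]
    abel
  -- key recursion
  have hkey : u' • W = 1 + P * W := by
    have h1 : aU * W = u' • W - P * W := by
      rw [haU, Algebra.algebraMap_eq_smul_one, sub_mul, smul_mul_assoc, one_mul]
    rw [h1] at hUW
    have := hUW
    rw [sub_eq_iff_eq_add] at this
    exact this
  have hu'ne : u' ≠ 0 := ne_of_gt hu'pos
  have hWrec : W = (u')⁻¹ • (1 + P * W) := by
    rw [← hkey, smul_smul, inv_mul_cancel₀ hu'ne, one_smul]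
  -- partial sums identity
  have hpartial : ∀ N : ℕ, W = (∑ n ∈ Finset.range N, (u' ^ (n + 1))⁻¹ • P ^ n)
      + (u' ^ N)⁻¹ • (P ^ N * W) := by
    intro N
    induction N with
    | zero =>
      rw [Finset.range_zero, Finset.sum_empty, pow_zero, inv_one, one_smul, pow_zero,
        one_mul, zero_add]
    | succ N ih =>
      have h1 : P ^ N * W = (u')⁻¹ • (P ^ N + P ^ (N + 1) * W) := by
        calc P ^ N * W = P ^ N * ((u')⁻¹ • (1 + P * W)) := by rw [← hWrec]
          _ = (u')⁻¹ • (P ^ N * (1 + P * W)) := by rw [mul_smul_comm]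
          _ = (u')⁻¹ • (P ^ N + P ^ (N + 1) * W) := by
              rw [mul_add, mul_one, ← mul_assoc, ← pow_succ]
      rw [Finset.sum_range_succ]
      calc W = (∑ n ∈ Finset.range N, (u' ^ (n + 1))⁻¹ • P ^ n)
          + (u' ^ N)⁻¹ • (P ^ N * W) := ih
        _ = (∑ n ∈ Finset.range N, (u' ^ (n + 1))⁻¹ • P ^ n)
          + ((u' ^ (N + 1))⁻¹ • P ^ N + (u' ^ (N + 1))⁻¹ • (P ^ (N + 1) * W)) := by
            congr 1
            rw [h1, smul_smul, smul_add]
            congr 2 <;> rw [pow_succ, mul_inv]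
        _ = _ := by abel
  -- positivity comparison
  have hPNbound : ∀ N : ℕ, ‖P ^ N‖ ≤ (‖W‖ * u') * u' ^ N := by
    intro N
    have hterm : Pos ((u' ^ (N + 1))⁻¹ • P ^ N) :=
      (hPos.pow N).smul (inv_nonneg.mpr (pow_nonneg hu'pos.le _))
    have hdiff : Pos (W - (u' ^ (N + 1))⁻¹ • P ^ N) := by
      have h2 : W - (u' ^ (N + 1))⁻¹ • P ^ N
          = (∑ n ∈ Finset.range N, (u' ^ (n + 1))⁻¹ • P ^ n)
            + (u' ^ (N + 1))⁻¹ • (P ^ (N + 1) * W) := by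
        have h3 := hpartial (N + 1)
        rw [Finset.sum_range_succ] at h3
        have habel : ∀ a b c : lpSeq p →L[ℝ] lpSeq p, a + b + c - b = a + c :=
          fun a b c => by abel
        conv_lhs => rw [h3]
        rw [habel]
      rw [h2]
      refine Pos.add (Pos.sum _ _ (fun n _ => (hPos.pow n).smul
        (inv_nonneg.mpr (pow_nonneg hu'pos.le _)))) ?_
      exact ((hPos.pow (N + 1)).mul hWpos).smul (inv_nonneg.mpr (pow_nonneg hu'pos.le _))
    have h4 : ‖(u' ^ (N + 1))⁻¹ • P ^ N‖ ≤ ‖W‖ := posNormMono hp hterm hdiff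
    have h5 : ‖P ^ N‖ ≤ u' ^ (N + 1) * ‖(u' ^ (N + 1))⁻¹ • P ^ N‖ := by
      have h6 : P ^ N = u' ^ (N + 1) • ((u' ^ (N + 1))⁻¹ • P ^ N) := by
        rw [smul_smul, mul_inv_cancel₀ (pow_ne_zero _ hu'ne), one_smul]
      calc ‖P ^ N‖ = ‖u' ^ (N + 1) • ((u' ^ (N + 1))⁻¹ • P ^ N)‖ := by rw [← h6]
        _ ≤ |u' ^ (N + 1)| * ‖(u' ^ (N + 1))⁻¹ • P ^ N‖ := by
            have := ContinuousLinearMap.opNorm_smul_le (u' ^ (N + 1))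
              ((u' ^ (N + 1))⁻¹ • P ^ N)
            rwa [Real.norm_eq_abs] at this
        _ = u' ^ (N + 1) * ‖(u' ^ (N + 1))⁻¹ • P ^ N‖ := by
            rw [abs_of_nonneg (pow_nonneg hu'pos.le _)]
    calc ‖P ^ N‖ ≤ u' ^ (N + 1) * ‖(u' ^ (N + 1))⁻¹ • P ^ N‖ := h5
      _ ≤ u' ^ (N + 1) * ‖W‖ := mul_le_mul_of_nonneg_left h4 (pow_nonneg hu'pos.le _)
      _ = (‖W‖ * u') * u' ^ N := by rw [pow_succ]; ring
  have hu'SS : u' ∈ SS :=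
    ⟨hu'pos, ‖W‖ * u', mul_nonneg (norm_nonneg _) hu'pos.le, hPNbound⟩
  exact absurd (hr0 ▸ csInf_le hbdd hu'SS) (not_le.mpr hu'lt)

/- ### block 7 : main theorem -/

set_option maxHeartbeats 1000000 in
set_option synthInstance.maxHeartbeats 400000 in
theorem main_hadamard
    (p : ℝ≥0∞) [Fact (1 ≤ p)] (hp : p ≠ ∞) (m : ℕ) (hm : 0 < m)
    (A : Fin m → ℕ → ℕ → ℝ) (hA : ∀ k i j, 0 ≤ A k i j)
    (T : Fin m → lpSeq p →L[ℝ] lpSeq p) (hT : ∀ k, Represents p (A k) (T k)) :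
    ∃ H : lpSeq p →L[ℝ] lpSeq p,
      Represents p (hadProd A) H ∧
      spectralRadius ℝ H ≤ spectralRadius ℝ (List.ofFn T).prod := by
  haveI : NeZero m := ⟨hm.ne'⟩
  haveI := nontrivial_lpSeq (p := p)
  have hTN : ∀ k, NNRep (T k) := fun k => ⟨A k, hA k, hT k⟩
  -- construct H
  have hentbd : ∀ (k : Fin m) (i j : ℕ), A k i j ≤ ‖T k‖ := by
    intro k i j
    rw [← repEntries (hT k) i j]
    exact ent_le_norm hp (T k) i j
  have hhad_nn : ∀ i j, 0 ≤ hadProd A i j :=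
    fun i j => Finset.prod_nonneg (fun k _ => hA k i j)
  obtain ⟨C, hCdef⟩ : ∃ x : ℝ, x = ∏ k ∈ Finset.univ.erase (0 : Fin m), ‖T k‖ := ⟨_, rfl⟩
  have hC0 : 0 ≤ C := hCdef ▸ Finset.prod_nonneg (fun k _ => norm_nonneg _)
  have hdom : ∀ i j, hadProd A i j ≤ C * A 0 i j := by
    intro i j
    have h1 : hadProd A i j = A 0 i j * ∏ k ∈ Finset.univ.erase (0 : Fin m), A k i j :=
      (Finset.mul_prod_erase Finset.univ (fun k => A k i j)
        (Finset.mem_univ (0 : Fin m))).symm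
    rw [h1, hCdef, mul_comm (A 0 i j)]
    refine mul_le_mul_of_nonneg_right ?_ (hA 0 i j)
    exact Finset.prod_le_prod (fun k _ => hA k i j) (fun k _ => hentbd k i j)
  obtain ⟨H, hH⟩ := buildOp hp (hadProd A) hhad_nn (hA 0) (hT 0) hC0 hdom
  refine ⟨H, hH, ?_⟩
  -- the operator product
  have hPeq : wOp T 0 m = (List.ofFn T).prod := by
    rw [wOp]
    congr 1
    refine congrArg List.ofFn (funext fun k => ?_)
    rw [zero_add, Fin.cast_val_eq_self]
  have hPpos : Pos ((List.ofFn T).prod) := by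
    rw [← hPeq]; exact (wOp_nnrep hp hTN 0 m).pos
  -- by contradiction
  by_contra hcon
  push_neg at hcon
  obtain ⟨w, hw1, hw2⟩ := ENNReal.lt_iff_exists_nnreal_btwn.mp hcon
  obtain ⟨u0, hu1, hu2⟩ := ENNReal.lt_iff_exists_nnreal_btwn.mp hw1
  have hu0pos : 0 < u0 := by
    rcases eq_or_ne u0 0 with h | h
    · rw [h] at hu1; simp at hu1
    · exact pos_iff_ne_zero.mpr h
  have huw : (u0 : ℝ) < (w : ℝ) := by exact_mod_cast hu2
  have hwpos : (0:ℝ) < w := lt_trans (by exact_mod_cast hu0pos) huw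
  -- Pringsheim bound for P
  obtain ⟨M, hM0, hMn⟩ := pringsheim hp hPpos (u := (u0 : ℝ)) (by exact_mod_cast hu0pos)
    (by rwa [ENNReal.ofReal_coe_nnreal])
  -- power norm bound for H
  obtain ⟨K, hKdef⟩ : ∃ x : ℝ,
      x = ∏ t : Fin m, (‖wOp T t (m - t.val)‖ * ‖wOp T 0 t.val‖) := ⟨_, rfl⟩
  have hK0 : 0 ≤ K := hKdef ▸ Finset.prod_nonneg
    (fun t _ => mul_nonneg (norm_nonneg _) (norm_nonneg _))
  have bnd : ∀ n : ℕ, ‖H ^ (m * (n + 1))‖ ≤ (K * M ^ m) * (((u0:ℝ) ^ m) ^ n) := by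
    intro n
    have b1 : ‖H ^ (m * (n + 1))‖ ≤ ∏ t, ‖(wOp T t m) ^ (n + 1)‖ :=
      normChain hp hm hA hT hH (n + 1)
    have b2 : (∏ t, ‖(wOp T t m) ^ (n + 1)‖)
        ≤ ∏ t, ((‖wOp T t (m - t.val)‖ * ‖wOp T 0 t.val‖) * ‖(wOp T 0 m) ^ n‖) :=
      Finset.prod_le_prod (fun t _ => norm_nonneg _)
        (fun t _ => cyclicNormBound T t n)
    have b3 : (∏ t, ((‖wOp T t (m - t.val)‖ * ‖wOp T 0 t.val‖) * ‖(wOp T 0 m) ^ n‖))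
        = K * ‖(wOp T 0 m) ^ n‖ ^ m := by
      rw [Finset.prod_mul_distrib, Finset.prod_const, Finset.card_univ, Fintype.card_fin,
        hKdef]
    have b4 : ‖(wOp T 0 m) ^ n‖ ≤ M * (u0:ℝ) ^ n := by
      rw [hPeq]; exact hMn n
    have b5 : ‖(wOp T 0 m) ^ n‖ ^ m ≤ (M * (u0:ℝ) ^ n) ^ m :=
      pow_le_pow_left₀ (norm_nonneg _) b4 m
    calc ‖H ^ (m * (n + 1))‖ ≤ K * ‖(wOp T 0 m) ^ n‖ ^ m := by
          rw [← b3]; exact b1.trans b2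
      _ ≤ K * (M * (u0:ℝ) ^ n) ^ m := mul_le_mul_of_nonneg_left b5 hK0
      _ = (K * M ^ m) * (((u0:ℝ) ^ m) ^ n) := by
          rw [mul_pow, ← pow_mul, ← pow_mul, mul_assoc, Nat.mul_comm n m]
  -- spectral radius lower bound for H
  have hwH : ∀ n : ℕ, ((w : ℝ)) ^ (m * (n + 1)) ≤ ‖H ^ (m * (n + 1))‖ := by
    intro n
    obtain ⟨N, hN⟩ : ∃ N : ℕ, N + 1 = m * (n + 1) :=
      ⟨m * (n + 1) - 1, Nat.succ_pred_eq_of_pos (Nat.mul_pos hm (Nat.succ_pos n))⟩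
    have h1 := spectrum.spectralRadius_le_pow_nnnorm_pow_one_div ℝ H N
    rw [nnnorm_one, ENNReal.coe_one, ENNReal.one_rpow, mul_one] at h1
    have h2 : (w : ℝ≥0∞) ≤ (‖H ^ (N + 1)‖₊ : ℝ≥0∞) ^ (1 / (N + 1) : ℝ) :=
      le_trans hw2.le h1
    have hcast : ((N:ℝ) + 1) = ((N + 1 : ℕ) : ℝ) := by push_cast; ring
    have h3 := ENNReal.rpow_le_rpow h2 (by positivity : (0:ℝ) ≤ (N:ℝ) + 1)
    rw [← ENNReal.rpow_mul, one_div, inv_mul_cancel₀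
      (by exact_mod_cast (Nat.succ_ne_zero N) : ((N:ℝ) + 1) ≠ 0), ENNReal.rpow_one,
      hcast, ENNReal.rpow_natCast, ← ENNReal.coe_pow] at h3
    have h5 : (w : ℝ≥0) ^ (N + 1) ≤ ‖H ^ (N + 1)‖₊ := by exact_mod_cast h3
    have h6 : ((w : ℝ)) ^ (N + 1) ≤ ‖H ^ (N + 1)‖ := by exact_mod_cast h5
    rwa [hN] at h6
  -- final contradiction
  obtain ⟨a, hadef⟩ : ∃ x : ℝ, x = (w:ℝ) ^ m := ⟨_, rfl⟩
  obtain ⟨b, hbdef⟩ : ∃ x : ℝ, x = (u0:ℝ) ^ m := ⟨_, rfl⟩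
  have hapos : 0 < a := hadef ▸ pow_pos hwpos m
  have hbpos : 0 < b := hbdef ▸ pow_pos (by exact_mod_cast hu0pos) m
  have hba : b < a := by
    rw [hadef, hbdef]
    exact pow_lt_pow_left₀ huw (by positivity) hm.ne'
  have hchain : ∀ n : ℕ, a * a ^ n ≤ (K * M ^ m) * b ^ n := by
    intro n
    have h7 : a * a ^ n = (w:ℝ) ^ (m * (n + 1)) := by
      rw [hadef, ← pow_mul, ← pow_add]
      congr 1
      ring
    calc a * a ^ n = (w:ℝ) ^ (m * (n + 1)) := h7
      _ ≤ ‖H ^ (m * (n + 1))‖ := hwH n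
      _ ≤ (K * M ^ m) * (((u0:ℝ) ^ m) ^ n) := bnd n
      _ = (K * M ^ m) * b ^ n := by rw [hbdef]
  have hgt1 : 1 < a / b := (one_lt_div hbpos).mpr hba
  obtain ⟨n, hn⟩ := pow_unbounded_of_one_lt ((K * M ^ m) / a) hgt1
  have h8 : (a / b) ^ n ≤ (K * M ^ m) / a := by
    rw [div_pow, div_le_div_iff₀ (pow_pos hbpos n) hapos, mul_comm (a ^ n) a]
    exact hchain n
  exact absurd h8 (not_le.mpr hn)

end HadAux

/-- the Hadamard product `A₁ ∘ ⋯ ∘ A_m` defines a bounded operator on `ℓ^p`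
and `ρ(A₁ ∘ ⋯ ∘ A_m) ≤ ρ(A₁ A₂ ⋯ A_m)`. -/
theorem spectralRadius_hadamard_le
    (p : ℝ≥0∞) [Fact (1 ≤ p)] (hp : p ≠ ∞) (m : ℕ) (hm : 0 < m)
    (A : Fin m → ℕ → ℕ → ℝ) (hA : ∀ k i j, 0 ≤ A k i j)
    (T : Fin m → lpSeq p →L[ℝ] lpSeq p) (hT : ∀ k, Represents p (A k) (T k)) :
    ∃ H : lpSeq p →L[ℝ] lpSeq p,
      Represents p (hadProd A) H ∧
      spectralRadius ℝ H ≤ spectralRadius ℝ (List.ofFn T).prod :=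
  HadAux.main_hadamard p hp m hm A hA T hT
end
end

section
/- Let A_1, ..., A_m be non-negative matrices that define bounded operators on ℓ^p, let t ∈ [1, m], and for i = 1, ..., m set P_i = A_i^{(t)} A_{i+1}^{(t)} ⋯ A_m^{(t)} A_1^{(t)} A_2^{(t)} ⋯ A_{i-1}^{(t)} (the cyclic product of the Hadamard t-th powers starting at index i). Then ‖(A_1 ∘ ⋯ ∘ A_m)^m‖ ≤ ‖P_1^{(1/t)} ∘ ⋯ ∘ P_m^{(1/t)}‖ ≤ (‖P_1‖ ⋯ ‖P_m‖)^{1/t} ≤ (‖(A_1 A_2 ⋯ A_m)^{(t)}‖ · ‖(A_2 ⋯ A_m A_1)^{(t)}‖ ⋯ ‖(A_m A_1 ⋯ A_{m-1})^{(t)}‖)^{1/t} ≤ ‖A_1 A_2 ⋯ A_m‖ · ‖A_2 ⋯ A_m A_1‖ ⋯ ‖A_m A_1 ⋯ A_{m-1}‖. -/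
open scoped ENNReal NNReal BigOperators InnerProductSpace

noncomputable section

/-! ### Auxiliary lemmas -/

section AuxBasic

variable {p : ℝ≥0∞} [Fact (1 ≤ p)]

lemma pReal_pos (hp : p ≠ ∞) : 0 < p.toReal := by
  have h1 : (1 : ℝ≥0∞) ≤ p := Fact.out
  refine ENNReal.toReal_pos (fun h0 => ?_) hp
  rw [h0] at h1
  simp at h1

lemma pne_zero : p ≠ 0 := by
  have h1 : (1 : ℝ≥0∞) ≤ p := Fact.out
  intro h0; rw [h0] at h1; simp at h1

lemma memℓp_dom (hp : p ≠ ∞) {f : ℕ → ℝ} (g : lpSeq p) (h : ∀ i, |f i| ≤ |g i|) :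
    Memℓp f p := by
  have hP := pReal_pos (p := p) hp
  apply memℓp_gen
  refine Summable.of_nonneg_of_le (fun i => Real.rpow_nonneg (norm_nonneg _) _) (fun i => ?_)
    ((memℓp_gen_iff hP).1 (lp.memℓp g))
  exact Real.rpow_le_rpow (norm_nonneg _) (by simpa [Real.norm_eq_abs] using h i) hP.le

lemma lp_norm_mono (hp : p ≠ ∞) {f g : lpSeq p} (h : ∀ i, |f i| ≤ |g i|) : ‖f‖ ≤ ‖g‖ := by
  have hP := pReal_pos (p := p) hp
  have h1 : ‖f‖ ^ p.toReal ≤ ‖g‖ ^ p.toReal := by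
    rw [lp.norm_rpow_eq_tsum hP, lp.norm_rpow_eq_tsum hP]
    refine Summable.tsum_le_tsum (fun i => ?_) ((lp.memℓp f).summable hP) ((lp.memℓp g).summable hP)
    exact Real.rpow_le_rpow (norm_nonneg _) (by simpa [Real.norm_eq_abs] using h i) hP.le
  exact (Real.rpow_le_rpow_iff (norm_nonneg _) (norm_nonneg _) hP).1 h1

/-- entrywise absolute value of an `ℓ^p` element -/
def lpAbs (hp : p ≠ ∞) (x : lpSeq p) : lpSeq p :=
  ⟨fun i => |x i|, memℓp_dom hp x (fun i => by simp)⟩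

@[simp] lemma lpAbs_apply (hp : p ≠ ∞) (x : lpSeq p) (i : ℕ) : lpAbs hp x i = |x i| := rfl

lemma lpAbs_nonneg (hp : p ≠ ∞) (x : lpSeq p) (i : ℕ) : 0 ≤ lpAbs hp x i := abs_nonneg _

lemma lpAbs_norm (hp : p ≠ ∞) (x : lpSeq p) : ‖lpAbs hp x‖ = ‖x‖ :=
  le_antisymm (lp_norm_mono hp (fun i => by simp)) (lp_norm_mono hp (fun i => by simp))

/-- entrywise positive part of an `ℓ^p` element -/
def lpPos (hp : p ≠ ∞) (x : lpSeq p) : lpSeq p :=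
  ⟨fun i => max (x i) 0, memℓp_dom hp x (fun i => by
    rw [abs_of_nonneg (le_max_right _ _)]
    exact max_le (le_abs_self _) (abs_nonneg _))⟩

@[simp] lemma lpPos_apply (hp : p ≠ ∞) (x : lpSeq p) (i : ℕ) : lpPos hp x i = max (x i) 0 := rfl

lemma lpPos_nonneg (hp : p ≠ ∞) (x : lpSeq p) (i : ℕ) : 0 ≤ lpPos hp x i := le_max_right _ _

lemma lpPos_sub (hp : p ≠ ∞) (x : lpSeq p) : x = lpPos hp x - lpPos hp (-x) := by
  apply lp.ext
  funext i
  rw [lp.coeFn_sub]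
  simp only [Pi.sub_apply, lpPos_apply, lp.coeFn_neg, Pi.neg_apply]
  rcases le_total (x i) 0 with h | h
  · rw [max_eq_right h, max_eq_left (by linarith)]; ring
  · rw [max_eq_left h, max_eq_right (by linarith)]; ring

end AuxBasic

section RepBasic

variable {p : ℝ≥0∞} [Fact (1 ≤ p)] {a : ℕ → ℕ → ℝ} {T : lpSeq p →L[ℝ] lpSeq p}

lemma Represents.summable_row (h : Represents p a T) (x : lpSeq p) (i : ℕ) :
    Summable fun j => a i j * x j := (h x i).summable

lemma Represents.tsum_row (h : Represents p a T) (x : lpSeq p) (i : ℕ) :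
    ∑' j, a i j * x j = T x i := (h x i).tsum_eq

lemma Represents.apply_nonneg (h : Represents p a T) (ha : ∀ i j, 0 ≤ a i j) {x : lpSeq p}
    (hx : ∀ j, 0 ≤ x j) (i : ℕ) : 0 ≤ T x i := by
  rw [← h.tsum_row x i]
  exact tsum_nonneg fun j => mul_nonneg (ha i j) (hx j)

lemma Represents.col (h : Represents p a T) (j k : ℕ) : T (lp.single p j 1) k = a k j := by
  have h1 := h (lp.single p j 1) k
  have h2 : (fun l => a k l * (lp.single (E := fun _ : ℕ => ℝ) p j 1) l)
      = fun l => if l = j then a k j else 0 := by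
    funext l
    rcases eq_or_ne l j with rfl | hl
    · rw [lp.single_apply_self]; simp
    · rw [lp.single_apply_ne p j _ hl]; simp [hl]
  rw [h2] at h1
  exact h1.unique (hasSum_ite_eq j (a k j))

lemma Represents.entry_le_norm (hp : p ≠ ∞) (h : Represents p a T)
    (ha : ∀ i j, 0 ≤ a i j) (i j : ℕ) : a i j ≤ ‖T‖ := by
  have hP := pReal_pos (p := p) hp
  have h1 : a i j = T (lp.single p j 1) i := (h.col j i).symm
  have h2 : |T (lp.single p j 1) i| ≤ ‖T (lp.single p j 1)‖ := by
    simpa [Real.norm_eq_abs] using lp.norm_apply_le_norm (pne_zero (p := p)) (T (lp.single p j 1)) i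
  have h4 : ‖lp.single (E := fun _ : ℕ => ℝ) p j 1‖ = 1 := by
    simpa using lp.norm_single (E := fun _ : ℕ => ℝ) (pos_iff_ne_zero.2 (pne_zero (p := p))) j (1 : ℝ)
  have h3 : ‖T (lp.single p j 1)‖ ≤ ‖T‖ := by
    calc ‖T (lp.single p j 1)‖ ≤ ‖T‖ * ‖lp.single (E := fun _ : ℕ => ℝ) p j 1‖ := T.le_opNorm _
    _ = ‖T‖ := by rw [h4, mul_one]
  calc a i j = T (lp.single p j 1) i := h1
  _ ≤ |T (lp.single p j 1) i| := le_abs_self _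
  _ ≤ ‖T‖ := h2.trans h3

end RepBasic

section Construct

variable {p : ℝ≥0∞} [Fact (1 ≤ p)]

lemma represents_construct (hp : p ≠ ∞) {c : ℕ → ℕ → ℝ} (hc : ∀ i j, 0 ≤ c i j) {K : ℝ}
    (hK : 0 ≤ K)
    (hsum : ∀ x : lpSeq p, (∀ j, 0 ≤ x j) → ∀ i, Summable fun j => c i j * x j)
    (hbd : ∀ x : lpSeq p, (∀ j, 0 ≤ x j) →
      ∃ z : lpSeq p, ‖z‖ ≤ K * ‖x‖ ∧ ∀ i, (∑' j, c i j * x j) ≤ z i) :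
    ∃ W : lpSeq p →L[ℝ] lpSeq p, Represents p c W ∧ ‖W‖ ≤ K := by
  have habs : ∀ (x : lpSeq p) (i : ℕ), Summable fun j => c i j * x j := by
    intro x i
    have h1 : Summable fun j => c i j * (lpAbs hp x) j := hsum (lpAbs hp x) (lpAbs_nonneg hp x) i
    refine Summable.of_abs ?_
    have h2 : (fun j => |c i j * x j|) = fun j => c i j * (lpAbs hp x) j := by
      funext j; rw [abs_mul, abs_of_nonneg (hc i j)]; rfl
    rw [h2]; exact h1
  have hptw : ∀ (x : lpSeq p) (i : ℕ), |∑' j, c i j * x j| ≤ ∑' j, c i j * (lpAbs hp x) j := by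
    intro x i
    have h2 : (fun j => |c i j * x j|) = fun j => c i j * (lpAbs hp x) j := by
      funext j; rw [abs_mul, abs_of_nonneg (hc i j)]; rfl
    have h3 : (fun j => ‖c i j * x j‖) = fun j => c i j * (lpAbs hp x) j := by
      funext j; rw [Real.norm_eq_abs]; rw [abs_mul, abs_of_nonneg (hc i j)]; rfl
    have h4 := norm_tsum_le_tsum_norm (f := fun j => c i j * x j)
      (by rw [h3]; exact hsum (lpAbs hp x) (lpAbs_nonneg hp x) i)
    rw [Real.norm_eq_abs] at h4
    calc |∑' j, c i j * x j| ≤ ∑' j, ‖c i j * x j‖ := h4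
    _ = ∑' j, c i j * (lpAbs hp x) j := by rw [h3]
  have hmem : ∀ x : lpSeq p, Memℓp (fun i => ∑' j, c i j * x j) p := by
    intro x
    obtain ⟨z, _, hz2⟩ := hbd (lpAbs hp x) (lpAbs_nonneg hp x)
    refine memℓp_dom hp z (fun i => ?_)
    exact le_trans (le_trans (hptw x i) (hz2 i)) (le_abs_self _)
  let L : lpSeq p →ₗ[ℝ] lpSeq p :=
    { toFun := fun x => ⟨fun i => ∑' j, c i j * x j, hmem x⟩
      map_add' := fun x y => by
        apply lp.ext; funext i
        have h1 : ∀ j, c i j * (x + y) j = c i j * x j + c i j * y j := fun j => by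
          rw [lp.coeFn_add]; simp [mul_add]
        show (∑' j, c i j * (x + y) j) = (∑' j, c i j * x j) + ∑' j, c i j * y j
        rw [tsum_congr h1]
        exact Summable.tsum_add (habs x i) (habs y i)
      map_smul' := fun r x => by
        apply lp.ext; funext i
        have h1 : ∀ j, c i j * (r • x) j = r * (c i j * x j) := fun j => by
          rw [lp.coeFn_smul]; simp; ring
        show (∑' j, c i j * (r • x) j) = r * ∑' j, c i j * x j
        rw [tsum_congr h1]
        exact tsum_mul_left
      }
  have hLbound : ∀ x, ‖L x‖ ≤ K * ‖x‖ := by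
    intro x
    obtain ⟨z, hz1, hz2⟩ := hbd (lpAbs hp x) (lpAbs_nonneg hp x)
    have h1 : ‖L x‖ ≤ ‖z‖ := by
      refine lp_norm_mono hp (fun i => ?_)
      show |∑' j, c i j * x j| ≤ |z i|
      exact le_trans (le_trans (hptw x i) (hz2 i)) (le_abs_self _)
    calc ‖L x‖ ≤ ‖z‖ := h1
    _ ≤ K * ‖lpAbs hp x‖ := hz1
    _ = K * ‖x‖ := by rw [lpAbs_norm]
  refine ⟨L.mkContinuous K hLbound, fun x i => ?_, L.mkContinuous_norm_le hK hLbound⟩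
  have h1 : (L.mkContinuous K hLbound) x i = ∑' j, c i j * x j := rfl
  rw [h1]
  exact (habs x i).hasSum

lemma represents_dominated (hp : p ≠ ∞) {a c : ℕ → ℕ → ℝ} {T : lpSeq p →L[ℝ] lpSeq p}
    (ha : ∀ i j, 0 ≤ a i j) (hc : ∀ i j, 0 ≤ c i j) (hrep : Represents p a T) {d : ℝ}
    (hd : 0 ≤ d) (hdom : ∀ i j, c i j ≤ d * a i j) :
    ∃ W : lpSeq p →L[ℝ] lpSeq p, Represents p c W ∧ ‖W‖ ≤ d * ‖T‖ := by
  refine represents_construct hp hc (mul_nonneg hd (norm_nonneg _)) ?_ ?_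
  · intro x hx i
    refine Summable.of_nonneg_of_le (fun j => mul_nonneg (hc i j) (hx j)) (fun j => ?_)
      (((hrep.summable_row x i)).mul_left d)
    calc c i j * x j ≤ (d * a i j) * x j := mul_le_mul_of_nonneg_right (hdom i j) (hx j)
    _ = d * (a i j * x j) := by ring
  · intro x hx
    refine ⟨d • T x, ?_, fun i => ?_⟩
    · rw [norm_smul, Real.norm_eq_abs, abs_of_nonneg hd, mul_assoc]
      exact mul_le_mul_of_nonneg_left (T.le_opNorm x) hd
    · have h1 : (d • T x) i = d * T x i := by rw [lp.coeFn_smul]; simp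
      rw [h1, ← hrep.tsum_row x i, ← tsum_mul_left]
      have hle : ∀ j, c i j * x j ≤ d * (a i j * x j) := by
        intro j
        calc c i j * x j ≤ (d * a i j) * x j := mul_le_mul_of_nonneg_right (hdom i j) (hx j)
        _ = d * (a i j * x j) := by ring
      exact Summable.tsum_le_tsum hle
        (Summable.of_nonneg_of_le (fun j => mul_nonneg (hc i j) (hx j)) hle
          ((hrep.summable_row x i).mul_left d))
        ((hrep.summable_row x i).mul_left d)

lemma rpow_split_one {u s : ℝ} (hu : 0 ≤ u) (hs : 1 ≤ s) : u ^ s = u ^ (s - 1) * u := by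
  rcases eq_or_lt_of_le hu with h | h
  · rw [← h, Real.zero_rpow (by linarith : s ≠ 0), mul_zero]
  · conv_lhs => rw [show s = (s - 1) + 1 by ring]
    rw [Real.rpow_add h, Real.rpow_one]

lemma represents_hadPow (hp : p ≠ ∞) {a : ℕ → ℕ → ℝ} {T : lpSeq p →L[ℝ] lpSeq p}
    (ha : ∀ i j, 0 ≤ a i j) (hrep : Represents p a T) {s : ℝ} (hs : 1 ≤ s) :
    ∃ W : lpSeq p →L[ℝ] lpSeq p, Represents p (hadPow a s) W ∧ ‖W‖ ≤ ‖T‖ ^ s := by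
  have key : ∀ i j, hadPow a s i j ≤ (‖T‖ ^ (s - 1)) * a i j := by
    intro i j
    show a i j ^ s ≤ ‖T‖ ^ (s - 1) * a i j
    rw [rpow_split_one (ha i j) hs]
    exact mul_le_mul_of_nonneg_right
      (Real.rpow_le_rpow (ha i j) (hrep.entry_le_norm hp ha i j) (by linarith)) (ha i j)
  obtain ⟨W, h1, h2⟩ := represents_dominated hp ha (fun i j => Real.rpow_nonneg (ha i j) s) hrep
    (Real.rpow_nonneg (norm_nonneg T) _) key
  exact ⟨W, h1, h2.trans_eq (rpow_split_one (norm_nonneg T) hs).symm⟩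

end Construct

section Comp

variable {p : ℝ≥0∞} [Fact (1 ≤ p)]

lemma matMul_nonneg {a b : ℕ → ℕ → ℝ} (ha : ∀ i j, 0 ≤ a i j) (hb : ∀ i j, 0 ≤ b i j) :
    ∀ i j, 0 ≤ matMul a b i j := fun i j =>
  tsum_nonneg fun k => mul_nonneg (ha i k) (hb k j)

lemma idMat_nonneg : ∀ i j, 0 ≤ idMat i j := by
  intro i j; unfold idMat; split <;> norm_num

lemma matListProd_nonneg {L : List (ℕ → ℕ → ℝ)} (hL : ∀ M ∈ L, ∀ i j, 0 ≤ M i j) :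
    ∀ i j, 0 ≤ matListProd L i j := by
  induction L with
  | nil => exact idMat_nonneg
  | cons M L ih =>
    exact matMul_nonneg (hL M List.mem_cons_self) (ih fun N hN => hL N (List.mem_cons_of_mem M hN))

lemma represents_id : Represents p idMat 1 := by
  intro x i
  have h1 : (fun j => idMat i j * x j) = fun j => if j = i then x i else 0 := by
    funext j
    by_cases h : i = j
    · subst h; simp [idMat]
    · simp [idMat, h, Ne.symm h]
  rw [h1, show (1 : lpSeq p →L[ℝ] lpSeq p) x i = x i from rfl]
  exact hasSum_ite_eq i (x i)

lemma represents_comp (hp : p ≠ ∞) {a b : ℕ → ℕ → ℝ} {S T : lpSeq p →L[ℝ] lpSeq p}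
    (ha : ∀ i j, 0 ≤ a i j) (hb : ∀ i j, 0 ≤ b i j)
    (hS : Represents p a S) (hT : Represents p b T) :
    Represents p (matMul a b) (S * T) := by
  have main : ∀ x : lpSeq p, (∀ j, 0 ≤ x j) → ∀ i,
      HasSum (fun j => matMul a b i j * x j) (S (T x) i) := by
    intro x hx i
    set g : ℕ × ℕ → ℝ := fun kj => a i kj.1 * (b kj.1 kj.2 * x kj.2) with hg
    have hg0 : 0 ≤ g := fun kj => mul_nonneg (ha _ _) (mul_nonneg (hb _ _) (hx _))
    have hrow : ∀ k, Summable fun j => g (k, j) := fun k => (hT.summable_row x k).mul_left (a i k)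
    have hTx : ∀ k, (∑' j, g (k, j)) = a i k * T x k := by
      intro k
      rw [show (fun j => g (k, j)) = fun j => a i k * (b k j * x j) from rfl, tsum_mul_left,
        hT.tsum_row x k]
    have hcol : Summable fun k => ∑' j, g (k, j) := by
      rw [show (fun k => ∑' j, g (k, j)) = fun k => a i k * T x k from funext hTx]
      exact hS.summable_row (T x) i
    have hgsum : Summable g := (summable_prod_of_nonneg hg0).2 ⟨hrow, hcol⟩
    have hTot : (∑' kj : ℕ × ℕ, g kj) = S (T x) i := by
      rw [Summable.tsum_prod hgsum, tsum_congr hTx, hS.tsum_row (T x) i]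
    have hswap : Summable fun jk : ℕ × ℕ => g jk.swap := hgsum.prod_symm
    have h1 : ∀ jj : ℕ, (∑' k, g (k, jj)) = matMul a b i jj * x jj := by
      intro jj
      rw [show (fun k => g (k, jj)) = fun k => (a i k * b k jj) * x jj from
        funext fun k => by simp [hg]; ring, tsum_mul_right]
      rfl
    have h3 : Summable fun jj => matMul a b i jj * x jj := by
      have h4 := hswap.prod
      rw [show (fun b_1 => ∑' c_1, g ((b_1, c_1) : ℕ × ℕ).swap) = fun jj => ∑' k, g (k, jj)
        from rfl, funext h1] at h4
      exact h4
    have h5 : (∑' jj, matMul a b i jj * x jj) = S (T x) i := by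
      rw [← funext h1]
      calc (∑' (jj : ℕ), ∑' (k : ℕ), g (k, jj))
          = ∑' jk : ℕ × ℕ, g jk.swap := (Summable.tsum_prod hswap).symm
      _ = ∑' kj : ℕ × ℕ, g kj := (Equiv.prodComm ℕ ℕ).tsum_eq g
      _ = S (T x) i := hTot
    exact h5 ▸ h3.hasSum
  intro x i
  have hxs := lpPos_sub hp x
  set u := lpPos hp x with hu
  set v := lpPos hp (-x) with hv
  have h5 := (main u (lpPos_nonneg hp x) i).sub (main v (lpPos_nonneg hp (-x)) i)
  have hfun : (fun j => matMul a b i j * u j - matMul a b i j * v j)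
      = fun j => matMul a b i j * x j := by
    funext j
    rw [← mul_sub]
    congr 1
    conv_rhs => rw [hxs]
    rw [lp.coeFn_sub]; rfl
  have hval : S (T u) i - S (T v) i = (S * T) x i := by
    have h6 : (S * T) x = S (T u) - S (T v) := by
      conv_lhs => rw [hxs]
      rw [show (S * T) (u - v) = S (T (u - v)) from rfl, map_sub, map_sub]
    rw [h6, lp.coeFn_sub]; rfl
  rw [hfun, hval] at h5
  exact h5

lemma represents_ofFn (hp : p ≠ ∞) {n : ℕ} (M : Fin n → ℕ → ℕ → ℝ)
    (O : Fin n → lpSeq p →L[ℝ] lpSeq p)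
    (hM : ∀ k i j, 0 ≤ M k i j) (h : ∀ k, Represents p (M k) (O k)) :
    Represents p (matListProd (List.ofFn M)) ((List.ofFn O).prod) := by
  induction n with
  | zero =>
    rw [List.ofFn_zero, List.ofFn_zero, List.prod_nil]
    exact represents_id
  | succ n ih =>
    rw [List.ofFn_succ, List.ofFn_succ (f := O), List.prod_cons]
    show Represents p (matMul (M 0) (matListProd (List.ofFn fun k : Fin n => M k.succ))) _
    refine represents_comp hp (hM 0) ?_ (h 0) (ih _ _ (fun k => hM k.succ) (fun k => h k.succ))
    refine matListProd_nonneg ?_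
    intro N hN
    rw [List.mem_ofFn] at hN
    obtain ⟨k, rfl⟩ := hN
    exact hM k.succ

lemma represents_replicate (hp : p ≠ ∞) {N : ℕ → ℕ → ℝ} {Hop : lpSeq p →L[ℝ] lpSeq p}
    (hN : ∀ i j, 0 ≤ N i j) (h : Represents p N Hop) :
    ∀ r, Represents p (matListProd (List.replicate r N)) (Hop ^ r) := by
  intro r
  induction r with
  | zero => rw [pow_zero]; exact represents_id
  | succ r ih =>
    rw [List.replicate_succ, pow_succ']
    show Represents p (matMul N (matListProd (List.replicate r N))) _
    refine represents_comp hp hN ?_ h ih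
    exact matListProd_nonneg (fun X hX => by rw [List.eq_of_mem_replicate hX]; exact hN)

end Comp

section Hoelder

open MeasureTheory

lemma ennreal_rpow_split {u : ℝ≥0∞} {q : ℝ} (hq : 1 ≤ q) : u ^ q = u * u ^ (q - 1) := by
  rcases eq_or_ne u 0 with rfl | hu0
  · rw [ENNReal.zero_rpow_of_pos (by linarith), zero_mul]
  rcases eq_or_ne u ⊤ with rfl | hut
  · rcases eq_or_lt_of_le hq with h | h
    · rw [← h]; simp
    · rw [ENNReal.top_rpow_of_pos (by linarith), ENNReal.top_rpow_of_pos (by linarith),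
        ENNReal.top_mul_top]
  · conv_lhs => rw [show q = 1 + (q - 1) by ring]
    rw [ENNReal.rpow_add _ _ hu0 hut, ENNReal.rpow_one]

lemma etsum_rpow_le {f : ℕ → ℝ≥0∞} {q : ℝ} (hq : 1 ≤ q) :
    (∑' k, f k ^ q) ≤ (∑' k, f k) ^ q := by
  calc (∑' k, f k ^ q) = ∑' k, f k * f k ^ (q - 1) := tsum_congr fun k => ennreal_rpow_split hq
  _ ≤ ∑' k, f k * (∑' l, f l) ^ (q - 1) := ENNReal.tsum_le_tsum fun k =>
      mul_le_mul_right (ENNReal.rpow_le_rpow (ENNReal.le_tsum k) (by linarith)) _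
  _ = (∑' k, f k) * (∑' l, f l) ^ (q - 1) := ENNReal.tsum_mul_right
  _ = (∑' k, f k) ^ q := (ennreal_rpow_split hq).symm

lemma etsum_prod_rpow_le {m : ℕ} (hm : 0 < m) (f : Fin m → ℕ → ℝ≥0∞) {c : ℝ} (hc : 0 < c)
    (hmc : 1 ≤ (m : ℝ) * c) :
    (∑' k, ∏ s, f s k ^ c) ≤ ∏ s, (∑' k, f s k) ^ c := by
  have hm' : ((m : ℝ)) ≠ 0 := Nat.cast_ne_zero.2 hm.ne'
  have key := ENNReal.lintegral_prod_norm_pow_le (μ := Measure.count) (Finset.univ : Finset (Fin m))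
      (f := fun s k => f s k ^ (c * m)) (fun s _ => measurable_from_top.aemeasurable)
      (p := fun _ => 1 / (m : ℝ))
      (by rw [Finset.sum_const]; simp; field_simp) (fun s _ => by positivity)
  simp only [lintegral_count] at key
  calc (∑' k, ∏ s, f s k ^ c)
      = ∑' k, ∏ s, (f s k ^ (c * (m : ℝ))) ^ (1 / (m : ℝ)) := by
        refine tsum_congr fun k => Finset.prod_congr rfl fun s _ => ?_
        rw [← ENNReal.rpow_mul]
        congr 1
        field_simp
  _ ≤ ∏ s, (∑' k, f s k ^ (c * (m : ℝ))) ^ (1 / (m : ℝ)) := key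
  _ ≤ ∏ s, ((∑' k, f s k) ^ (c * (m : ℝ))) ^ (1 / (m : ℝ)) := by
        refine Finset.prod_le_prod' fun s _ => ?_
        exact ENNReal.rpow_le_rpow (etsum_rpow_le (by nlinarith)) (by positivity)
  _ = ∏ s, (∑' k, f s k) ^ c := by
        refine Finset.prod_congr rfl fun s _ => ?_
        rw [← ENNReal.rpow_mul]
        congr 1
        field_simp

lemma summable_of_etsum_ne_top {g : ℕ → ℝ} (hg : ∀ k, 0 ≤ g k)
    (h : (∑' k, ENNReal.ofReal (g k)) ≠ ⊤) : Summable g := by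
  have h1 : ∀ k, ENNReal.ofReal (g k) = ENNReal.ofNNReal ⟨g k, hg k⟩ := fun k =>
    ENNReal.ofReal_eq_coe_nnreal (hg k)
  rw [tsum_congr h1] at h
  have h2 := ENNReal.tsum_coe_ne_top_iff_summable.1 h
  have h3 := NNReal.summable_coe.2 h2
  exact h3

lemma rtsum_rpow_le {f : ℕ → ℝ} (hf : ∀ k, 0 ≤ f k) (hsum : Summable f) {q : ℝ} (hq : 1 ≤ q) :
    Summable (fun k => f k ^ q) ∧ (∑' k, f k ^ q) ≤ (∑' k, f k) ^ q := by
  have h0 : ∀ k, ENNReal.ofReal (f k ^ q) = ENNReal.ofReal (f k) ^ q := fun k =>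
    (ENNReal.ofReal_rpow_of_nonneg (hf k) (by linarith)).symm
  have he : (∑' k, ENNReal.ofReal (f k ^ q)) ≤ ENNReal.ofReal ((∑' k, f k) ^ q) := by
    calc (∑' k, ENNReal.ofReal (f k ^ q)) = ∑' k, ENNReal.ofReal (f k) ^ q := tsum_congr h0
    _ ≤ (∑' k, ENNReal.ofReal (f k)) ^ q := etsum_rpow_le hq
    _ = ENNReal.ofReal (∑' k, f k) ^ q := by rw [← ENNReal.ofReal_tsum_of_nonneg hf hsum]
    _ = ENNReal.ofReal ((∑' k, f k) ^ q) :=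
        ENNReal.ofReal_rpow_of_nonneg (tsum_nonneg hf) (by linarith)
  have hsq : Summable fun k => f k ^ q :=
    summable_of_etsum_ne_top (fun k => Real.rpow_nonneg (hf k) q)
      (lt_of_le_of_lt he ENNReal.ofReal_lt_top).ne
  refine ⟨hsq, ?_⟩
  rw [← ENNReal.ofReal_tsum_of_nonneg (fun k => Real.rpow_nonneg (hf k) q) hsq] at he
  exact (ENNReal.ofReal_le_ofReal_iff (Real.rpow_nonneg (tsum_nonneg hf) q)).1 he

lemma rtsum_prod_rpow_le {m : ℕ} (hm : 0 < m) (f : Fin m → ℕ → ℝ) (hf : ∀ s k, 0 ≤ f s k)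
    (hsum : ∀ s, Summable (f s)) {c : ℝ} (hc : 0 < c) (hmc : 1 ≤ (m : ℝ) * c) :
    Summable (fun k => ∏ s, f s k ^ c) ∧ (∑' k, ∏ s, f s k ^ c) ≤ ∏ s, (∑' k, f s k) ^ c := by
  have h0 : ∀ k, ENNReal.ofReal (∏ s, f s k ^ c) = ∏ s, ENNReal.ofReal (f s k) ^ c := by
    intro k
    rw [ENNReal.ofReal_prod_of_nonneg (fun s _ => Real.rpow_nonneg (hf s k) c)]
    exact Finset.prod_congr rfl fun s _ =>
      (ENNReal.ofReal_rpow_of_nonneg (hf s k) hc.le).symm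
  have he : (∑' k, ENNReal.ofReal (∏ s, f s k ^ c)) ≤
      ENNReal.ofReal (∏ s, (∑' k, f s k) ^ c) := by
    calc (∑' k, ENNReal.ofReal (∏ s, f s k ^ c))
        = ∑' k, ∏ s, ENNReal.ofReal (f s k) ^ c := tsum_congr h0
    _ ≤ ∏ s, (∑' k, ENNReal.ofReal (f s k)) ^ c := etsum_prod_rpow_le hm _ hc hmc
    _ = ∏ s, ENNReal.ofReal ((∑' k, f s k) ^ c) := by
        refine Finset.prod_congr rfl fun s _ => ?_
        rw [← ENNReal.ofReal_tsum_of_nonneg (hf s) (hsum s)]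
        exact ENNReal.ofReal_rpow_of_nonneg (tsum_nonneg (hf s)) hc.le
    _ = ENNReal.ofReal (∏ s, (∑' k, f s k) ^ c) :=
        (ENNReal.ofReal_prod_of_nonneg (fun s _ =>
          Real.rpow_nonneg (tsum_nonneg (hf s)) c)).symm
  have hsq : Summable fun k => ∏ s, f s k ^ c :=
    summable_of_etsum_ne_top
      (fun k => Finset.prod_nonneg fun s _ => Real.rpow_nonneg (hf s k) c)
      (lt_of_le_of_lt he ENNReal.ofReal_lt_top).ne
  refine ⟨hsq, ?_⟩
  rw [← ENNReal.ofReal_tsum_of_nonneg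
    (fun k => Finset.prod_nonneg fun s _ => Real.rpow_nonneg (hf s k) c) hsq] at he
  exact (ENNReal.ofReal_le_ofReal_iff
    (Finset.prod_nonneg fun s _ => Real.rpow_nonneg (tsum_nonneg (hf s)) c)).1 he

lemma real_rpow_rpow_inv {u t : ℝ} (hu : 0 ≤ u) (ht : t ≠ 0) : (u ^ t) ^ (1 / t) = u := by
  rw [← Real.rpow_mul hu, mul_one_div_cancel ht, Real.rpow_one]

end Hoelder

section GeomMean

variable {p : ℝ≥0∞} [Fact (1 ≤ p)]

lemma prod_rpow_inv_card {m : ℕ} (hm : 0 < m) {x : ℝ} (hx : 0 ≤ x) :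
    (∏ _s : Fin m, x ^ (1 / (m : ℝ))) = x := by
  rw [Finset.prod_const, Finset.card_univ, Fintype.card_fin, ← Real.rpow_natCast (x ^ (1/(m:ℝ))) m,
    ← Real.rpow_mul hx]
  rw [show 1 / (m:ℝ) * (m:ℝ) = 1 by field_simp, Real.rpow_one]

lemma geom_entry_eq {m : ℕ} (hm : 0 < m) (B : Fin m → ℕ → ℕ → ℝ)
    (hB : ∀ s i j, 0 ≤ B s i j) {x : ℝ} (hx : 0 ≤ x) (i j : ℕ) :
    hadProd (fun s => hadPow (B s) (1 / (m : ℝ))) i j * x =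
      ∏ s, (B s i j * x) ^ (1 / (m : ℝ)) := by
  have h1 : hadProd (fun s => hadPow (B s) (1 / (m : ℝ))) i j
      = ∏ s, (B s i j) ^ (1 / (m : ℝ)) := rfl
  rw [h1]
  conv_lhs => rw [show x = ∏ _s : Fin m, x ^ (1 / (m : ℝ)) from (prod_rpow_inv_card hm hx).symm]
  rw [← Finset.prod_mul_distrib]
  exact Finset.prod_congr rfl fun s _ =>
    (Real.mul_rpow (hB s i j) hx).symm

lemma rpow_swap {u P c : ℝ} (hu : 0 ≤ u) : (u ^ P) ^ c = (u ^ c) ^ P := by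
  rw [← Real.rpow_mul hu, mul_comm, Real.rpow_mul hu]

lemma represents_geom_mean (hp : p ≠ ∞) {m : ℕ} (hm : 0 < m) (B : Fin m → ℕ → ℕ → ℝ)
    (hB : ∀ s i j, 0 ≤ B s i j) (U : Fin m → lpSeq p →L[ℝ] lpSeq p)
    (hU : ∀ s, Represents p (B s) (U s)) :
    ∃ W : lpSeq p →L[ℝ] lpSeq p,
      Represents p (hadProd fun s => hadPow (B s) (1 / (m : ℝ))) W ∧
      ‖W‖ ≤ ∏ s, ‖U s‖ ^ (1 / (m : ℝ)) := by
  have hP := pReal_pos (p := p) hp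
  set c : ℝ := 1 / (m : ℝ) with hcdef
  have hm' : ((m : ℝ)) ≠ 0 := Nat.cast_ne_zero.2 hm.ne'
  have hc : 0 < c := by positivity
  have hmc : 1 ≤ (m : ℝ) * c := by rw [hcdef]; field_simp; norm_num
  have hK : 0 ≤ ∏ s, ‖U s‖ ^ c :=
    Finset.prod_nonneg fun s _ => Real.rpow_nonneg (norm_nonneg _) c
  have hcnn : ∀ i j, 0 ≤ hadProd (fun s => hadPow (B s) c) i j := fun i j =>
    Finset.prod_nonneg fun s _ => Real.rpow_nonneg (hB s i j) c
  refine represents_construct hp hcnn hK ?_ ?_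
  · intro x hx i
    have h1 : (fun j => hadProd (fun s => hadPow (B s) c) i j * x j)
        = fun j => ∏ s, (B s i j * x j) ^ c := by
      funext j; exact geom_entry_eq hm B hB (hx j) i j
    rw [h1]
    exact (rtsum_prod_rpow_le hm (fun s j => B s i j * x j)
      (fun s j => mul_nonneg (hB s i j) (hx j)) (fun s => (hU s).summable_row x i) hc hmc).1
  · intro x hx
    set y : Fin m → lpSeq p := fun s => U s x with hy
    have hynn : ∀ s i, 0 ≤ y s i := fun s i => (hU s).apply_nonneg (hB s) hx i
    have hyP : ∀ s, Summable fun i => (y s i) ^ p.toReal := by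
      intro s
      have h2 := (memℓp_gen_iff hP).1 (lp.memℓp (y s))
      refine h2.congr fun i => ?_
      rw [Real.norm_eq_abs, abs_of_nonneg (hynn s i)]
    set g : ℕ → ℝ := fun i => ∏ s, (y s i) ^ c with hg
    have hgnn : ∀ i, 0 ≤ g i := fun i =>
      Finset.prod_nonneg fun s _ => Real.rpow_nonneg (hynn s i) c
    have hgP : ∀ i, ‖g i‖ ^ p.toReal = ∏ s, ((y s i) ^ p.toReal) ^ c := by
      intro i
      rw [Real.norm_eq_abs, abs_of_nonneg (hgnn i), hg]
      rw [← Real.finset_prod_rpow _ _ (fun s _ => Real.rpow_nonneg (hynn s i) c) _]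
      exact Finset.prod_congr rfl fun s _ => rpow_swap (hynn s i)
    have hgmem : Memℓp g p := by
      apply memℓp_gen
      have := (rtsum_prod_rpow_le hm (fun s i => (y s i) ^ p.toReal)
        (fun s i => Real.rpow_nonneg (hynn s i) _) hyP hc hmc).1
      exact this.congr fun i => (hgP i).symm
    refine ⟨⟨g, hgmem⟩, ?_, ?_⟩
    · -- norm bound
      have hz : ‖(⟨g, hgmem⟩ : lpSeq p)‖ ^ p.toReal ≤ ((∏ s, ‖U s‖ ^ c) * ‖x‖) ^ p.toReal := by
        rw [lp.norm_rpow_eq_tsum hP]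
        have hcoe : ∀ i, (⟨g, hgmem⟩ : lpSeq p) i = g i := fun i => rfl
        calc (∑' i, ‖(⟨g, hgmem⟩ : lpSeq p) i‖ ^ p.toReal)
            = ∑' i, ∏ s, ((y s i) ^ p.toReal) ^ c := by
              refine tsum_congr fun i => ?_
              rw [hcoe i]; exact hgP i
        _ ≤ ∏ s, (∑' i, (y s i) ^ p.toReal) ^ c :=
            (rtsum_prod_rpow_le hm (fun s i => (y s i) ^ p.toReal)
              (fun s i => Real.rpow_nonneg (hynn s i) _) hyP hc hmc).2
        _ = ∏ s, (‖y s‖ ^ p.toReal) ^ c := by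
            refine Finset.prod_congr rfl fun s _ => ?_
            congr 1
            rw [lp.norm_rpow_eq_tsum hP]
            exact tsum_congr fun i => by
              rw [Real.norm_eq_abs, abs_of_nonneg (hynn s i)]
        _ ≤ ∏ s, ((‖U s‖ * ‖x‖) ^ p.toReal) ^ c := by
            refine Finset.prod_le_prod (fun s _ => Real.rpow_nonneg
              (Real.rpow_nonneg (norm_nonneg _) _) _) fun s _ => ?_
            refine Real.rpow_le_rpow (Real.rpow_nonneg (norm_nonneg _) _) ?_ hc.le
            exact Real.rpow_le_rpow (norm_nonneg _) ((U s).le_opNorm x) hP.le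
        _ = ((∏ s, ‖U s‖ ^ c) * ‖x‖) ^ p.toReal := by
            have h6 : ∀ s : Fin m, ((‖U s‖ * ‖x‖) ^ p.toReal) ^ c
                = ((‖U s‖ * ‖x‖) ^ c) ^ p.toReal := fun s =>
              rpow_swap (mul_nonneg (norm_nonneg _) (norm_nonneg _))
            rw [Finset.prod_congr rfl fun s _ => h6 s,
              Real.finset_prod_rpow _ _ (fun s _ => Real.rpow_nonneg
                (mul_nonneg (norm_nonneg _) (norm_nonneg _)) _) _]
            congr 1
            calc (∏ s, (‖U s‖ * ‖x‖) ^ c) = ∏ s, (‖U s‖ ^ c * ‖x‖ ^ c) :=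
                Finset.prod_congr rfl fun s _ => Real.mul_rpow (norm_nonneg _) (norm_nonneg _)
            _ = (∏ s, ‖U s‖ ^ c) * ∏ _s : Fin m, ‖x‖ ^ c := Finset.prod_mul_distrib
            _ = (∏ s, ‖U s‖ ^ c) * ‖x‖ := by rw [prod_rpow_inv_card hm (norm_nonneg x)]
      exact (Real.rpow_le_rpow_iff (lp.norm_nonneg' _)
        (mul_nonneg hK (norm_nonneg x)) hP).1 hz
    · -- pointwise domination
      intro i
      have h1 : (fun j => hadProd (fun s => hadPow (B s) c) i j * x j)
          = fun j => ∏ s, (B s i j * x j) ^ c := by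
        funext j; exact geom_entry_eq hm B hB (hx j) i j
      rw [h1]
      have h2 := (rtsum_prod_rpow_le hm (fun s j => B s i j * x j)
        (fun s j => mul_nonneg (hB s i j) (hx j)) (fun s => (hU s).summable_row x i) hc hmc).2
      refine h2.trans (le_of_eq ?_)
      show (∏ s, (∑' j, B s i j * x j) ^ c) = g i
      exact Finset.prod_congr rfl fun s _ => by rw [(hU s).tsum_row x i]
end GeomMean

section Entrywise

variable {p : ℝ≥0∞} [Fact (1 ≤ p)]

lemma opNorm_le_of_entrywise (hp : p ≠ ∞) {b c : ℕ → ℕ → ℝ} {Bo Co : lpSeq p →L[ℝ] lpSeq p}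
    (hb : ∀ i j, 0 ≤ b i j) (hB : Represents p b Bo) (hC : Represents p c Co)
    (hle : ∀ i j, b i j ≤ c i j) : ‖Bo‖ ≤ ‖Co‖ := by
  refine ContinuousLinearMap.opNorm_le_bound _ (norm_nonneg _) fun x => ?_
  have key : ∀ i, |Bo x i| ≤ |Co (lpAbs hp x) i| := by
    intro i
    have habs : (fun j => ‖b i j * x j‖) = fun j => b i j * (lpAbs hp x) j := by
      funext j; rw [Real.norm_eq_abs, abs_mul, abs_of_nonneg (hb i j)]; rfl
    have h1 : |Bo x i| ≤ ∑' j, b i j * (lpAbs hp x) j := by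
      rw [← hB.tsum_row x i, ← tsum_congr (fun j => congrFun habs j)]
      have h2 := norm_tsum_le_tsum_norm (f := fun j => b i j * x j)
        (by rw [habs]; exact hB.summable_row (lpAbs hp x) i)
      rw [Real.norm_eq_abs] at h2
      exact h2
    have h3 : (∑' j, b i j * (lpAbs hp x) j) ≤ ∑' j, c i j * (lpAbs hp x) j :=
      Summable.tsum_le_tsum (fun j => mul_le_mul_of_nonneg_right (hle i j) (lpAbs_nonneg hp x j))
        (hB.summable_row (lpAbs hp x) i) (hC.summable_row (lpAbs hp x) i)
    calc |Bo x i| ≤ ∑' j, c i j * (lpAbs hp x) j := h1.trans h3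
    _ = Co (lpAbs hp x) i := hC.tsum_row (lpAbs hp x) i
    _ ≤ |Co (lpAbs hp x) i| := le_abs_self _
  calc ‖Bo x‖ ≤ ‖Co (lpAbs hp x)‖ := lp_norm_mono hp key
  _ ≤ ‖Co‖ * ‖lpAbs hp x‖ := Co.le_opNorm _
  _ = ‖Co‖ * ‖x‖ := by rw [lpAbs_norm]

lemma summable_mul_col {a b : ℕ → ℕ → ℝ} {S W : lpSeq p →L[ℝ] lpSeq p}
    (hS : Represents p a S) (hW : Represents p b W) (i j : ℕ) :
    Summable fun k => a i k * b k j := by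
  refine (hS.summable_row (W (lp.single p j 1)) i).congr fun k => ?_
  rw [hW.col j k]

lemma hadPow_nonneg {a : ℕ → ℕ → ℝ} (ha : ∀ i j, 0 ≤ a i j) (t : ℝ) :
    ∀ i j, 0 ≤ hadPow a t i j := fun i j => Real.rpow_nonneg (ha i j) t

lemma hadProd_nonneg {m : ℕ} {A : Fin m → ℕ → ℕ → ℝ} (hA : ∀ k i j, 0 ≤ A k i j) :
    ∀ i j, 0 ≤ hadProd A i j := fun i j => Finset.prod_nonneg fun k _ => hA k i j

lemma listProd_hadPow_le (hp : p ≠ ∞) {t : ℝ} (ht : 1 ≤ t) : ∀ {n : ℕ}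
    (M : Fin n → ℕ → ℕ → ℝ) (O OP : Fin n → lpSeq p →L[ℝ] lpSeq p),
    (∀ k i j, 0 ≤ M k i j) → (∀ k, Represents p (M k) (O k)) →
    (∀ k, Represents p (hadPow (M k) t) (OP k)) →
    ∀ i j, matListProd (List.ofFn fun k => hadPow (M k) t) i j ≤
      (matListProd (List.ofFn M) i j) ^ t := by
  intro n
  induction n with
  | zero =>
    intro M O OP hM hO hOP i j
    rw [List.ofFn_zero, List.ofFn_zero]
    show idMat i j ≤ idMat i j ^ t
    by_cases h : i = j
    · simp [idMat, h, Real.one_rpow]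
    · simp [idMat, h, Real.zero_rpow (by linarith : t ≠ 0)]
  | succ n ih =>
    intro M O OP hM hO hOP i j
    rw [List.ofFn_succ, List.ofFn_succ (f := M)]
    show matMul (hadPow (M 0) t) (matListProd (List.ofFn fun k : Fin n => hadPow (M k.succ) t)) i j
      ≤ (matMul (M 0) (matListProd (List.ofFn fun k : Fin n => M k.succ)) i j) ^ t
    set L' := matListProd (List.ofFn fun k : Fin n => hadPow (M k.succ) t) with hL'
    set R' := matListProd (List.ofFn fun k : Fin n => M k.succ) with hR'
    have hR'nn : ∀ i j, 0 ≤ R' i j := matListProd_nonneg (by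
      intro N hN; rw [List.mem_ofFn] at hN; obtain ⟨k, rfl⟩ := hN; exact hM k.succ)
    have hRepL' : Represents p L' ((List.ofFn fun k : Fin n => OP k.succ).prod) :=
      represents_ofFn hp _ _ (fun k => hadPow_nonneg (hM k.succ) t) (fun k => hOP k.succ)
    have hRepR' : Represents p R' ((List.ofFn fun k : Fin n => O k.succ).prod) :=
      represents_ofFn hp _ _ (fun k => hM k.succ) (fun k => hO k.succ)
    have hsum1 : Summable fun k => hadPow (M 0) t i k * L' k j :=
      summable_mul_col (hOP 0) hRepL' i j
    have hg0 : ∀ k, 0 ≤ M 0 i k * R' k j := fun k => mul_nonneg (hM 0 i k) (hR'nn k j)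
    have hsumg : Summable fun k => M 0 i k * R' k j := summable_mul_col (hO 0) hRepR' i j
    have hpow := rtsum_rpow_le hg0 hsumg ht
    have hptw : ∀ k, hadPow (M 0) t i k * L' k j ≤ (M 0 i k * R' k j) ^ t := by
      intro k
      have h1 : hadPow (M 0) t i k * L' k j ≤ (M 0 i k) ^ t * (R' k j) ^ t :=
        mul_le_mul_of_nonneg_left
          (ih _ (fun k => O k.succ) (fun k => OP k.succ)
            (fun k => hM k.succ) (fun k => hO k.succ) (fun k => hOP k.succ) k j)
          (Real.rpow_nonneg (hM 0 i k) t)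
      rw [← Real.mul_rpow (hM 0 i k) (hR'nn k j)] at h1
      exact h1
    calc matMul (hadPow (M 0) t) L' i j = ∑' k, hadPow (M 0) t i k * L' k j := rfl
    _ ≤ ∑' k, (M 0 i k * R' k j) ^ t := Summable.tsum_le_tsum hptw hsum1 hpow.1
    _ ≤ (∑' k, M 0 i k * R' k j) ^ t := hpow.2

end Entrywise

section PowEntry

variable {p : ℝ≥0∞} [Fact (1 ≤ p)]

open Fin.NatCast in
lemma pow_entry_le (hp : p ≠ ∞) {m : ℕ} [NeZero m] (A : Fin m → ℕ → ℕ → ℝ)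
    (hA : ∀ k i j, 0 ≤ A k i j) {t : ℝ} (ht1 : 1 ≤ t) (htm : t ≤ (m : ℝ))
    (Hop : lpSeq p →L[ℝ] lpSeq p) (hH : Represents p (hadProd A) Hop)
    (S : Fin m → lpSeq p →L[ℝ] lpSeq p) (hS : ∀ k, Represents p (hadPow (A k) t) (S k)) :
    ∀ r i j, matListProd (List.replicate r (hadProd A)) i j ≤
      ∏ s : Fin m, (matListProd (List.ofFn fun l : Fin r =>
        hadPow (A (s + ((l : ℕ) : Fin m))) t) i j) ^ (1 / t) := by
  have hm : 0 < m := Nat.pos_of_ne_zero (NeZero.ne m)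
  have htpos : (0 : ℝ) < t := by linarith
  have htne : t ≠ 0 := htpos.ne'
  have hct : (0 : ℝ) < 1 / t := by positivity
  have hmc : 1 ≤ (m : ℝ) * (1 / t) := by
    rw [mul_one_div]
    exact (one_le_div htpos).2 htm
  set E : ℕ → Fin m → ℕ → ℕ → ℝ := fun r s =>
    matListProd (List.ofFn fun l : Fin r => hadPow (A (s + ((l : ℕ) : Fin m))) t) with hE
  have hEnn : ∀ r s k j, 0 ≤ E r s k j := by
    intro r s k j
    refine matListProd_nonneg ?_ k j
    intro N hN; rw [List.mem_ofFn] at hN; obtain ⟨l, rfl⟩ := hN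
    exact hadPow_nonneg (hA _) t
  have hErep : ∀ r s, Represents p (E r s)
      ((List.ofFn fun l : Fin r => S (s + ((l : ℕ) : Fin m))).prod) := by
    intro r s
    exact represents_ofFn hp _ _ (fun l => hadPow_nonneg (hA _) t) (fun l => hS _)
  have hEsucc : ∀ (r : ℕ) (s : Fin m), E (r + 1) s = matMul (hadPow (A s) t) (E r (s + 1)) := by
    intro r s
    have hlist : (List.ofFn fun l : Fin (r + 1) => hadPow (A (s + ((l : ℕ) : Fin m))) t)
        = hadPow (A s) t :: (List.ofFn fun l : Fin r =>
            hadPow (A ((s + 1) + ((l : ℕ) : Fin m))) t) := by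
      rw [List.ofFn_succ]
      congr 1
      · norm_num
      · refine congrArg List.ofFn (funext fun l => ?_)
        have h1 : s + (((Fin.succ l : Fin (r + 1)) : ℕ) : Fin m)
            = (s + 1) + ((l : ℕ) : Fin m) := by
          rw [Fin.val_succ, Nat.cast_add, Nat.cast_one]
          abel
        rw [h1]
    show matListProd _ = _
    rw [hlist]
    rfl
  intro r
  induction r with
  | zero =>
    intro i j
    show idMat i j ≤ ∏ s : Fin m, (idMat i j) ^ (1 / t)
    by_cases h : i = j
    · simp [idMat, h, Real.one_rpow]
    · rw [show idMat i j = 0 by simp [idMat, h]]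
      exact Finset.prod_nonneg fun s _ => Real.rpow_nonneg le_rfl _
  | succ r ih =>
    intro i j
    rw [List.replicate_succ]
    show matMul (hadProd A) (matListProd (List.replicate r (hadProd A))) i j ≤ _
    set Rr := matListProd (List.replicate r (hadProd A)) with hRr
    have hRnn : ∀ k j, 0 ≤ Rr k j :=
      matListProd_nonneg fun X hX => by
        rw [List.eq_of_mem_replicate hX]; exact hadProd_nonneg hA
    have hRrep : Represents p Rr (Hop ^ r) :=
      represents_replicate hp (hadProd_nonneg hA) hH r
    set f : Fin m → ℕ → ℝ := fun s k => A s i k ^ t * E r (s + 1) k j with hf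
    have hfnn : ∀ s k, 0 ≤ f s k := fun s k =>
      mul_nonneg (Real.rpow_nonneg (hA s i k) t) (hEnn r (s + 1) k j)
    have hfsum : ∀ s, Summable (f s) := fun s =>
      summable_mul_col (hS s) (hErep r (s + 1)) i j
    have hRH := rtsum_prod_rpow_le hm f hfnn hfsum hct hmc
    have hptw : ∀ k, hadProd A i k * Rr k j ≤ ∏ s, f s k ^ (1 / t) := by
      intro k
      have h1 : hadProd A i k * Rr k j ≤ hadProd A i k * ∏ s, (E r s k j) ^ (1 / t) :=
        mul_le_mul_of_nonneg_left (ih k j) (hadProd_nonneg hA i k)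
      refine h1.trans (le_of_eq ?_)
      have h2 : (∏ s, (E r s k j) ^ (1 / t)) = ∏ s, (E r (s + 1) k j) ^ (1 / t) :=
        (Equiv.prod_comp (Equiv.addRight (1 : Fin m))
          (fun s => (E r s k j) ^ (1 / t))).symm
      have h3 : hadProd A i k = ∏ s, ((A s i k) ^ t) ^ (1 / t) :=
        Finset.prod_congr rfl fun s _ => (real_rpow_rpow_inv (hA s i k) htne).symm
      rw [h2, h3, ← Finset.prod_mul_distrib]
      refine Finset.prod_congr rfl fun s _ => ?_
      rw [← Real.mul_rpow (Real.rpow_nonneg (hA s i k) t) (hEnn r (s + 1) k j)]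
    have hsum1 : Summable fun k => hadProd A i k * Rr k j :=
      summable_mul_col hH hRrep i j
    calc matMul (hadProd A) Rr i j = ∑' k, hadProd A i k * Rr k j := rfl
    _ ≤ ∑' k, ∏ s, f s k ^ (1 / t) := Summable.tsum_le_tsum hptw hsum1 hRH.1
    _ ≤ ∏ s, (∑' k, f s k) ^ (1 / t) := hRH.2
    _ = ∏ s : Fin m, (E (r + 1) s i j) ^ (1 / t) := by
      refine Finset.prod_congr rfl fun s _ => ?_
      rw [hEsucc r s]
      rfl

end PowEntry

/-- for `t ∈ [1,m]` and the cyclic products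
`P_i = A_i^{(t)} ⋯ A_m^{(t)} A_1^{(t)} ⋯ A_{i-1}^{(t)}`,
`‖(A₁∘⋯∘A_m)^m‖ ≤ ‖P₁^{(1/t)}∘⋯∘P_m^{(1/t)}‖ ≤ (‖P₁‖⋯‖P_m‖)^{1/t}
  ≤ (‖(A₁A₂⋯A_m)^{(t)}‖‖(A₂⋯A_mA₁)^{(t)}‖⋯‖(A_mA₁⋯A_{m-1})^{(t)}‖)^{1/t}
  ≤ ‖A₁A₂⋯A_m‖‖A₂⋯A_mA₁‖⋯‖A_mA₁⋯A_{m-1}‖`. -/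
theorem norm_hadamard_pow_le_cyclic_chain
    (p : ℝ≥0∞) [Fact (1 ≤ p)] (hp : p ≠ ∞) (m : ℕ) (hm : 0 < m)
    (A : Fin m → ℕ → ℕ → ℝ) (hA : ∀ k i j, 0 ≤ A k i j)
    (T : Fin m → lpSeq p →L[ℝ] lpSeq p) (hT : ∀ k, Represents p (A k) (T k))
    (t : ℝ) (ht1 : 1 ≤ t) (htm : t ≤ m) :
    ∃ (H Q : lpSeq p →L[ℝ] lpSeq p) (S V : Fin m → lpSeq p →L[ℝ] lpSeq p),
      Represents p (hadProd A) H ∧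
      Represents p
        (hadProd fun i => hadPow (cycMatProd (fun k => hadPow (A k) t) i) (1 / t)) Q ∧
      (∀ k, Represents p (hadPow (A k) t) (S k)) ∧
      (∀ i, Represents p (hadPow (cycMatProd A i) t) (V i)) ∧
      ‖H ^ m‖ ≤ ‖Q‖ ∧
      ‖Q‖ ≤ (∏ i, ‖cycOpProd S i‖) ^ (1 / t) ∧
      (∏ i, ‖cycOpProd S i‖) ^ (1 / t) ≤ (∏ i, ‖V i‖) ^ (1 / t) ∧
      (∏ i, ‖V i‖) ^ (1 / t) ≤ ∏ i, ‖cycOpProd T i‖ := by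
  haveI : NeZero m := ⟨hm.ne'⟩
  have htpos : (0 : ℝ) < t := by linarith
  have htne : t ≠ 0 := htpos.ne'
  have hm' : ((m : ℝ)) ≠ 0 := Nat.cast_ne_zero.2 hm.ne'
  -- the operators S k representing the Hadamard powers A k ^(t)
  choose S hS hSnorm using fun k : Fin m => represents_hadPow hp (hA k) (hT k) ht1
  -- cyclic products of the Hadamard powers
  have hPmnn : ∀ i : Fin m, ∀ a b, 0 ≤ cycMatProd (fun k => hadPow (A k) t) i a b := by
    intro i
    refine matListProd_nonneg ?_
    intro N hN; rw [List.mem_ofFn] at hN; obtain ⟨k, rfl⟩ := hN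
    exact hadPow_nonneg (hA _) t
  have hPmrep : ∀ i, Represents p (cycMatProd (fun k => hadPow (A k) t) i) (cycOpProd S i) :=
    fun i => represents_ofFn hp (fun k => hadPow (A (i + k)) t) (fun k => S (i + k))
      (fun k => hadPow_nonneg (hA _) t) (fun k => hS _)
  -- the cyclic products of the original matrices
  have hcycnn : ∀ i : Fin m, ∀ a b, 0 ≤ cycMatProd A i a b := by
    intro i
    refine matListProd_nonneg ?_
    intro N hN; rw [List.mem_ofFn] at hN; obtain ⟨k, rfl⟩ := hN
    exact hA _
  have hTcyc : ∀ i, Represents p (cycMatProd A i) (cycOpProd T i) :=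
    fun i => represents_ofFn hp (fun k => A (i + k)) (fun k => T (i + k))
      (fun k => hA _) (fun k => hT _)
  -- operators for the (m/t) Hadamard powers of the cyclic products
  have hs2 : 1 ≤ (m : ℝ) / t := (one_le_div htpos).2 htm
  choose Bop hBrep hBnorm using fun i : Fin m =>
    represents_hadPow hp (hPmnn i) (hPmrep i) hs2
  -- the operator Q
  obtain ⟨Q, hQrep, hQnorm⟩ := represents_geom_mean hp hm
    (fun i => hadPow (cycMatProd (fun k => hadPow (A k) t) i) ((m : ℝ) / t))
    (fun i => hadPow_nonneg (hPmnn i) _) Bop hBrep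
  have hmx : (hadProd fun s => hadPow
        (hadPow (cycMatProd (fun k => hadPow (A k) t) s) ((m : ℝ) / t)) (1 / (m : ℝ)))
      = hadProd fun i => hadPow (cycMatProd (fun k => hadPow (A k) t) i) (1 / t) := by
    refine congrArg hadProd (funext fun s => funext fun i => funext fun j => ?_)
    show (cycMatProd (fun k => hadPow (A k) t) s i j ^ ((m : ℝ) / t)) ^ (1 / (m : ℝ))
      = cycMatProd (fun k => hadPow (A k) t) s i j ^ (1 / t)
    rw [← Real.rpow_mul (hPmnn s i j)]
    congr 1
    field_simp
  rw [hmx] at hQrep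
  -- the operator H
  have hHentry : ∀ i j, hadProd A i j ≤ (∏ k ∈ Finset.univ.erase 0, ‖T k‖) * A 0 i j := by
    intro i j
    have h1 : A 0 i j * (∏ k ∈ Finset.univ.erase 0, A k i j) = hadProd A i j :=
      Finset.mul_prod_erase Finset.univ (fun k => A k i j) (Finset.mem_univ 0)
    rw [← h1, mul_comm]
    refine mul_le_mul_of_nonneg_right ?_ (hA 0 i j)
    exact Finset.prod_le_prod (fun k _ => hA k i j)
      (fun k _ => (hT k).entry_le_norm hp (hA k) i j)
  obtain ⟨H, hHrep, hHnorm⟩ := represents_dominated hp (hA 0) (hadProd_nonneg hA) (hT 0)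
    (Finset.prod_nonneg fun k _ => norm_nonneg _) hHentry
  -- the operators V i
  choose V hVrep hVnorm using fun i : Fin m =>
    represents_hadPow hp (hcycnn i) (hTcyc i) ht1
  refine ⟨H, Q, S, V, hHrep, hQrep, hS, hVrep, ?_, ?_, ?_, ?_⟩
  · -- ‖H ^ m‖ ≤ ‖Q‖
    have hHm : Represents p (matListProd (List.replicate m (hadProd A))) (H ^ m) :=
      represents_replicate hp (hadProd_nonneg hA) hHrep m
    refine opNorm_le_of_entrywise hp ?_ hHm hQrep ?_
    · exact matListProd_nonneg fun X hX => by
        rw [List.eq_of_mem_replicate hX]; exact hadProd_nonneg hA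
    · intro i j
      have h1 := pow_entry_le hp A hA ht1 htm H hHrep S hS m i j
      open Fin.NatCast in
      have hEP : ∀ s : Fin m,
          (matListProd (List.ofFn fun l : Fin m => hadPow (A (s + ((l : ℕ) : Fin m))) t))
          = cycMatProd (fun k => hadPow (A k) t) s := by
        intro s
        refine congrArg matListProd (congrArg List.ofFn (funext fun l => ?_))
        show hadPow (A (s + ((l : ℕ) : Fin m))) t = hadPow (A (s + l)) t
        rw [Fin.cast_val_eq_self]
      refine h1.trans (le_of_eq ?_)
      open Fin.NatCast in
      show (∏ s : Fin m, (matListProd (List.ofFn fun l : Fin m =>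
          hadPow (A (s + ((l : ℕ) : Fin m))) t) i j) ^ (1 / t))
        = ∏ s : Fin m, cycMatProd (fun k => hadPow (A k) t) s i j ^ (1 / t)
      exact Finset.prod_congr rfl fun s _ => by rw [hEP s]
  · -- ‖Q‖ ≤ (∏ ‖cycOpProd S i‖) ^ (1/t)
    refine hQnorm.trans ?_
    have h1 : (∏ s, ‖Bop s‖ ^ (1 / (m : ℝ)))
        ≤ ∏ s, (‖cycOpProd S s‖ ^ ((m : ℝ) / t)) ^ (1 / (m : ℝ)) := by
      refine Finset.prod_le_prod (fun s _ => Real.rpow_nonneg (norm_nonneg _) _)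
        (fun s _ => Real.rpow_le_rpow (norm_nonneg _) (hBnorm s) (by positivity))
    refine h1.trans (le_of_eq ?_)
    have h2 : ∀ s : Fin m, (‖cycOpProd S s‖ ^ ((m : ℝ) / t)) ^ (1 / (m : ℝ))
        = ‖cycOpProd S s‖ ^ (1 / t) := by
      intro s
      rw [← Real.rpow_mul (norm_nonneg _)]
      congr 1
      field_simp
    rw [Finset.prod_congr rfl fun s _ => h2 s]
    exact Real.finset_prod_rpow _ _ (fun s _ => norm_nonneg _) _
  · -- middle rpow monotonicity
    refine Real.rpow_le_rpow (Finset.prod_nonneg fun s _ => norm_nonneg _) ?_ (by positivity)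
    refine Finset.prod_le_prod (fun s _ => norm_nonneg _) (fun i _ => ?_)
    refine opNorm_le_of_entrywise hp (hPmnn i) (hPmrep i) (hVrep i) ?_
    intro a b
    have h1 := listProd_hadPow_le hp ht1 (fun k => A (i + k)) (fun k => T (i + k))
      (fun k => S (i + k)) (fun k => hA _) (fun k => hT _) (fun k => hS _) a b
    exact h1
  · -- last inequality
    have h1 : (∏ i, ‖V i‖) ≤ ∏ i, ‖cycOpProd T i‖ ^ t :=
      Finset.prod_le_prod (fun i _ => norm_nonneg _) (fun i _ => hVnorm i)
    rw [Real.finset_prod_rpow _ _ (fun i _ => norm_nonneg _) t] at h1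
    have h2 := Real.rpow_le_rpow (Finset.prod_nonneg fun i _ => norm_nonneg _) h1
      (by positivity : (0:ℝ) ≤ 1 / t)
    rwa [real_rpow_rpow_inv (Finset.prod_nonneg fun i _ => norm_nonneg _) htne] at h2
end
end

section
/- Let A_1, ..., A_m be non-negative matrices that define bounded operators on ℓ², and for i = 1, ..., m set P_i = A_i^{(m)} A_{i+1}^{(m)} ⋯ A_m^{(m)} A_1^{(m)} A_2^{(m)} ⋯ A_{i-1}^{(m)} (the cyclic product of the Hadamard m-th powers starting at index i). Then w((A_1 ∘ ⋯ ∘ A_m)^m) ≤ w(P_1^{(1/m)} ∘ ⋯ ∘ P_m^{(1/m)}) ≤ (w(P_1) ⋯ w(P_m))^{1/m} ≤ (w((A_1 A_2 ⋯ A_m)^{(m)}) · w((A_2 ⋯ A_m A_1)^{(m)}) ⋯ w((A_m A_1 ⋯ A_{m-1})^{(m)}))^{1/m}. -/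
open scoped ENNReal NNReal BigOperators InnerProductSpace

noncomputable section

namespace Aux

abbrev L2 := lpSeq 2

lemma fact2 : Fact ((1:ℝ≥0∞) ≤ 2) := ⟨one_le_two⟩
attribute [local instance] fact2

/-- Summability of a nonneg real sequence iff ENNReal tsum finite. -/
lemma summable_iff_ofReal {f : ℕ → ℝ} (hf : ∀ i, 0 ≤ f i) :
    Summable f ↔ ∑' i, ENNReal.ofReal (f i) ≠ ⊤ := by
  have h1 : Summable f ↔ Summable fun i => (f i).toNNReal := by
    constructor
    · intro h
      exact NNReal.summable_coe.mp (by
        refine h.congr fun i => ?_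
        simp [Real.coe_toNNReal _ (hf i)])
    · intro h
      have := NNReal.summable_coe.mpr h
      refine this.congr fun i => ?_
      simp [Real.coe_toNNReal _ (hf i)]
  rw [h1, ← ENNReal.tsum_coe_ne_top_iff_summable]
  have : ∀ i, ENNReal.ofReal (f i) = ((f i).toNNReal : ℝ≥0∞) := fun i => rfl
  simp only [this]

lemma tsum_ofReal {f : ℕ → ℝ} (hf : ∀ i, 0 ≤ f i) (h : Summable f) :
    ENNReal.ofReal (∑' i, f i) = ∑' i, ENNReal.ofReal (f i) :=
  ENNReal.ofReal_tsum_of_nonneg hf h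

/-- `ofReal |∑' g| ≤ ∑' ofReal |g|`, with no summability assumption. -/
lemma ofReal_abs_tsum_le (g : ℕ → ℝ) :
    ENNReal.ofReal |∑' j, g j| ≤ ∑' j, ENNReal.ofReal |g j| := by
  by_cases h : Summable fun j => |g j|
  · have hg : Summable g := summable_abs_iff.mp h
    have hb : |∑' j, g j| ≤ ∑' j, |g j| := by
      have := norm_tsum_le_tsum_norm (f := g) (by simpa [Real.norm_eq_abs] using h)
      simpa [Real.norm_eq_abs] using this
    exact le_of_le_of_eq (ENNReal.ofReal_le_ofReal hb) (tsum_ofReal (fun i => abs_nonneg _) h)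
  · have : ∑' j, ENNReal.ofReal |g j| = ⊤ := by
      by_contra hne
      exact h ((summable_iff_ofReal fun i => abs_nonneg _).mpr hne)
    simp [this]

/-- membership in ℓ² by domination -/
lemma memℓp_of_le {f g : ℕ → ℝ} (hg : Memℓp g 2) (h : ∀ i, |f i| ≤ |g i|) : Memℓp f 2 := by
  apply memℓp_gen
  have hs := hg.summable (p := 2) (by norm_num)
  refine hs.of_nonneg_of_le (fun i => ?_) (fun i => ?_)
  · positivity
  · have h2 : (2:ℝ≥0∞).toReal = 2 := by norm_num
    rw [h2]
    have : |f i| ^ (2:ℝ) ≤ |g i| ^ (2:ℝ) :=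
      Real.rpow_le_rpow (abs_nonneg _) (h i) (by norm_num)
    simpa [Real.norm_eq_abs] using this

def mkLp (f : ℕ → ℝ) (hf : Memℓp f 2) : L2 := ⟨f, hf⟩

@[simp] lemma mkLp_apply (f : ℕ → ℝ) (hf : Memℓp f 2) (i : ℕ) : (mkLp f hf) i = f i := rfl

def absLp (f : L2) : L2 := mkLp (fun i => |f i|) (memℓp_of_le (lp.memℓp f) (fun i => by simp))

@[simp] lemma absLp_apply (f : L2) (i : ℕ) : absLp f i = |f i| := rfl

lemma norm_le_norm_of_le {f g : L2} (h : ∀ i, |f i| ≤ |g i|) : ‖f‖ ≤ ‖g‖ := by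
  refine lp.norm_le_of_forall_sum_le (by norm_num) (norm_nonneg g) fun s => ?_
  calc ∑ i ∈ s, ‖f i‖ ^ (2:ℝ≥0∞).toReal ≤ ∑ i ∈ s, ‖g i‖ ^ (2:ℝ≥0∞).toReal := by
        refine Finset.sum_le_sum fun i _ => ?_
        have h2 : (2:ℝ≥0∞).toReal = 2 := by norm_num
        rw [h2]
        have : |f i| ^ (2:ℝ) ≤ |g i| ^ (2:ℝ) :=
          Real.rpow_le_rpow (abs_nonneg _) (h i) (by norm_num)
        simpa [Real.norm_eq_abs] using this
    _ ≤ ‖g‖ ^ (2:ℝ≥0∞).toReal := lp.sum_rpow_le_norm_rpow (by norm_num) g s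

lemma norm_absLp (f : L2) : ‖absLp f‖ = ‖f‖ :=
  le_antisymm (norm_le_norm_of_le fun i => by simp) (norm_le_norm_of_le fun i => by simp)

def posLp (f : L2) : L2 := mkLp (fun i => max (f i) 0)
  (memℓp_of_le (lp.memℓp f) (fun i => by
    rw [abs_of_nonneg (le_max_right _ _)]
    exact max_le (le_abs_self _) (abs_nonneg _)))

def negLp (f : L2) : L2 := mkLp (fun i => max (-f i) 0)
  (memℓp_of_le (lp.memℓp f) (fun i => by
    rw [abs_of_nonneg (le_max_right _ _)]
    exact max_le (neg_le_abs _) (abs_nonneg _)))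

lemma posLp_sub_negLp (f : L2) : posLp f - negLp f = f := by
  apply lp.ext
  rw [lp.coeFn_sub]
  funext i
  simp only [Pi.sub_apply, posLp, negLp, mkLp_apply]
  rcases le_total (f i) 0 with h | h
  · simp [max_eq_right h, max_eq_left (neg_nonneg.mpr h)]
  · simp [max_eq_left h, max_eq_right (neg_nonpos.mpr h)]

lemma posLp_nonneg (f : L2) (i : ℕ) : 0 ≤ posLp f i := le_max_right _ _
lemma negLp_nonneg (f : L2) (i : ℕ) : 0 ≤ negLp f i := le_max_right _ _

end Aux

namespace Aux

def eOf (a : ℕ → ℕ → ℝ) : ℕ → ℕ → ℝ≥0∞ := fun i j => ENNReal.ofReal (a i j)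

def eMul (M N : ℕ → ℕ → ℝ≥0∞) : ℕ → ℕ → ℝ≥0∞ := fun i j => ∑' k, M i k * N k j

def eId : ℕ → ℕ → ℝ≥0∞ := fun i j => if i = j then 1 else 0

def eListProd : List (ℕ → ℕ → ℝ≥0∞) → ℕ → ℕ → ℝ≥0∞
  | [] => eId
  | M :: l => eMul M (eListProd l)

def eApply (M : ℕ → ℕ → ℝ≥0∞) (v : ℕ → ℝ≥0∞) (i : ℕ) : ℝ≥0∞ := ∑' j, M i j * v j

def eAbs (f : L2) : ℕ → ℝ≥0∞ := fun i => ENNReal.ofReal |f i|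

def quadForm (M : ℕ → ℕ → ℝ≥0∞) (v : ℕ → ℝ≥0∞) : ℝ≥0∞ := ∑' i, eApply M v i * v i

/-- nonneg entries of represented operator applied to nonneg vector -/
lemma rep_apply_nonneg {a : ℕ → ℕ → ℝ} {Ta : L2 →L[ℝ] L2} (ha : ∀ i j, 0 ≤ a i j)
    (hTa : Represents 2 a Ta) (x : L2) (hx : ∀ j, 0 ≤ x j) (i : ℕ) : 0 ≤ Ta x i :=
  (hTa x i).nonneg fun j => mul_nonneg (ha i j) (hx j)

/-- F1: ENNReal row sum of represented operator on nonneg vector -/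
lemma rep_row_ofReal {a : ℕ → ℕ → ℝ} {Ta : L2 →L[ℝ] L2} (ha : ∀ i j, 0 ≤ a i j)
    (hTa : Represents 2 a Ta) (x : L2) (hx : ∀ j, 0 ≤ x j) (i : ℕ) :
    ∑' j, eOf a i j * ENNReal.ofReal (x j) = ENNReal.ofReal (Ta x i) := by
  have hsum := hTa x i
  have h1 : ∀ j, eOf a i j * ENNReal.ofReal (x j) = ENNReal.ofReal (a i j * x j) := fun j =>
    (ENNReal.ofReal_mul (ha i j)).symm
  rw [tsum_congr h1, ← tsum_ofReal (fun j => mul_nonneg (ha i j) (hx j)) hsum.summable,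
    hsum.tsum_eq]

/-- entries of a represented nonneg matrix are bounded by the operator norm -/
lemma entry_le_norm {a : ℕ → ℕ → ℝ} {Ta : L2 →L[ℝ] L2} (ha : ∀ i j, 0 ≤ a i j)
    (hTa : Represents 2 a Ta) (i j : ℕ) : a i j ≤ ‖Ta‖ := by
  set e : L2 := lp.single 2 j (1:ℝ) with he
  have happ : Ta e i = a i j := by
    have h := hTa e i
    have hfun : (fun k => a i k * e k) = fun k => if k = j then a i j else 0 := by
      funext k
      by_cases hk : k = j
      · subst hk
        simp [he, lp.single_apply_self (E := fun _ : ℕ => ℝ) 2 _ (1:ℝ)]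
      · simp [he, lp.single_apply_ne (E := fun _ : ℕ => ℝ) 2 j (1:ℝ) hk, hk]
    rw [hfun] at h
    exact ((hasSum_ite_eq j (a i j)).unique h).symm
  have h1 : a i j ≤ ‖Ta e‖ := by
    rw [← happ]
    exact le_trans (le_abs_self _) (lp.norm_apply_le_norm (by norm_num) (Ta e) i)
  refine h1.trans ?_
  have h2 : ‖e‖ = 1 := by
    rw [he]
    have := lp.norm_single (E := fun _ : ℕ => ℝ) (p := 2) (by norm_num) j (1:ℝ)
    simpa using this
  calc ‖Ta e‖ ≤ ‖Ta‖ * ‖e‖ := Ta.le_opNorm e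
    _ = ‖Ta‖ := by rw [h2, mul_one]

/-- extension: Represents follows from the nonneg case -/
lemma represents_of_nonneg {c : ℕ → ℕ → ℝ} {C : L2 →L[ℝ] L2}
    (h : ∀ x : L2, (∀ j, 0 ≤ x j) → ∀ i, HasSum (fun j => c i j * x j) (C x i)) :
    Represents 2 c C := by
  intro x i
  have hx : x = posLp x - negLp x := (posLp_sub_negLp x).symm
  have hp := h (posLp x) (posLp_nonneg x) i
  have hn := h (negLp x) (negLp_nonneg x) i
  have hsub := hp.sub hn
  have h1 : ∀ j, c i j * posLp x j - c i j * negLp x j = c i j * x j := by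
    intro j
    have : posLp x j - negLp x j = x j := by
      conv_rhs => rw [hx]
      rw [lp.coeFn_sub]; rfl
    rw [← mul_sub, this]
  have h2 : C (posLp x) i - C (negLp x) i = C x i := by
    conv_rhs => rw [hx]
    rw [map_sub, lp.coeFn_sub]
    rfl
  simpa [h1, h2] using hsub

lemma rep_smul {a : ℕ → ℕ → ℝ} {Ta : L2 →L[ℝ] L2} (hTa : Represents 2 a Ta) (r : ℝ) :
    Represents 2 (fun i j => r * a i j) (r • Ta) := by
  intro x i
  have := (hTa x i).mul_left r
  have happ : (r • Ta) x i = r * Ta x i := by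
    rw [ContinuousLinearMap.smul_apply, lp.coeFn_smul]; rfl
  rw [happ]
  simpa [mul_assoc] using this

lemma rep_add {a b : ℕ → ℕ → ℝ} {Ta Tb : L2 →L[ℝ] L2} (hTa : Represents 2 a Ta)
    (hTb : Represents 2 b Tb) :
    Represents 2 (fun i j => a i j + b i j) (Ta + Tb) := by
  intro x i
  have := (hTa x i).add (hTb x i)
  have happ : (Ta + Tb) x i = Ta x i + Tb x i := by
    rw [ContinuousLinearMap.add_apply, lp.coeFn_add]; rfl
  rw [happ]
  simpa [add_mul] using this

lemma rep_sum {ι : Type*} (s : Finset ι) (a : ι → ℕ → ℕ → ℝ) (Ta : ι → L2 →L[ℝ] L2)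
    (h : ∀ k ∈ s, Represents 2 (a k) (Ta k)) :
    Represents 2 (fun i j => ∑ k ∈ s, a k i j) (∑ k ∈ s, Ta k) := by
  classical
  induction s using Finset.induction with
  | empty =>
    intro x i
    simp only [Finset.sum_empty]
    have : ((0 : L2 →L[ℝ] L2) x) i = 0 := by
      rw [ContinuousLinearMap.zero_apply]
      exact lp.coeFn_zero (E := fun _ : ℕ => ℝ) (p := 2) ▸ rfl
    rw [this]
    simpa using hasSum_zero
  | @insert k s' hni ih =>
    intro x i
    have h1 := (h k (Finset.mem_insert_self k s') x i)
    have h2 := ih (fun k hk => h k (Finset.mem_insert_of_mem hk)) x i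
    have := h1.add h2
    simp only [Finset.sum_insert hni]
    have happ : ((Ta k + ∑ l ∈ s', Ta l) x) i = (Ta k) x i + (∑ l ∈ s', Ta l) x i := by
      rw [ContinuousLinearMap.add_apply, lp.coeFn_add]; rfl
    rw [happ]
    simpa [add_mul] using this

lemma rep_one : Represents 2 idMat (1 : L2 →L[ℝ] L2) := by
  intro x i
  have : (fun j => idMat i j * x j) = fun j => if j = i then x i else 0 := by
    funext j
    by_cases hj : j = i
    · subst hj; simp [idMat]
    · simp [idMat, hj, Ne.symm hj]
  rw [this]
  have happ : ((1 : L2 →L[ℝ] L2) x) i = x i := rfl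
  rw [happ]
  exact hasSum_ite_eq i (x i)


/-- DOM: domination gives existence of a represented operator. -/
lemma exists_rep_of_le {b c : ℕ → ℕ → ℝ} {C : L2 →L[ℝ] L2}
    (hb : ∀ i j, 0 ≤ b i j) (hbc : ∀ i j, b i j ≤ c i j) (hC : Represents 2 c C) :
    ∃ B : L2 →L[ℝ] L2, Represents 2 b B := by
  have hc : ∀ i j, 0 ≤ c i j := fun i j => (hb i j).trans (hbc i j)
  -- summability of rows against any x
  have hrow : ∀ (x : L2) (i : ℕ), Summable fun j => b i j * x j := by
    intro x i
    rw [← summable_abs_iff]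
    have hs : Summable fun j => c i j * absLp x j := (hC (absLp x) i).summable
    refine hs.of_nonneg_of_le (fun j => abs_nonneg _) fun j => ?_
    rw [abs_mul]
    exact mul_le_mul ((abs_of_nonneg (hb i j)).le.trans (hbc i j))
      (le_of_eq rfl) (abs_nonneg _) (hc i j)
  -- pointwise bound
  have hbd : ∀ (x : L2) (i : ℕ), |∑' j, b i j * x j| ≤ C (absLp x) i := by
    intro x i
    have h1 : |∑' j, b i j * x j| ≤ ∑' j, |b i j * x j| := by
      have h0 : Summable fun j => ‖b i j * x j‖ := summable_abs_iff.mpr (hrow x i)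
      have := norm_tsum_le_tsum_norm h0
      simpa only [Real.norm_eq_abs] using this
    refine h1.trans ?_
    rw [← (hC (absLp x) i).tsum_eq]
    refine Summable.tsum_le_tsum (fun j => ?_) (summable_abs_iff.mpr (hrow x i)) (hC (absLp x) i).summable
    rw [abs_mul, abs_of_nonneg (hb i j)]
    exact mul_le_mul_of_nonneg_right (hbc i j) (abs_nonneg _)
  have hmem : ∀ x : L2, Memℓp (fun i => ∑' j, b i j * x j) 2 := by
    intro x
    refine memℓp_of_le (lp.memℓp (C (absLp x))) fun i => ?_
    refine (hbd x i).trans (le_abs_self _)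
  -- linear map
  set Blin : L2 →ₗ[ℝ] L2 :=
    { toFun := fun x => mkLp (fun i => ∑' j, b i j * x j) (hmem x)
      map_add' := by
        intro x y
        apply lp.ext
        rw [lp.coeFn_add (mkLp _ (hmem x))]
        funext i
        have hxy : ∀ j, b i j * (x + y) j = b i j * x j + b i j * y j := by
          intro j
          rw [lp.coeFn_add]
          simp [mul_add]
        simp only [mkLp_apply, Pi.add_apply]
        rw [tsum_congr hxy, Summable.tsum_add (hrow x i) (hrow y i)]
      map_smul' := by
        intro r x
        apply lp.ext
        rw [lp.coeFn_smul _ (mkLp _ (hmem x))]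
        funext i
        have hxr : ∀ j, b i j * (r • x) j = r * (b i j * x j) := by
          intro j
          rw [lp.coeFn_smul]
          simp [Pi.smul_apply, smul_eq_mul]; ring
        simp only [mkLp_apply, Pi.smul_apply, smul_eq_mul, RingHom.id_apply]
        rw [tsum_congr hxr, tsum_mul_left] } with hBlin
  have hBnorm : ∀ x : L2, ‖Blin x‖ ≤ ‖C‖ * ‖x‖ := by
    intro x
    have h1 : ‖Blin x‖ ≤ ‖C (absLp x)‖ := by
      refine norm_le_norm_of_le fun i => ?_
      have h2 := hbd x i
      have h3 : 0 ≤ C (absLp x) i :=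
        rep_apply_nonneg hc hC (absLp x) (fun j => abs_nonneg _) i
      calc |Blin x i| = |∑' j, b i j * x j| := rfl
        _ ≤ C (absLp x) i := h2
        _ ≤ |C (absLp x) i| := le_abs_self _
    refine h1.trans ?_
    calc ‖C (absLp x)‖ ≤ ‖C‖ * ‖absLp x‖ := C.le_opNorm _
      _ = ‖C‖ * ‖x‖ := by rw [norm_absLp]
  refine ⟨Blin.mkContinuous ‖C‖ hBnorm, ?_⟩
  intro x i
  exact (hrow x i).hasSum

/-- matrix product of represented nonneg matrices is represented by the operator product -/
lemma rep_matMul {a b : ℕ → ℕ → ℝ} {Ta Tb : L2 →L[ℝ] L2}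
    (ha : ∀ i j, 0 ≤ a i j) (hb : ∀ i j, 0 ≤ b i j)
    (hTa : Represents 2 a Ta) (hTb : Represents 2 b Tb) :
    Represents 2 (matMul a b) (Ta * Tb) ∧
      (∀ i j, eOf (matMul a b) i j = eMul (eOf a) (eOf b) i j) := by
  -- column of b is Tb applied to a basis vector
  have hcol : ∀ k j, b k j = Tb (lp.single 2 j (1:ℝ)) k := by
    intro k j
    set e : L2 := lp.single 2 j (1:ℝ) with he
    have h := hTb e k
    have hfun : (fun l => b k l * e l) =
        fun l => if l = j then b k j else 0 := by
      funext l
      by_cases hl : l = j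
      · subst hl
        simp [he, lp.single_apply_self (E := fun _ : ℕ => ℝ) 2 _ (1:ℝ)]
      · simp [he, lp.single_apply_ne (E := fun _ : ℕ => ℝ) 2 j (1:ℝ) hl, hl]
    rw [hfun] at h
    exact ((hasSum_ite_eq j (b k j)).unique h)
  have hmmsum : ∀ i j, Summable fun k => a i k * b k j := by
    intro i j
    have := (hTa (Tb (lp.single 2 j (1:ℝ))) i).summable
    refine this.congr fun k => ?_
    rw [← hcol k j]
  have hmm_nonneg : ∀ i j, 0 ≤ matMul a b i j := fun i j =>
    tsum_nonneg fun k => mul_nonneg (ha i k) (hb k j)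
  have heOf : ∀ i j, eOf (matMul a b) i j = eMul (eOf a) (eOf b) i j := by
    intro i j
    unfold eOf eMul matMul
    rw [tsum_ofReal (fun k => mul_nonneg (ha i k) (hb k j)) (hmmsum i j)]
    exact tsum_congr fun k => ENNReal.ofReal_mul (ha i k)
  refine ⟨?_, heOf⟩
  apply represents_of_nonneg
  intro x hx i
  -- ENNReal chain
  have hchain : ∑' j, eOf (matMul a b) i j * ENNReal.ofReal (x j)
      = ENNReal.ofReal (Ta (Tb x) i) := by
    calc ∑' j, eOf (matMul a b) i j * ENNReal.ofReal (x j)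
        = ∑' j, (∑' k, eOf a i k * eOf b k j) * ENNReal.ofReal (x j) := by
          exact tsum_congr fun j => by rw [heOf i j]; rfl
      _ = ∑' j, ∑' k, eOf a i k * eOf b k j * ENNReal.ofReal (x j) := by
          exact tsum_congr fun j => ENNReal.tsum_mul_right.symm
      _ = ∑' k, ∑' j, eOf a i k * eOf b k j * ENNReal.ofReal (x j) := ENNReal.tsum_comm
      _ = ∑' k, eOf a i k * ∑' j, eOf b k j * ENNReal.ofReal (x j) := by
          refine tsum_congr fun k => ?_
          rw [← ENNReal.tsum_mul_left]
          exact tsum_congr fun j => by ring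
      _ = ∑' k, eOf a i k * ENNReal.ofReal (Tb x k) := by
          exact tsum_congr fun k => by rw [rep_row_ofReal hb hTb x hx k]
      _ = ENNReal.ofReal (Ta (Tb x) i) := by
          have hTbx : ∀ k, 0 ≤ Tb x k := fun k => rep_apply_nonneg hb hTb x hx k
          exact rep_row_ofReal ha hTa (Tb x) hTbx i
  -- summability of the row
  have hrow : Summable fun j => matMul a b i j * x j := by
    rw [summable_iff_ofReal fun j => mul_nonneg (hmm_nonneg i j) (hx j)]
    have heq : ∀ j, ENNReal.ofReal (matMul a b i j * x j)
        = eOf (matMul a b) i j * ENNReal.ofReal (x j) := fun j =>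
      ENNReal.ofReal_mul (hmm_nonneg i j)
    rw [tsum_congr heq, hchain]
    exact ENNReal.ofReal_ne_top
  have htsum : ∑' j, matMul a b i j * x j = Ta (Tb x) i := by
    have h1 : ENNReal.ofReal (∑' j, matMul a b i j * x j) = ENNReal.ofReal (Ta (Tb x) i) := by
      rw [tsum_ofReal (fun j => mul_nonneg (hmm_nonneg i j) (hx j)) hrow, ← hchain]
      exact tsum_congr fun j => ENNReal.ofReal_mul (hmm_nonneg i j)
    have h2 : 0 ≤ ∑' j, matMul a b i j * x j :=
      tsum_nonneg fun j => mul_nonneg (hmm_nonneg i j) (hx j)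
    have h3 : 0 ≤ Ta (Tb x) i :=
      rep_apply_nonneg ha hTa (Tb x) (fun k => rep_apply_nonneg hb hTb x hx k) i
    exact (ENNReal.ofReal_eq_ofReal_iff h2 h3).mp h1
  have happ : (Ta * Tb) x i = Ta (Tb x) i := rfl
  rw [happ, ← htsum]
  exact hrow.hasSum

lemma matListProd_nonneg (l : List (ℕ → ℕ → ℝ)) (h : ∀ p ∈ l, ∀ i j, 0 ≤ p i j) :
    ∀ i j, 0 ≤ matListProd l i j := by
  induction l with
  | nil => intro i j; unfold matListProd idMat; positivity
  | cons a l ih =>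
    intro i j
    exact tsum_nonneg fun k => mul_nonneg (h a List.mem_cons_self i k)
      (ih (fun p hp => h p (List.mem_cons_of_mem a hp)) k j)

/-- list version: represents + eOf matching -/
lemma rep_matListProd (l : List ((ℕ → ℕ → ℝ) × (L2 →L[ℝ] L2)))
    (h : ∀ p ∈ l, (∀ i j, 0 ≤ p.1 i j) ∧ Represents 2 p.1 p.2) :
    Represents 2 (matListProd (l.map Prod.fst)) ((l.map Prod.snd).prod) ∧
      ∀ i j, eOf (matListProd (l.map Prod.fst)) i j
        = eListProd ((l.map Prod.fst).map eOf) i j := by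
  induction l with
  | nil =>
    constructor
    · simpa [matListProd] using rep_one
    · intro i j
      simp only [List.map_nil]
      unfold matListProd eListProd eOf eId idMat
      by_cases hij : i = j <;> simp [hij]
  | cons p l ih =>
    obtain ⟨ihrep, iheq⟩ := ih fun q hq => h q (List.mem_cons_of_mem p hq)
    obtain ⟨hp1, hp2⟩ := h p List.mem_cons_self
    have htail_nonneg : ∀ i j, 0 ≤ matListProd (l.map Prod.fst) i j :=
      matListProd_nonneg _ (by
        intro q hq i j
        obtain ⟨r, hr, rfl⟩ := List.mem_map.mp hq
        exact (h r (List.mem_cons_of_mem p hr)).1 i j)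
    obtain ⟨hrep, heq⟩ := rep_matMul hp1 htail_nonneg hp2 ihrep
    constructor
    · simpa [matListProd] using hrep
    · intro i j
      simp only [List.map_cons]
      show eOf (matMul p.1 (matListProd (l.map Prod.fst))) i j
        = eMul (eOf p.1) (eListProd ((l.map Prod.fst).map eOf)) i j
      rw [heq i j]
      unfold eMul
      exact tsum_congr fun k => by rw [iheq k j]


lemma eApply_eId (v : ℕ → ℝ≥0∞) (i : ℕ) : eApply eId v i = v i := by
  unfold eApply eId
  have h : (fun j => (if i = j then (1:ℝ≥0∞) else 0) * v j)
      = fun j => if j = i then v i else 0 := by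
    funext j
    by_cases h : j = i
    · subst h; simp
    · simp [h, Ne.symm h]
  rw [h, tsum_ite_eq]

lemma eApply_eMul (M N : ℕ → ℕ → ℝ≥0∞) (v : ℕ → ℝ≥0∞) (i : ℕ) :
    eApply (eMul M N) v i = eApply M (eApply N v) i := by
  unfold eApply eMul
  calc ∑' j, (∑' k, M i k * N k j) * v j
      = ∑' j, ∑' k, M i k * N k j * v j := tsum_congr fun j => ENNReal.tsum_mul_right.symm
    _ = ∑' k, ∑' j, M i k * N k j * v j := ENNReal.tsum_comm
    _ = ∑' k, M i k * ∑' j, N k j * v j := by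
        refine tsum_congr fun k => ?_
        rw [← ENNReal.tsum_mul_left]
        exact tsum_congr fun j => by ring

lemma eApply_mono {M N : ℕ → ℕ → ℝ≥0∞} {v w : ℕ → ℝ≥0∞}
    (hMN : ∀ i j, M i j ≤ N i j) (hvw : ∀ j, v j ≤ w j) (i : ℕ) :
    eApply M v i ≤ eApply N w i :=
  Summable.tsum_le_tsum (fun j => mul_le_mul' (hMN i j) (hvw j)) ENNReal.summable ENNReal.summable

lemma quadForm_mono {M N : ℕ → ℕ → ℝ≥0∞} {v : ℕ → ℝ≥0∞}
    (hMN : ∀ i j, M i j ≤ N i j) :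
    quadForm M v ≤ quadForm N v :=
  Summable.tsum_le_tsum (fun i => mul_le_mul' (eApply_mono hMN (fun _ => le_rfl) i) le_rfl)
    ENNReal.summable ENNReal.summable

/-- pointwise bound for a represented operator -/
lemma abs_op_apply_le {a : ℕ → ℕ → ℝ} {Ta : L2 →L[ℝ] L2} (ha : ∀ i j, 0 ≤ a i j)
    (hTa : Represents 2 a Ta) (x : L2) (i : ℕ) :
    ENNReal.ofReal |Ta x i| ≤ eApply (eOf a) (eAbs x) i := by
  rw [← (hTa x i).tsum_eq]
  refine (ofReal_abs_tsum_le _).trans ?_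
  unfold eApply eOf eAbs
  refine Summable.tsum_le_tsum (fun j => ?_) ENNReal.summable ENNReal.summable
  rw [abs_mul, abs_of_nonneg (ha i j), ENNReal.ofReal_mul (ha i j)]

/-- list version: pointwise bound for products of represented operators -/
lemma abs_listProd_apply_le (l : List ((ℕ → ℕ → ℝ) × (L2 →L[ℝ] L2)))
    (h : ∀ p ∈ l, (∀ i j, 0 ≤ p.1 i j) ∧ Represents 2 p.1 p.2) (x : L2) (i : ℕ) :
    ENNReal.ofReal |((l.map Prod.snd).prod) x i|
      ≤ eApply (eListProd ((l.map Prod.fst).map eOf)) (eAbs x) i := by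
  induction l generalizing x i with
  | nil =>
    simp only [List.map_nil, List.prod_nil]
    show ENNReal.ofReal |(1 : L2 →L[ℝ] L2) x i| ≤ eApply eId (eAbs x) i
    rw [eApply_eId, ContinuousLinearMap.one_apply]
    exact le_rfl
  | cons p l ih =>
    obtain ⟨hp1, hp2⟩ := h p List.mem_cons_self
    simp only [List.map_cons, List.prod_cons]
    show ENNReal.ofReal |(p.2 * (l.map Prod.snd).prod) x i|
      ≤ eApply (eMul (eOf p.1) (eListProd ((l.map Prod.fst).map eOf))) (eAbs x) i
    rw [eApply_eMul]
    set y : L2 := ((l.map Prod.snd).prod) x with hy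
    have h1 : ENNReal.ofReal |p.2 y i| ≤ eApply (eOf p.1) (eAbs y) i :=
      abs_op_apply_le hp1 hp2 y i
    have h2 : ∀ j, eAbs y j ≤ eApply (eListProd ((l.map Prod.fst).map eOf)) (eAbs x) j :=
      fun j => ih (fun q hq => h q (List.mem_cons_of_mem p hq)) x j
    exact h1.trans (eApply_mono (fun _ _ => le_rfl) h2 i)

/-- real inner product on L2 as tsum -/
lemma inner_L2 (f g : L2) : ⟪f, g⟫_ℝ = ∑' i, f i * g i := by
  rw [lp.inner_eq_tsum]
  exact tsum_congr fun i => by rw [RCLike.inner_apply]; simp [mul_comm]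

lemma summable_mul_L2 (f g : L2) : Summable fun i => f i * g i := by
  have h := lp.summable_inner (𝕜 := ℝ) f g
  refine h.congr fun i => ?_
  rw [RCLike.inner_apply]
  simp [mul_comm]

/-- quadratic form bound for an operator with pointwise bound -/
lemma ofReal_abs_inner_le {S : L2 →L[ℝ] L2} {M : ℕ → ℕ → ℝ≥0∞}
    (h : ∀ (x : L2) (i : ℕ), ENNReal.ofReal |S x i| ≤ eApply M (eAbs x) i) (f : L2) :
    ENNReal.ofReal |⟪S f, f⟫_ℝ| ≤ quadForm M (eAbs f) := by
  rw [inner_L2]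
  refine (ofReal_abs_tsum_le _).trans ?_
  unfold quadForm
  refine Summable.tsum_le_tsum (fun i => ?_) ENNReal.summable ENNReal.summable
  rw [abs_mul, ENNReal.ofReal_mul (abs_nonneg _)]
  exact mul_le_mul' (h f i) le_rfl

/-- quadratic form of a represented nonneg matrix at |f| -/
lemma quadForm_eOf {a : ℕ → ℕ → ℝ} {Ta : L2 →L[ℝ] L2} (ha : ∀ i j, 0 ≤ a i j)
    (hTa : Represents 2 a Ta) (f : L2) :
    quadForm (eOf a) (eAbs f) = ENNReal.ofReal ⟪Ta (absLp f), absLp f⟫_ℝ := by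
  have habs : ∀ j, (0:ℝ) ≤ absLp f j := fun j => abs_nonneg _
  have h1 : ∀ i, eApply (eOf a) (eAbs f) i = ENNReal.ofReal (Ta (absLp f) i) := by
    intro i
    have := rep_row_ofReal ha hTa (absLp f) habs i
    rw [← this]
    unfold eApply eAbs
    exact tsum_congr fun j => by rw [absLp_apply]
  unfold quadForm
  rw [inner_L2]
  have hsum : Summable fun i => Ta (absLp f) i * absLp f i := by
    have := summable_mul_L2 (Ta (absLp f)) (absLp f)
    exact this
  rw [tsum_ofReal (fun i => mul_nonneg (rep_apply_nonneg ha hTa _ habs i) (habs i)) hsum]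
  refine tsum_congr fun i => ?_
  rw [h1 i, ENNReal.ofReal_mul (rep_apply_nonneg ha hTa _ habs i)]
  rfl

lemma numRadius_nonneg (T : L2 →L[ℝ] L2) : 0 ≤ numRadius T :=
  Real.sSup_nonneg (by rintro r ⟨f, _, rfl⟩; exact abs_nonneg _)

lemma abs_inner_le_numRadius {T : L2 →L[ℝ] L2} {f : L2} (hf : ‖f‖ = 1) :
    |⟪T f, f⟫_ℝ| ≤ numRadius T := by
  refine le_csSup ⟨‖T‖, ?_⟩ ⟨f, hf, rfl⟩
  rintro r ⟨g, hg, rfl⟩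
  calc |⟪T g, g⟫_ℝ| ≤ ‖T g‖ * ‖g‖ := abs_real_inner_le_norm _ _
    _ ≤ ‖T‖ * ‖g‖ * ‖g‖ := by
        exact mul_le_mul_of_nonneg_right (T.le_opNorm g) (norm_nonneg _)
    _ = ‖T‖ := by rw [hg]; ring

lemma numRadius_le {T : L2 →L[ℝ] L2} {r : ℝ} (hr : 0 ≤ r)
    (h : ∀ f : L2, ‖f‖ = 1 → |⟪T f, f⟫_ℝ| ≤ r) : numRadius T ≤ r :=
  Real.sSup_le (by rintro s ⟨f, hf, rfl⟩; exact h f hf) hr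

/-- CMP: the master comparison lemma -/
lemma numRadius_le_numRadius {S Tb : L2 →L[ℝ] L2} {M : ℕ → ℕ → ℝ≥0∞} {b : ℕ → ℕ → ℝ}
    (hb : ∀ i j, 0 ≤ b i j) (hTb : Represents 2 b Tb)
    (hform : ∀ f : L2, ‖f‖ = 1 → ENNReal.ofReal |⟪S f, f⟫_ℝ| ≤ quadForm M (eAbs f))
    (hM : ∀ i j, M i j ≤ eOf b i j) :
    numRadius S ≤ numRadius Tb := by
  refine numRadius_le (numRadius_nonneg Tb) fun f hf => ?_
  have h1 : ENNReal.ofReal |⟪S f, f⟫_ℝ| ≤ ENNReal.ofReal (numRadius Tb) := by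
    refine (hform f hf).trans ?_
    refine (quadForm_mono hM).trans ?_
    rw [quadForm_eOf hb hTb f]
    refine ENNReal.ofReal_le_ofReal ?_
    have habs1 : ‖absLp f‖ = 1 := by rw [norm_absLp]; exact hf
    exact (le_abs_self _).trans (abs_inner_le_numRadius habs1)
  exact (ENNReal.ofReal_le_ofReal_iff (numRadius_nonneg Tb)).mp h1


/-- Hölder for tsums over a countable type with measurable singletons. -/
lemma tsum_prod_rpow_le {α : Type*} [Countable α] [MeasurableSpace α]
    [MeasurableSingletonClass α]
    {ι : Type*} (s : Finset ι) (f : ι → α → ℝ≥0∞) {p : ι → ℝ}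
    (hp : ∑ i ∈ s, p i = 1) (h2p : ∀ i ∈ s, 0 ≤ p i) :
    ∑' a, ∏ i ∈ s, f i a ^ p i ≤ ∏ i ∈ s, (∑' a, f i a) ^ p i := by
  have h := ENNReal.lintegral_prod_norm_pow_le (μ := MeasureTheory.Measure.count) s
    (f := f) (fun i _ => (measurable_of_countable _).aemeasurable) hp h2p
  simpa [MeasureTheory.lintegral_count] using h

/-- `∑' xᵏ ≤ (∑' x)ᵏ` for `k ≥ 1` in `ℝ≥0∞`. -/
lemma tsum_pow_le {α : Type*} (x : α → ℝ≥0∞) {k : ℕ} (hk : 0 < k) :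
    ∑' a, x a ^ k ≤ (∑' a, x a) ^ k := by
  obtain ⟨n, rfl⟩ : ∃ n, k = n + 1 := ⟨k - 1, (Nat.succ_pred_eq_of_pos hk).symm⟩
  calc ∑' a, x a ^ (n + 1)
      ≤ ∑' a, (∑' b, x b) ^ n * x a := by
        refine Summable.tsum_le_tsum (fun a => ?_) ENNReal.summable ENNReal.summable
        rw [pow_succ]
        exact mul_le_mul' (pow_le_pow_left' (ENNReal.le_tsum a) n) le_rfl
    _ = (∑' b, x b) ^ n * ∑' a, x a := ENNReal.tsum_mul_left
    _ = (∑' a, x a) ^ (n + 1) := (pow_succ _ n).symm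

def powHad (M : ℕ → ℕ → ℝ≥0∞) (k : ℕ) : ℕ → ℕ → ℝ≥0∞ := fun i j => M i j ^ k

/-- I3: entrywise `∏ (Mᵢ^{(k)}) ≤ (∏ Mᵢ)^{(k)}` for list products. -/
lemma eListProd_powHad_le (k : ℕ) (hk : 0 < k) (L : List (ℕ → ℕ → ℝ≥0∞)) (i j : ℕ) :
    eListProd (L.map (fun M => powHad M k)) i j ≤ eListProd L i j ^ k := by
  induction L generalizing i j with
  | nil =>
    show eId i j ≤ eId i j ^ k
    unfold eId
    by_cases hij : i = j <;> simp [hij, hk.ne']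
  | cons M L ih =>
    show eMul (powHad M k) (eListProd (L.map (fun M => powHad M k))) i j
      ≤ eMul M (eListProd L) i j ^ k
    unfold eMul powHad
    calc ∑' l, M i l ^ k * eListProd (L.map (fun M => powHad M k)) l j
        ≤ ∑' l, M i l ^ k * eListProd L l j ^ k := by
          refine Summable.tsum_le_tsum (fun l => ?_) ENNReal.summable ENNReal.summable
          exact mul_le_mul' le_rfl (ih l j)
      _ = ∑' l, (M i l * eListProd L l j) ^ k := by
          exact tsum_congr fun l => (mul_pow _ _ _).symm
      _ ≤ (∑' l, M i l * eListProd L l j) ^ k := tsum_pow_le _ hk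


section KeyHolder

variable {m : ℕ} [NeZero m]

open Fin.NatCast

/-- partial cyclic products of Hadamard `m`-th powers (`r` factors, starting at `t`) -/
def Qf (B : Fin m → ℕ → ℕ → ℝ≥0∞) (t : Fin m) (r : ℕ) : ℕ → ℕ → ℝ≥0∞ :=
  eListProd (List.ofFn fun s : Fin r => powHad (B (t + ((s : ℕ) : Fin m))) m)

lemma Qf_succ (B : Fin m → ℕ → ℕ → ℝ≥0∞) (t : Fin m) (r : ℕ) :
    Qf B t (r + 1) = eMul (powHad (B t) m) (Qf B (t + 1) r) := by
  unfold Qf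
  have hlist : (List.ofFn fun s : Fin (r+1) => powHad (B (t + ((s : ℕ) : Fin m))) m)
      = powHad (B t) m ::
        (List.ofFn fun s : Fin r => powHad (B ((t + 1) + ((s : ℕ) : Fin m))) m) := by
    rw [List.ofFn_succ]
    congr 1
    · congr 1
      simp
    · congr 1
      funext s
      congr 2
      have : (((Fin.succ s : Fin (r+1)) : ℕ) : Fin m) = ((s : ℕ) : Fin m) + 1 := by
        rw [Fin.val_succ]
        push_cast
        ring
      rw [this]
      rw [← add_assoc, add_right_comm]
  rw [hlist]
  rfl

lemma key_holder (hm : 0 < m) (B : Fin m → ℕ → ℕ → ℝ≥0∞) :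
    ∀ (r : ℕ) (i j : ℕ),
      eListProd (List.replicate r (fun i j => ∏ t, B t i j)) i j
        ≤ ∏ t : Fin m, Qf B t r i j ^ (1 / (m : ℝ)) := by
  have hm' : (m : ℝ) ≠ 0 := Nat.cast_ne_zero.mpr hm.ne'
  -- `x = (x ^ m) ^ (1/m)`
  have hroot : ∀ x : ℝ≥0∞, (x ^ m) ^ (1 / (m:ℝ)) = x := by
    intro x
    rw [← ENNReal.rpow_natCast x m, ← ENNReal.rpow_mul]
    rw [mul_one_div, div_self hm', ENNReal.rpow_one]
  intro r
  induction r with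
  | zero =>
    intro i j
    show eId i j ≤ ∏ t : Fin m, Qf B t 0 i j ^ (1 / (m:ℝ))
    have hQ : ∀ t : Fin m, Qf B t 0 = eId := fun t => rfl
    simp only [hQ]
    unfold eId
    by_cases hij : i = j
    · simp [hij, ENNReal.one_rpow]
    · simp [hij]
  | succ r ih =>
    intro i j
    show eMul (fun i j => ∏ t, B t i j) (eListProd (List.replicate r _)) i j ≤ _
    unfold eMul
    calc ∑' l, (∏ t, B t i l) * eListProd (List.replicate r (fun i j => ∏ t, B t i j)) l j
        ≤ ∑' l, (∏ t, B t i l) * ∏ t : Fin m, Qf B t r l j ^ (1 / (m:ℝ)) := by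
          refine Summable.tsum_le_tsum (fun l => mul_le_mul' le_rfl (ih l j)) ENNReal.summable
            ENNReal.summable
      _ = ∑' l, (∏ t, B t i l) * ∏ t : Fin m, Qf B (t + 1) r l j ^ (1 / (m:ℝ)) := by
          refine tsum_congr fun l => ?_
          congr 1
          exact (Equiv.prod_comp (Equiv.addRight (1 : Fin m))
            (fun t => Qf B t r l j ^ (1 / (m:ℝ)))).symm
      _ = ∑' l, ∏ t : Fin m, (B t i l ^ m * Qf B (t + 1) r l j) ^ (1 / (m:ℝ)) := by
          refine tsum_congr fun l => ?_
          rw [← Finset.prod_mul_distrib]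
          refine Finset.prod_congr rfl fun t _ => ?_
          rw [ENNReal.mul_rpow_of_nonneg _ _ (by positivity), hroot]
      _ ≤ ∏ t : Fin m, (∑' l, B t i l ^ m * Qf B (t + 1) r l j) ^ (1 / (m:ℝ)) := by
          refine tsum_prod_rpow_le Finset.univ _ ?_ (fun _ _ => by positivity)
          simp [Finset.card_univ, mul_one_div, div_self hm']
      _ = ∏ t : Fin m, Qf B t (r + 1) i j ^ (1 / (m:ℝ)) := by
          refine Finset.prod_congr rfl fun t _ => ?_
          rw [Qf_succ]
          rfl

end KeyHolder


lemma quadForm_eq (M : ℕ → ℕ → ℝ≥0∞) (v : ℕ → ℝ≥0∞) :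
    quadForm M v = ∑' p : ℕ × ℕ, M p.1 p.2 * (v p.2 * v p.1) := by
  unfold quadForm eApply
  rw [ENNReal.tsum_prod (f := fun i j => M i j * (v j * v i))]
  refine tsum_congr fun i => ?_
  rw [← ENNReal.tsum_mul_right]
  exact tsum_congr fun j => by ring

lemma quadForm_prod_rpow_le {m : ℕ} (hm : 0 < m) (N : Fin m → ℕ → ℕ → ℝ≥0∞)
    (v : ℕ → ℝ≥0∞) :
    quadForm (fun i j => ∏ t, N t i j ^ (1 / (m:ℝ))) v
      ≤ ∏ t, quadForm (N t) v ^ (1 / (m:ℝ)) := by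
  have hm' : (m : ℝ) ≠ 0 := Nat.cast_ne_zero.mpr hm.ne'
  have hx : ∀ x : ℝ≥0∞, (x ^ (1 / (m:ℝ))) ^ m = x := by
    intro x
    rw [← ENNReal.rpow_natCast (x ^ (1 / (m:ℝ))) m, ← ENNReal.rpow_mul, one_div,
      inv_mul_cancel₀ hm', ENNReal.rpow_one]
  calc quadForm (fun i j => ∏ t, N t i j ^ (1 / (m:ℝ))) v
      = ∑' p : ℕ × ℕ, (∏ t, N t p.1 p.2 ^ (1 / (m:ℝ))) * (v p.2 * v p.1) :=
        quadForm_eq _ v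
    _ = ∑' p : ℕ × ℕ, ∏ t : Fin m, (N t p.1 p.2 * (v p.2 * v p.1)) ^ (1 / (m:ℝ)) := by
        refine tsum_congr fun p => ?_
        have h1 : ∀ t : Fin m, (N t p.1 p.2 * (v p.2 * v p.1)) ^ (1 / (m:ℝ))
            = N t p.1 p.2 ^ (1 / (m:ℝ)) * (v p.2 * v p.1) ^ (1 / (m:ℝ)) := fun t =>
          ENNReal.mul_rpow_of_nonneg _ _ (by positivity)
        rw [Finset.prod_congr rfl fun t _ => h1 t, Finset.prod_mul_distrib,
          Finset.prod_const, Finset.card_univ, Fintype.card_fin, hx]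
    _ ≤ ∏ t : Fin m, (∑' p : ℕ × ℕ, N t p.1 p.2 * (v p.2 * v p.1)) ^ (1 / (m:ℝ)) := by
        refine tsum_prod_rpow_le Finset.univ _ ?_ (fun _ _ => by positivity)
        simp only [Finset.sum_const, Finset.card_univ, Fintype.card_fin, nsmul_eq_mul,
          mul_one_div]
        rw [div_self hm']
    _ = ∏ t, quadForm (N t) v ^ (1 / (m:ℝ)) := by
        exact Finset.prod_congr rfl fun t _ => by rw [quadForm_eq]

end Aux

namespace Aux

lemma cycMatProd_nonneg {m : ℕ} (a : Fin m → ℕ → ℕ → ℝ) (ha : ∀ k i j, 0 ≤ a k i j)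
    (i : Fin m) : ∀ p q, 0 ≤ cycMatProd a i p q := by
  refine matListProd_nonneg _ ?_
  intro b hb p q
  obtain ⟨k, rfl⟩ := Set.mem_range.mp ((List.mem_ofFn' _ _).mp hb)
  exact ha _ p q

lemma rep_cyc {m : ℕ} (a : Fin m → ℕ → ℕ → ℝ) (Ta : Fin m → L2 →L[ℝ] L2)
    (ha : ∀ k i j, 0 ≤ a k i j) (hTa : ∀ k, Represents 2 (a k) (Ta k)) (i : Fin m) :
    Represents 2 (cycMatProd a i) (cycOpProd Ta i) ∧
      ∀ p q, eOf (cycMatProd a i) p q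
        = eListProd (List.ofFn fun k : Fin m => eOf (a (i + k))) p q := by
  have h := rep_matListProd (List.ofFn fun k : Fin m => (a (i + k), Ta (i + k))) (by
    intro p hp
    obtain ⟨k, rfl⟩ := Set.mem_range.mp ((List.mem_ofFn' _ _).mp hp)
    exact ⟨ha _, hTa _⟩)
  rw [List.map_ofFn, List.map_ofFn, List.map_ofFn] at h
  exact h

end Aux

/-- numerical radius version on `ℓ²` with `t = m`: for the cyclic products
`P_i = A_i^{(m)} ⋯ A_m^{(m)} A_1^{(m)} ⋯ A_{i-1}^{(m)}`,
`w((A₁∘⋯∘A_m)^m) ≤ w(P₁^{(1/m)}∘⋯∘P_m^{(1/m)}) ≤ (w(P₁)⋯w(P_m))^{1/m}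
  ≤ (w((A₁A₂⋯A_m)^{(m)}) w((A₂⋯A_mA₁)^{(m)}) ⋯ w((A_mA₁⋯A_{m-1})^{(m)}))^{1/m}`. -/
theorem numRadius_hadamard_pow_le_cyclic_chain
    (m : ℕ) (hm : 0 < m)
    (A : Fin m → ℕ → ℕ → ℝ) (hA : ∀ k i j, 0 ≤ A k i j)
    (T : Fin m → lpSeq 2 →L[ℝ] lpSeq 2) (hT : ∀ k, Represents 2 (A k) (T k)) :
    ∃ (H Q : lpSeq 2 →L[ℝ] lpSeq 2) (S V : Fin m → lpSeq 2 →L[ℝ] lpSeq 2),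
      Represents 2 (hadProd A) H ∧
      Represents 2
        (hadProd fun i =>
          hadPow (cycMatProd (fun k => hadPow (A k) (m : ℝ)) i) (1 / (m : ℝ))) Q ∧
      (∀ k, Represents 2 (hadPow (A k) (m : ℝ)) (S k)) ∧
      (∀ i, Represents 2 (hadPow (cycMatProd A i) (m : ℝ)) (V i)) ∧
      numRadius (H ^ m) ≤ numRadius Q ∧
      numRadius Q ≤ (∏ i, numRadius (cycOpProd S i)) ^ (1 / (m : ℝ)) ∧
      (∏ i, numRadius (cycOpProd S i)) ^ (1 / (m : ℝ)) ≤
        (∏ i, numRadius (V i)) ^ (1 / (m : ℝ)) := by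
  classical
  haveI : NeZero m := ⟨hm.ne'⟩
  have hm' : (m : ℝ) ≠ 0 := Nat.cast_ne_zero.mpr hm.ne'
  have hmR : (0:ℝ) ≤ 1 / (m:ℝ) := by positivity
  obtain ⟨n, hn⟩ : ∃ n, m = n + 1 := ⟨m - 1, (Nat.succ_pred_eq_of_pos hm).symm⟩
  have hpow_eq : ∀ x : ℝ, x ^ m = x ^ n * x := fun x => by rw [hn, pow_succ]
  set Am : Fin m → ℕ → ℕ → ℝ := fun k => hadPow (A k) (m : ℝ) with hAmdef
  have hApow : ∀ (k : Fin m) (i j : ℕ), Am k i j = A k i j ^ m := fun k i j =>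
    Real.rpow_natCast _ m
  have hAm_nonneg : ∀ (k : Fin m) (i j : ℕ), 0 ≤ Am k i j := fun k i j => by
    rw [hApow]; exact pow_nonneg (hA k i j) m
  have hAentry : ∀ (k : Fin m) (i j : ℕ), A k i j ≤ ‖T k‖ := fun k =>
    Aux.entry_le_norm (hA k) (hT k)
  -- existence of S
  have hSex : ∀ k, ∃ Sk : lpSeq 2 →L[ℝ] lpSeq 2, Represents 2 (Am k) Sk := by
    intro k
    refine Aux.exists_rep_of_le (hAm_nonneg k) (fun i j => ?_)
      (Aux.rep_smul (hT k) (‖T k‖ ^ n))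
    rw [hApow, hpow_eq]
    exact mul_le_mul_of_nonneg_right
      (pow_le_pow_left₀ (hA k i j) (hAentry k i j) n) (hA k i j)
  choose S hS using hSex
  -- cyclic products of Am
  have hcyc := fun i => Aux.rep_cyc Am S hAm_nonneg hS i
  have hPm_rep : ∀ i, Represents 2 (cycMatProd Am i) (cycOpProd S i) := fun i => (hcyc i).1
  have hPm_nonneg : ∀ (i : Fin m) (p q : ℕ), 0 ≤ cycMatProd Am i p q := fun i =>
    Aux.cycMatProd_nonneg Am hAm_nonneg i
  -- ENNReal bridge
  set B : Fin m → ℕ → ℕ → ℝ≥0∞ := fun t => Aux.eOf (A t) with hBdef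
  have heOfAm : ∀ k : Fin m, Aux.eOf (Am k) = Aux.powHad (B k) m := by
    intro k
    funext i j
    show ENNReal.ofReal (Am k i j) = ENNReal.ofReal (A k i j) ^ m
    rw [hApow, ENNReal.ofReal_pow (hA k i j)]
  have hPm_eOf : ∀ (i : Fin m) (p q : ℕ),
      Aux.eOf (cycMatProd Am i) p q = Aux.Qf B i m p q := by
    intro i p q
    rw [(hcyc i).2 p q]
    open Fin.NatCast in
    show Aux.eListProd (List.ofFn fun k : Fin m => Aux.eOf (Am (i + k))) p q
      = Aux.eListProd (List.ofFn fun s : Fin m =>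
          Aux.powHad (B (i + ((s : ℕ) : Fin m))) m) p q
    open Fin.NatCast in
    have hfun : (fun k : Fin m => Aux.eOf (Am (i + k)))
        = fun s : Fin m => Aux.powHad (B (i + ((s : ℕ) : Fin m))) m := by
      funext k
      rw [Fin.cast_val_eq_self k, heOfAm (i + k)]
    rw [hfun]
  -- existence of V
  have hTP := fun i => Aux.rep_cyc A T hA hT i
  have hcycA_nonneg : ∀ (i : Fin m) (p q : ℕ), 0 ≤ cycMatProd A i p q := fun i =>
    Aux.cycMatProd_nonneg A hA i
  have hVex : ∀ i, ∃ Vi : lpSeq 2 →L[ℝ] lpSeq 2,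
      Represents 2 (hadPow (cycMatProd A i) (m : ℝ)) Vi := by
    intro i
    refine Aux.exists_rep_of_le (fun p q => ?_) (fun p q => ?_)
      (Aux.rep_smul (hTP i).1 (‖cycOpProd T i‖ ^ n))
    · show (0:ℝ) ≤ cycMatProd A i p q ^ (m:ℝ)
      have := hcycA_nonneg i p q
      positivity
    · show cycMatProd A i p q ^ (m:ℝ) ≤ ‖cycOpProd T i‖ ^ n * cycMatProd A i p q
      rw [Real.rpow_natCast, hpow_eq]
      exact mul_le_mul_of_nonneg_right
        (pow_le_pow_left₀ (hcycA_nonneg i p q)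
          (Aux.entry_le_norm (hcycA_nonneg i) (hTP i).1 p q) n) (hcycA_nonneg i p q)
  choose V hV using hVex
  -- existence of Q
  set Qmat : ℕ → ℕ → ℝ :=
    hadProd fun i => hadPow (cycMatProd Am i) (1 / (m : ℝ)) with hQmatdef
  have hQmat_nonneg : ∀ p q, 0 ≤ Qmat p q := by
    intro p q
    exact Finset.prod_nonneg fun k _ => Real.rpow_nonneg (hPm_nonneg k p q) _
  have hQex : ∃ Qop : lpSeq 2 →L[ℝ] lpSeq 2, Represents 2 Qmat Qop := by
    refine Aux.exists_rep_of_le hQmat_nonneg (fun p q => ?_)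
      (Aux.rep_sum Finset.univ (fun k => cycMatProd Am k) (fun k => cycOpProd S k)
        (fun k _ => hPm_rep k))
    show ∏ k, cycMatProd Am k p q ^ (1/(m:ℝ)) ≤ ∑ k, cycMatProd Am k p q
    calc ∏ k, cycMatProd Am k p q ^ (1/(m:ℝ))
        ≤ ∑ k : Fin m, (1/(m:ℝ)) * cycMatProd Am k p q := by
          refine Real.geom_mean_le_arith_mean_weighted Finset.univ _ _
            (fun k _ => hmR) ?_ (fun k _ => hPm_nonneg k p q)
          rw [Finset.sum_const, Finset.card_univ, Fintype.card_fin, nsmul_eq_mul,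
            mul_one_div, div_self hm']
      _ ≤ ∑ k, cycMatProd Am k p q := by
          refine Finset.sum_le_sum fun k _ => ?_
          refine mul_le_of_le_one_left (hPm_nonneg k p q) ?_
          rw [div_le_one (by positivity)]
          exact_mod_cast Nat.one_le_cast.mpr hm
  obtain ⟨Qop, hQ⟩ := hQex
  -- existence of H
  have hHex : ∃ Hop : lpSeq 2 →L[ℝ] lpSeq 2, Represents 2 (hadProd A) Hop := by
    have hk0 : (⟨0, hm⟩ : Fin m) ∈ Finset.univ := Finset.mem_univ _
    refine Aux.exists_rep_of_le (fun p q => Finset.prod_nonneg fun k _ => hA k p q)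
      (fun p q => ?_)
      (Aux.rep_smul (hT ⟨0, hm⟩) (∏ k ∈ Finset.univ.erase ⟨0, hm⟩, ‖T k‖))
    show ∏ k, A k p q ≤ (∏ k ∈ Finset.univ.erase ⟨0, hm⟩, ‖T k‖) * A ⟨0, hm⟩ p q
    rw [← Finset.mul_prod_erase Finset.univ (fun k => A k p q) hk0, mul_comm]
    refine mul_le_mul_of_nonneg_right ?_ (hA _ p q)
    exact Finset.prod_le_prod (fun k _ => hA k p q) (fun k _ => hAentry k p q)
  obtain ⟨Hop, hH⟩ := hHex
  -- Inequality I
  have hIneq1 : numRadius (Hop ^ m) ≤ numRadius Qop := by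
    refine Aux.numRadius_le_numRadius
      (M := Aux.eListProd (List.replicate m (Aux.eOf (hadProd A))))
      hQmat_nonneg hQ ?_ ?_
    · intro f hf
      refine Aux.ofReal_abs_inner_le (fun x i => ?_) f
      have h := Aux.abs_listProd_apply_le (List.replicate m (hadProd A, Hop)) (by
        intro p hp
        rw [List.eq_of_mem_replicate hp]
        refine ⟨fun p q => ?_, hH⟩
        show (0:ℝ) ≤ hadProd A p q
        exact Finset.prod_nonneg fun k _ => hA k p q) x i
      rw [List.map_replicate, List.map_replicate, List.map_replicate,
        List.prod_replicate] at h
      exact h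
    · intro p q
      have hhad : Aux.eOf (hadProd A) = fun p q => ∏ t, B t p q := by
        funext p q
        exact ENNReal.ofReal_prod_of_nonneg (fun k _ => hA k p q)
      rw [hhad]
      refine (Aux.key_holder hm B m p q).trans (le_of_eq ?_)
      show ∏ t, Aux.Qf B t m p q ^ (1/(m:ℝ))
        = ENNReal.ofReal (∏ t, cycMatProd Am t p q ^ (1/(m:ℝ)))
      rw [ENNReal.ofReal_prod_of_nonneg
        (fun t _ => Real.rpow_nonneg (hPm_nonneg t p q) _)]
      refine Finset.prod_congr rfl fun t _ => ?_
      rw [← hPm_eOf t p q]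
      exact ENNReal.ofReal_rpow_of_nonneg (hPm_nonneg t p q) hmR
  -- Inequality II
  have hIneq2 : numRadius Qop ≤ (∏ i, numRadius (cycOpProd S i)) ^ (1/(m:ℝ)) := by
    have hw_nonneg : ∀ i : Fin m, 0 ≤ numRadius (cycOpProd S i) := fun i =>
      Aux.numRadius_nonneg _
    have hprod_nonneg : (0:ℝ) ≤ ∏ i, numRadius (cycOpProd S i) :=
      Finset.prod_nonneg fun i _ => hw_nonneg i
    refine Aux.numRadius_le (Real.rpow_nonneg hprod_nonneg _) fun f hf => ?_
    have h1 : ENNReal.ofReal |⟪Qop f, f⟫_ℝ| ≤ Aux.quadForm (Aux.eOf Qmat) (Aux.eAbs f) :=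
      Aux.ofReal_abs_inner_le (fun x i => Aux.abs_op_apply_le hQmat_nonneg hQ x i) f
    have h2 : Aux.eOf Qmat = fun p q => ∏ t, Aux.eOf (cycMatProd Am t) p q ^ (1/(m:ℝ)) := by
      funext p q
      show ENNReal.ofReal (∏ t, cycMatProd Am t p q ^ (1/(m:ℝ))) = _
      rw [ENNReal.ofReal_prod_of_nonneg
        (fun t _ => Real.rpow_nonneg (hPm_nonneg t p q) _)]
      exact Finset.prod_congr rfl fun t _ =>
        (ENNReal.ofReal_rpow_of_nonneg (hPm_nonneg t p q) hmR).symm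
    have h3 : Aux.quadForm (Aux.eOf Qmat) (Aux.eAbs f)
        ≤ ∏ t, Aux.quadForm (Aux.eOf (cycMatProd Am t)) (Aux.eAbs f) ^ (1/(m:ℝ)) := by
      rw [h2]
      exact Aux.quadForm_prod_rpow_le hm _ _
    have h4 : ∀ t : Fin m, Aux.quadForm (Aux.eOf (cycMatProd Am t)) (Aux.eAbs f)
        ≤ ENNReal.ofReal (numRadius (cycOpProd S t)) := by
      intro t
      rw [Aux.quadForm_eOf (hPm_nonneg t) (hPm_rep t) f]
      refine ENNReal.ofReal_le_ofReal ?_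
      have habs1 : ‖Aux.absLp f‖ = 1 := by rw [Aux.norm_absLp]; exact hf
      exact (le_abs_self _).trans (Aux.abs_inner_le_numRadius habs1)
    have h5 : ENNReal.ofReal |⟪Qop f, f⟫_ℝ|
        ≤ ENNReal.ofReal ((∏ i, numRadius (cycOpProd S i)) ^ (1/(m:ℝ))) := by
      refine (h1.trans h3).trans ?_
      calc ∏ t, Aux.quadForm (Aux.eOf (cycMatProd Am t)) (Aux.eAbs f) ^ (1/(m:ℝ))
          ≤ ∏ t, ENNReal.ofReal (numRadius (cycOpProd S t)) ^ (1/(m:ℝ)) :=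
            Finset.prod_le_prod' fun t _ => ENNReal.rpow_le_rpow (h4 t) hmR
        _ = ENNReal.ofReal ((∏ i, numRadius (cycOpProd S i)) ^ (1/(m:ℝ))) := by
            rw [← Real.finset_prod_rpow Finset.univ _ (fun i _ => hw_nonneg i) _,
              ENNReal.ofReal_prod_of_nonneg
                (fun i _ => Real.rpow_nonneg (hw_nonneg i) _)]
            exact Finset.prod_congr rfl fun t _ =>
              ENNReal.ofReal_rpow_of_nonneg (hw_nonneg t) hmR
    exact (ENNReal.ofReal_le_ofReal_iff (Real.rpow_nonneg hprod_nonneg _)).mp h5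
  -- Inequality III
  have hIneq3each : ∀ t : Fin m, numRadius (cycOpProd S t) ≤ numRadius (V t) := by
    intro t
    refine Aux.numRadius_le_numRadius (M := Aux.eOf (cycMatProd Am t))
      (fun p q => ?_) (hV t) ?_ ?_
    · show (0:ℝ) ≤ cycMatProd A t p q ^ (m:ℝ)
      have := hcycA_nonneg t p q
      positivity
    · intro f hf
      exact Aux.ofReal_abs_inner_le
        (fun x i => Aux.abs_op_apply_le (hPm_nonneg t) (hPm_rep t) x i) f
    · intro p q
      rw [(hcyc t).2 p q]
      have hlist : (List.ofFn fun k : Fin m => Aux.eOf (Am (t + k)))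
          = (List.ofFn fun k : Fin m => Aux.eOf (A (t + k))).map
              (fun M => Aux.powHad M m) := by
        rw [List.map_ofFn]
        exact congrArg _ (funext fun k => heOfAm (t + k))
      rw [hlist]
      refine (Aux.eListProd_powHad_le m hm _ p q).trans (le_of_eq ?_)
      rw [← (hTP t).2 p q]
      show Aux.eOf (cycMatProd A t) p q ^ m
        = ENNReal.ofReal (cycMatProd A t p q ^ (m:ℝ))
      rw [Real.rpow_natCast, ENNReal.ofReal_pow (hcycA_nonneg t p q)]
      rfl
  have hIneq3 : (∏ i, numRadius (cycOpProd S i)) ^ (1/(m:ℝ))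
      ≤ (∏ i, numRadius (V i)) ^ (1/(m:ℝ)) := by
    refine Real.rpow_le_rpow (Finset.prod_nonneg fun i _ => Aux.numRadius_nonneg _) ?_ hmR
    exact Finset.prod_le_prod (fun i _ => Aux.numRadius_nonneg _) (fun i _ => hIneq3each i)
  exact ⟨Hop, Qop, S, V, hH, hQ, hS, hV, hIneq1, hIneq2, hIneq3⟩
end
end
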